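/- arXiv:1207.6127 — 5 statements merged into one kernel-verified Lean document; each statement's English description precedes it below -/
import Mathlib

section
/- For every integer n ≥ 3, the zero forcing number of the line graph of the wheel graph W_{1,n} equals n + 1: Z(L(W_{1,n})) = n + 1. -/
open SimpleGraph

variable {V : Type*}

/-- `W` is a resolving set of `G`: every pair of distinct vertices is resolved
by some vertex of `W` via graph distance. -/
def IsResolvingSet (G : SimpleGraph V) (W : Set V) : Prop :=
  ∀ u v : V, u ≠ v → ∃ w ∈ W, G.dist u w ≠ G.dist v w

/-- The metric dimension of `G`: minimum cardinality of a resolving set. -/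
noncomputable def metricDim (G : SimpleGraph V) : ℕ :=
  sInf {k | ∃ W : Set V, W.ncard = k ∧ IsResolvingSet G W}

/-- One global application of the zero-forcing color-change rule:
a black vertex `u` forces its unique white neighbor to become black. -/
def zfStep (G : SimpleGraph V) (S : Set V) : Set V :=
  S ∪ {v | ∃ u ∈ S, G.Adj u v ∧ ∀ w, G.Adj u w → w ∉ S → w = v}

/-- `S` is a zero forcing set of `G` if iterating the color-change rule
starting from `S` eventually turns all vertices black. -/
def IsZeroForcingSet (G : SimpleGraph V) (S : Set V) : Prop :=
  ∃ m : ℕ, (zfStep G)^[m] S = Set.univ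

/-- The zero forcing number of `G`: minimum cardinality of a zero forcing set. -/
noncomputable def zeroForcingNum (G : SimpleGraph V) : ℕ :=
  sInf {k | ∃ S : Set V, S.ncard = k ∧ IsZeroForcingSet G S}

/-- The wheel graph `W_{1,n} = C_n + K_1`: hub `none` joined to the cycle `C_n`
on vertices `some i`, `i : Fin n`. -/
def wheelGraph (n : ℕ) : SimpleGraph (Option (Fin n)) :=
  SimpleGraph.fromRel (fun u v =>
    match u, v with
    | none, some _ => True
    | some i, some j => ((i : ℕ) : ZMod n) + 1 = ((j : ℕ) : ZMod n)
    | _, _ => False)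

/-- The bouquet of `n` circles of lengths `k 0 + 1, …, k (n-1) + 1`: the cut
vertex is `none`; the `i`-th circle consists of `none` together with the vertices
`some ⟨i, j⟩`, `j : Fin (k i)`, in cyclic order. -/
def bouquet (n : ℕ) (k : Fin n → ℕ) : SimpleGraph (Option (Σ i : Fin n, Fin (k i))) :=
  SimpleGraph.fromRel (fun u v =>
    match u, v with
    | none, some a => (a.2 : ℕ) = 0 ∨ (a.2 : ℕ) = k a.1 - 1
    | some a, some b => a.1 = b.1 ∧ ((b.2 : ℕ) = (a.2 : ℕ) + 1)
    | _, _ => False)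

/-- The path cover number of `G`: the minimum number of vertex-disjoint induced
paths covering all the vertices of `G`. -/
noncomputable def pathCoverNum (G : SimpleGraph V) : ℕ :=
  sInf {m | ∃ f : V → Fin m, ∀ i : Fin m,
    ∃ k, 1 ≤ k ∧ Nonempty ((G.induce (f ⁻¹' {i})) ≃g SimpleGraph.pathGraph k)}

/-- `G` contains a Hamiltonian path. -/
def HasHamiltonianPath [DecidableEq V] (G : SimpleGraph V) : Prop :=
  ∃ (u v : V) (p : G.Walk u v), p.IsHamiltonian

namespace ZF

variable {W : Type*} {G : SimpleGraph V} {H : SimpleGraph W}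

lemma subset_zfStep (G : SimpleGraph V) (S : Set V) : S ⊆ zfStep G S :=
  Set.subset_union_left

lemma zfStep_mono (G : SimpleGraph V) {S T : Set V} (h : S ⊆ T) :
    zfStep G S ⊆ zfStep G T := by
  rintro v (hv | ⟨u, hu, hadj, huniq⟩)
  · exact Or.inl (h hv)
  · by_cases hvT : v ∈ T
    · exact Or.inl hvT
    · exact Or.inr ⟨u, h hu, hadj, fun w hw hwT => huniq w hw fun hwS => hwT (h hwS)⟩

lemma iterate_mono (G : SimpleGraph V) {S T : Set V} (h : S ⊆ T) (m : ℕ) :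
    (zfStep G)^[m] S ⊆ (zfStep G)^[m] T := by
  induction m with
  | zero => exact h
  | succ k ih =>
      rw [Function.iterate_succ_apply', Function.iterate_succ_apply']
      exact zfStep_mono G ih

lemma isZeroForcingSet_mono {S T : Set V} (h : S ⊆ T) (hS : IsZeroForcingSet G S) :
    IsZeroForcingSet G T := by
  obtain ⟨m, hm⟩ := hS
  exact ⟨m, Set.eq_univ_of_univ_subset (hm ▸ iterate_mono G h m)⟩

def IsFort (G : SimpleGraph V) (F : Set V) : Prop :=
  ∀ u, u ∉ F → ∀ v ∈ F, G.Adj u v → ∃ v' ∈ F, v' ≠ v ∧ G.Adj u v'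

lemma zfStep_inter_fort {F S : Set V} (hF : IsFort G F) (h : S ∩ F = ∅) :
    zfStep G S ∩ F = ∅ := by
  rw [Set.eq_empty_iff_forall_notMem] at h ⊢
  rintro v ⟨(hv | ⟨u, hu, hadj, huniq⟩), hvF⟩
  · exact h v ⟨hv, hvF⟩
  · have huF : u ∉ F := fun huF => h u ⟨hu, huF⟩
    obtain ⟨v', hv'F, hv'ne, hadj'⟩ := hF u huF v hvF hadj
    have : v' ∉ S := fun hv'S => h v' ⟨hv'S, hv'F⟩
    exact hv'ne (huniq v' hadj' this)

lemma not_forcing_of_fort {F S : Set V} (hF : IsFort G F) (hne : F.Nonempty)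
    (h : S ∩ F = ∅) : ¬ IsZeroForcingSet G S := by
  rintro ⟨m, hm⟩
  have key : ∀ k, (zfStep G)^[k] S ∩ F = ∅ := by
    intro k
    induction k with
    | zero => exact h
    | succ k ih => rw [Function.iterate_succ_apply']; exact zfStep_inter_fort hF ih
  obtain ⟨x, hx⟩ := hne
  have := key m
  rw [hm] at this
  rw [Set.eq_empty_iff_forall_notMem] at this
  exact this x ⟨trivial, hx⟩

lemma image_zfStep (e : G ≃g H) (S : Set V) :
    ⇑e '' zfStep G S ⊆ zfStep H (⇑e '' S) := by
  rintro w ⟨v, (hv | ⟨u, hu, hadj, huniq⟩), rfl⟩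
  · exact Or.inl ⟨v, hv, rfl⟩
  · refine Or.inr ⟨e u, ⟨u, hu, rfl⟩, e.map_adj_iff.2 hadj, ?_⟩
    intro w' hw' hw'S
    have h1 : G.Adj u (e.symm w') := by
      have := e.map_adj_iff (v := u) (w := e.symm w')
      rw [e.apply_symm_apply] at this
      exact this.1 hw'
    have h2 : e.symm w' ∉ S := fun hc => hw'S ⟨e.symm w', hc, e.apply_symm_apply w'⟩
    have := huniq _ h1 h2
    calc w' = e (e.symm w') := (e.apply_symm_apply w').symm
    _ = e v := by rw [this]

lemma isZeroForcingSet_image (e : G ≃g H) {S : Set V} (hS : IsZeroForcingSet G S) :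
    IsZeroForcingSet H (⇑e '' S) := by
  obtain ⟨m, hm⟩ := hS
  have key : ∀ k, ⇑e '' ((zfStep G)^[k] S) ⊆ (zfStep H)^[k] (⇑e '' S) := by
    intro k
    induction k with
    | zero => exact subset_rfl
    | succ k ih =>
        rw [Function.iterate_succ_apply', Function.iterate_succ_apply']
        exact (image_zfStep e _).trans (zfStep_mono H ih)
  refine ⟨m, Set.eq_univ_of_univ_subset ?_⟩
  have := key m
  rw [hm] at this
  rwa [Set.image_univ, Set.range_eq_univ.2 e.surjective] at this

lemma zeroForcingNum_congr (e : G ≃g H) : zeroForcingNum G = zeroForcingNum H := by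
  unfold zeroForcingNum
  congr 1
  ext k
  constructor
  · rintro ⟨S, hc, hf⟩
    exact ⟨⇑e '' S, by rw [Set.ncard_image_of_injective S e.injective, hc],
      isZeroForcingSet_image e hf⟩
  · rintro ⟨S, hc, hf⟩
    exact ⟨⇑e.symm '' S, by rw [Set.ncard_image_of_injective S e.symm.injective, hc],
      isZeroForcingSet_image e.symm hf⟩



variable {n : ℕ}

def cadj (n : ℕ) : (ZMod n ⊕ ZMod n) → (ZMod n ⊕ ZMod n) → Prop
  | Sum.inl a, Sum.inl b => a ≠ b
  | Sum.inl a, Sum.inr b => a = b ∨ a = b + 1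
  | Sum.inr a, Sum.inl b => b = a ∨ b = a + 1
  | Sum.inr a, Sum.inr b => a ≠ b ∧ (b = a + 1 ∨ a = b + 1)

def LW (n : ℕ) : SimpleGraph (ZMod n ⊕ ZMod n) where
  Adj := cadj n
  symm := ⟨by rintro (a|a) (b|b) h <;> simp_all [cadj] <;> tauto⟩
  loopless := ⟨by rintro (a|a) h <;> simp_all [cadj]⟩

lemma one_ne_zero' (hn : 3 ≤ n) : (1 : ZMod n) ≠ 0 := by
  intro h
  have : (n : ℕ) ∣ 1 := by
    rwa [← Nat.cast_one, ZMod.natCast_eq_zero_iff] at h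
  have := Nat.le_of_dvd one_pos this
  omega

lemma two_ne_zero' (hn : 3 ≤ n) : (2 : ZMod n) ≠ 0 := by
  intro h
  have : (n : ℕ) ∣ 2 := by
    rwa [← Nat.cast_two, ZMod.natCast_eq_zero_iff] at h
  have := Nat.le_of_dvd two_pos this
  omega

lemma add_one_ne (hn : 3 ≤ n) (a : ZMod n) : a + 1 ≠ a := by
  intro h
  exact one_ne_zero' hn (by linear_combination h - a)

lemma sub_one_ne (hn : 3 ≤ n) (a : ZMod n) : a - 1 ≠ a := by
  intro h
  exact one_ne_zero' hn (by linear_combination a - h)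

lemma sub_one_ne_add_one (hn : 3 ≤ n) (a : ZMod n) : a - 1 ≠ a + 1 := by
  intro h
  exact two_ne_zero' hn (by linear_combination a + 1 - h)

def zf [NeZero n] (z : ZMod n) : Fin n := ⟨z.val, ZMod.val_lt z⟩

lemma zf_cast [NeZero n] (z : ZMod n) : ((zf z : ℕ) : ZMod n) = z :=
  ZMod.natCast_rightInverse z

lemma zf_injective [NeZero n] : Function.Injective (zf (n := n)) := by
  intro a b h
  have := congrArg (fun i : Fin n => ((i : ℕ) : ZMod n)) h
  simpa [zf_cast] using this

lemma zf_natCast [NeZero n] (i : Fin n) : zf (((i : ℕ) : ZMod n)) = i :=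
  Fin.ext (ZMod.val_cast_of_lt i.isLt)

lemma wheel_adj_hub (i : Fin n) : (wheelGraph n).Adj none (some i) := by
  simp [wheelGraph, fromRel_adj]

lemma wheel_adj_some {i j : Fin n} : (wheelGraph n).Adj (some i) (some j) ↔
    i ≠ j ∧ (((i : ℕ) : ZMod n) + 1 = ((j : ℕ) : ZMod n) ∨
      ((j : ℕ) : ZMod n) + 1 = ((i : ℕ) : ZMod n)) := by
  simp [wheelGraph, fromRel_adj]

def spokeE [NeZero n] (z : ZMod n) : (wheelGraph n).edgeSet :=
  ⟨s(none, some (zf z)), (mem_edgeSet _).2 (wheel_adj_hub _)⟩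

def rimE [NeZero n] (hn : 3 ≤ n) (z : ZMod n) : (wheelGraph n).edgeSet :=
  ⟨s(some (zf z), some (zf (z + 1))), (mem_edgeSet _).2 (by
    rw [wheel_adj_some]
    refine ⟨fun h => add_one_ne hn z ?_, Or.inl (by rw [zf_cast, zf_cast])⟩
    · have := congrArg (fun i : Fin n => ((i : ℕ) : ZMod n)) h
      simpa [zf_cast] using this.symm)⟩

def gsum [NeZero n] (hn : 3 ≤ n) : ZMod n ⊕ ZMod n → (wheelGraph n).edgeSet :=
  Sum.elim spokeE (rimE hn)

lemma gsum_injective [NeZero n] (hn : 3 ≤ n) : Function.Injective (gsum (n := n) hn) := by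
  rintro (a|a) (b|b) h <;>
    simp only [gsum, Sum.elim_inl, Sum.elim_inr, spokeE, rimE, Subtype.mk.injEq,
      Sym2.eq_iff] at h
  · rcases h with ⟨-, h⟩ | ⟨h, -⟩
    · exact congrArg Sum.inl (zf_injective (Option.some_injective _ h))
    · exact absurd h (by simp)
  · rcases h with ⟨h, -⟩ | ⟨h, -⟩ <;> exact absurd h (by simp)
  · rcases h with ⟨h, -⟩ | ⟨-, h⟩ <;> exact absurd h (by simp)
  · rcases h with ⟨h1, h2⟩ | ⟨h1, h2⟩
    · exact congrArg Sum.inr (zf_injective (Option.some_injective _ h1))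
    · exfalso
      have e1 : a = b + 1 := zf_injective (Option.some_injective _ h1)
      have e2 : a + 1 = b := zf_injective (Option.some_injective _ h2)
      exact two_ne_zero' hn (by linear_combination e2 - e1)

lemma gsum_surjective [NeZero n] (hn : 3 ≤ n) : Function.Surjective (gsum (n := n) hn) := by
  rintro ⟨e, he⟩
  induction e using Sym2.ind with
  | _ u v =>
    rw [mem_edgeSet] at he
    match u, v with
    | none, none => exact absurd he (SimpleGraph.irrefl _)
    | none, some i =>
        exact ⟨Sum.inl ((i : ℕ) : ZMod n), by
          simp only [gsum, Sum.elim_inl, spokeE, Subtype.mk.injEq, zf_natCast]⟩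
    | some i, none =>
        exact ⟨Sum.inl ((i : ℕ) : ZMod n), by
          simp only [gsum, Sum.elim_inl, spokeE, Subtype.mk.injEq, zf_natCast]
          first | rfl | exact Sym2.eq_swap⟩
    | some i, some j =>
        rw [wheel_adj_some] at he
        rcases he.2 with h | h
        · refine ⟨Sum.inr ((i : ℕ) : ZMod n), ?_⟩
          simp only [gsum, Sum.elim_inr, rimE, Subtype.mk.injEq, zf_natCast, h]
        · refine ⟨Sum.inr ((j : ℕ) : ZMod n), ?_⟩
          simp only [gsum, Sum.elim_inr, rimE, Subtype.mk.injEq, zf_natCast, h]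
          first | rfl | exact Sym2.eq_swap

lemma lg_ne [NeZero n] (hn : 3 ≤ n) {x y : ZMod n ⊕ ZMod n} (h : x ≠ y) :
    gsum hn x ≠ gsum hn y := fun hc => h (gsum_injective hn hc)

lemma lg_adj_ll [NeZero n] (hn : 3 ≤ n) (a b : ZMod n) :
    (wheelGraph n).lineGraph.Adj (gsum hn (Sum.inl a)) (gsum hn (Sum.inl b)) ↔ a ≠ b := by
  rw [lineGraph_adj_iff_exists]
  constructor
  · rintro ⟨hne, -⟩
    exact fun h => hne (by rw [h])
  · intro hab
    refine ⟨lg_ne hn (by simpa using hab), none, ?_, ?_⟩ <;>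
      simp [gsum, spokeE]
lemma lg_adj_lr [NeZero n] (hn : 3 ≤ n) (a b : ZMod n) :
    (wheelGraph n).lineGraph.Adj (gsum hn (Sum.inl a)) (gsum hn (Sum.inr b)) ↔
      a = b ∨ a = b + 1 := by
  rw [lineGraph_adj_iff_exists]
  constructor
  · rintro ⟨-, v, h1, h2⟩
    simp only [gsum, Sum.elim_inl, Sum.elim_inr, spokeE, rimE, Sym2.mem_iff] at h1 h2
    rcases h1 with rfl | rfl
    · rcases h2 with h | h <;> exact absurd h (by simp)
    · rcases h2 with h | h
      · exact Or.inl (zf_injective (Option.some_injective _ h))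
      · exact Or.inr (zf_injective (Option.some_injective _ h))
  · intro hab
    refine ⟨lg_ne hn (by simp), ?_⟩
    rcases hab with rfl | rfl
    · exact ⟨some (zf a), by simp [gsum, spokeE], by simp [gsum, rimE]⟩
    · exact ⟨some (zf (b + 1)), by simp [gsum, spokeE], by simp [gsum, rimE]⟩
lemma lg_adj_rr [NeZero n] (hn : 3 ≤ n) (a b : ZMod n) :
    (wheelGraph n).lineGraph.Adj (gsum hn (Sum.inr a)) (gsum hn (Sum.inr b)) ↔
      a ≠ b ∧ (b = a + 1 ∨ a = b + 1) := by
  rw [lineGraph_adj_iff_exists]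
  constructor
  · rintro ⟨hne, v, h1, h2⟩
    have hab : a ≠ b := fun h => hne (by rw [h])
    refine ⟨hab, ?_⟩
    simp only [gsum, Sum.elim_inr, rimE, Sym2.mem_iff] at h1 h2
    rcases h1 with rfl | rfl
    · rcases h2 with h | h
      · exact absurd (zf_injective (Option.some_injective _ h)) hab
      · exact Or.inr (zf_injective (Option.some_injective _ h))
    · rcases h2 with h | h
      · exact Or.inl ((zf_injective (Option.some_injective _ h)).symm)
      · exact absurd (by linear_combination (zf_injective (Option.some_injective _ h) :
          a + 1 = b + 1)) hab
  · rintro ⟨hab, hor⟩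
    refine ⟨lg_ne hn (by simpa using hab), ?_⟩
    rcases hor with rfl | rfl
    · exact ⟨some (zf (a + 1)), by simp [gsum, rimE], by simp [gsum, rimE]⟩
    · exact ⟨some (zf (b + 1)), by simp [gsum, rimE], by simp [gsum, rimE]⟩

noncomputable def lwIso [NeZero n] (hn : 3 ≤ n) : LW n ≃g (wheelGraph n).lineGraph where
  toEquiv := Equiv.ofBijective (gsum hn) ⟨gsum_injective hn, gsum_surjective hn⟩
  map_rel_iff' := by
    rintro (a|a) (b|b)
    · exact lg_adj_ll hn a b
    · exact lg_adj_lr hn a b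
    · show (wheelGraph n).lineGraph.Adj _ _ ↔ _
      rw [SimpleGraph.adj_comm]
      exact lg_adj_lr hn b a
    · exact lg_adj_rr hn a b

lemma lw_adj_ll {a b : ZMod n} : (LW n).Adj (Sum.inl a) (Sum.inl b) ↔ a ≠ b := Iff.rfl
lemma lw_adj_lr {a b : ZMod n} : (LW n).Adj (Sum.inl a) (Sum.inr b) ↔ a = b ∨ a = b + 1 := Iff.rfl
lemma lw_adj_rl {a b : ZMod n} : (LW n).Adj (Sum.inr a) (Sum.inl b) ↔ b = a ∨ b = a + 1 := Iff.rfl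
lemma lw_adj_rr {a b : ZMod n} :
    (LW n).Adj (Sum.inr a) (Sum.inr b) ↔ a ≠ b ∧ (b = a + 1 ∨ a = b + 1) := Iff.rfl

def S0 (n : ℕ) : Set (ZMod n ⊕ ZMod n) := Set.range Sum.inl ∪ {Sum.inr 0}

lemma S0_card [NeZero n] : (S0 n).ncard = n + 1 := by
  rw [S0, Set.union_singleton, Set.ncard_insert_of_notMem (by simp) (Set.toFinite _),
    ← Set.image_univ, Set.ncard_image_of_injective _ Sum.inl_injective, Set.ncard_univ,
    Nat.card_zmod]

def Useq (n : ℕ) (k : ℕ) : Set (ZMod n ⊕ ZMod n) :=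
  S0 n ∪ {x | ∃ j : ℕ, j ≤ k ∧ x = Sum.inr ((j : ℕ) : ZMod n)}

lemma U_subset_iterate (k : ℕ) : Useq n k ⊆ (zfStep (LW n))^[k] (S0 n) := by
  induction k with
  | zero =>
      rintro x (hx | ⟨j, hj, rfl⟩)
      · exact hx
      · interval_cases j
        exact Or.inr (by simp)
  | succ k ih =>
      rw [Function.iterate_succ_apply']
      refine fun x hx => zfStep_mono (LW n) ih ?_
      rcases hx with hx | ⟨j, hj, rfl⟩
      · exact subset_zfStep _ _ (Or.inl hx)
      · by_cases hj' : j ≤ k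
        · exact subset_zfStep _ _ (Or.inr ⟨j, hj', rfl⟩)
        · have hjk : j = k + 1 := by omega
          subst hjk
          refine Or.inr ⟨Sum.inl ((k + 1 : ℕ) : ZMod n), Or.inl (Or.inl ⟨_, rfl⟩),
            Or.inl rfl, ?_⟩
          rintro (b | b) hw hwU
          · exact absurd (Or.inl (Or.inl ⟨b, rfl⟩)) hwU
          · rcases (lw_adj_lr).1 hw with h | h
            · rw [h]
            · exfalso
              apply hwU
              refine Or.inr ⟨k, le_rfl, ?_⟩
              have : ((k : ℕ) : ZMod n) = b := by
                have hcast : ((k + 1 : ℕ) : ZMod n) = ((k : ℕ) : ZMod n) + 1 := by push_cast; ring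
                rw [hcast] at h
                exact add_left_injective 1 (show (fun x => x + 1) ((k:ℕ):ZMod n) = (fun x => x + 1) b from h)
              rw [this]

lemma S0_forcing [NeZero n] : IsZeroForcingSet (LW n) (S0 n) := by
  refine ⟨n - 1, Set.eq_univ_of_univ_subset ?_⟩
  intro x _
  apply U_subset_iterate (n - 1)
  rcases x with a | z
  · exact Or.inl (Or.inl ⟨a, rfl⟩)
  · refine Or.inr ⟨z.val, ?_, ?_⟩
    · have := ZMod.val_lt z
      omega
    · rw [ZMod.natCast_rightInverse z]

lemma natCast_ne_zero' (hn : 3 ≤ n) {m : ℕ} (h1 : 0 < m) (h2 : m < n) :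
    ((m : ℕ) : ZMod n) ≠ 0 := by
  haveI : NeZero n := ⟨by omega⟩
  intro h
  have := ZMod.val_cast_of_lt h2
  rw [h, ZMod.val_zero] at this
  omega

lemma pair_trick {X : Type*} {G : SimpleGraph X} {F : Set X} {u x y : X}
    (hx : x ∈ F) (hy : y ∈ F) (hxy : x ≠ y) (ax : G.Adj u x) (ay : G.Adj u y) (v : X) :
    ∃ v' ∈ F, v' ≠ v ∧ G.Adj u v' := by
  by_cases h : x = v
  · exact ⟨y, hy, h ▸ hxy.symm, ay⟩
  · exact ⟨x, hx, h, ax⟩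

lemma fort_allrims (hn : 3 ≤ n) : IsFort (LW n) (Set.range Sum.inr) := by
  rintro (k | k) hu v hv hadj
  · exact pair_trick (Set.mem_range_self k) (Set.mem_range_self (k - 1))
      (by simp only [ne_eq, Sum.inr.injEq]; exact fun h => sub_one_ne hn k h.symm)
      (lw_adj_lr.2 (Or.inl rfl))
      (lw_adj_lr.2 (Or.inr (sub_add_cancel k 1).symm)) v
  · exact absurd (Set.mem_range_self k) hu

lemma fort_single (hn : 3 ≤ n) (a m : ZMod n) :
    IsFort (LW n) ({Sum.inl a} ∪ Sum.inr '' {b | b ≠ m}) := by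
  rintro (k | k) hu v hv hadj
  · have hka : k ≠ a := fun h => hu (Or.inl (by rw [h]; rfl))
    by_cases hkm : k = m
    · refine pair_trick (F := {Sum.inl a} ∪ Sum.inr '' {b | b ≠ m}) (Or.inl rfl)
        (Or.inr ⟨k - 1, ?_, rfl⟩) (by simp) (lw_adj_ll.2 hka)
        (lw_adj_lr.2 (Or.inr (sub_add_cancel k 1).symm)) v
      rw [hkm]
      exact sub_one_ne hn m
    · exact pair_trick (F := {Sum.inl a} ∪ Sum.inr '' {b | b ≠ m}) (Or.inl rfl)
        (Or.inr ⟨k, hkm, rfl⟩) (by simp) (lw_adj_ll.2 hka) (lw_adj_lr.2 (Or.inl rfl)) v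
  · have hkm : k = m := by
      by_contra h
      exact hu (Or.inr ⟨k, h, rfl⟩)
    subst hkm
    refine pair_trick (F := {Sum.inl a} ∪ Sum.inr '' {b | b ≠ k})
      (Or.inr ⟨k - 1, sub_one_ne hn k, rfl⟩) (Or.inr ⟨k + 1, add_one_ne hn k, rfl⟩)
      (by simpa using sub_one_ne_add_one hn k) ?_ ?_ v
    · exact lw_adj_rr.2 ⟨(sub_one_ne hn k).symm, Or.inr (sub_add_cancel k 1).symm⟩
    · exact lw_adj_rr.2 ⟨(add_one_ne hn k).symm, Or.inl rfl⟩

lemma fort_arc (hn : 3 ≤ n) (a : ZMod n) (d : ℕ) (hd : d + 2 ≤ n) :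
    IsFort (LW n) ({Sum.inl a, Sum.inl (a + (d : ZMod n) + 1)} ∪
      Sum.inr '' {x | ∃ s : ℕ, s ≤ d ∧ x = a + (s : ZMod n)}) := by
  set c : ZMod n := a + (d : ZMod n) + 1 with hc
  set F : Set (ZMod n ⊕ ZMod n) :=
    {Sum.inl a, Sum.inl c} ∪ Sum.inr '' {x | ∃ s : ℕ, s ≤ d ∧ x = a + (s : ZMod n)} with hF
  have hac : a ≠ c := by
    intro h
    apply natCast_ne_zero' hn (show 0 < d + 1 by omega) (show d + 1 < n by omega)
    push_cast
    linear_combination a - h - (d : ZMod n)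
  rintro (k | k) hu v hv hadj
  · have hka : k ≠ a := fun h => hu (Or.inl (Or.inl (by rw [h])))
    have hkc : k ≠ c := fun h => hu (Or.inl (Or.inr (show Sum.inl k = Sum.inl c by rw [h])))
    exact pair_trick (F := F) (Or.inl (Or.inl rfl)) (Or.inl (Or.inr rfl))
      (by simpa using hac) (lw_adj_ll.2 hka) (lw_adj_ll.2 hkc) v
  · have hk : ¬∃ s : ℕ, s ≤ d ∧ k = a + (s : ZMod n) := by
      intro ⟨s, hs, hks⟩
      exact hu (Or.inr ⟨k, ⟨s, hs, hks⟩, rfl⟩)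
    have hcase : k = a - 1 ∨ k = c := by
      rcases hv with (rfl | rfl) | ⟨x, ⟨s, hs, rfl⟩, rfl⟩
      · rcases lw_adj_rl.1 hadj with h | h
        · exact absurd ⟨0, by omega, by rw [← h]; push_cast; ring⟩ hk
        · exact Or.inl (by linear_combination -h)
      · rcases lw_adj_rl.1 hadj with h | h
        · exact Or.inr h.symm
        · exact absurd ⟨d, le_rfl, by rw [hc] at h; linear_combination -h⟩ hk
      · rcases (lw_adj_rr.1 hadj).2 with h | h
        · rcases Nat.eq_zero_or_pos s with rfl | hs1
          · refine Or.inl ?_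
            push_cast at h
            linear_combination -h
          · refine absurd ⟨s - 1, by omega, ?_⟩ hk
            have : ((s : ℕ) : ZMod n) = ((s - 1 : ℕ) : ZMod n) + 1 := by
              rw [← Nat.sub_add_cancel hs1]
              push_cast
              ring
            rw [this] at h
            linear_combination -h
        · rcases Nat.eq_or_lt_of_le hs with rfl | hs2
          · exact Or.inr (by rw [hc]; linear_combination h)
          · refine absurd ⟨s + 1, by omega, ?_⟩ hk
            push_cast
            linear_combination h
    rcases hcase with rfl | rfl
    · refine pair_trick (F := F) (Or.inl (Or.inl rfl))
        (Or.inr ⟨a, ⟨0, by omega, by push_cast; ring⟩, rfl⟩) (by simp) ?_ ?_ v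
      · exact lw_adj_rl.2 (Or.inr (by ring))
      · exact lw_adj_rr.2 ⟨sub_one_ne hn a, Or.inl (by ring)⟩
    · refine pair_trick (F := F) (Or.inl (Or.inr rfl))
        (Or.inr ⟨a + (d : ZMod n), ⟨d, le_rfl, rfl⟩, rfl⟩) (by simp) ?_ ?_ v
      · exact lw_adj_rl.2 (Or.inl rfl)
      · refine lw_adj_rr.2 ⟨?_, Or.inr rfl⟩
        rw [hc]
        exact add_one_ne hn _

lemma fort_main (hn : 3 ≤ n) (A B : Set (ZMod n))
    (h2 : ∃ a1 ∈ A, ∃ a2 ∈ A, a1 ≠ a2)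
    (hBne : ∃ m, m ∉ B)
    (hcard : Bᶜ.ncard ≤ A.ncard)
    (hno : ∀ a ∈ A, ∀ d : ℕ, d + 2 ≤ n →
      (∀ s : ℕ, s ≤ d → a + ((s : ℕ) : ZMod n) ∈ B) → a + ((d : ℕ) : ZMod n) + 1 ∉ A) :
    IsFort (LW n) (Sum.inl '' A ∪ Sum.inr '' B) := by
  haveI : NeZero n := ⟨by omega⟩
  classical
  obtain ⟨m, hm⟩ := hBne
  have hP : ∀ a : ZMod n, ∃ t : ℕ, a + ((t : ℕ) : ZMod n) ∉ B := by
    intro a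
    refine ⟨(m - a).val, ?_⟩
    rw [ZMod.natCast_rightInverse (m - a)]
    have h' : a + (m - a) = m := by ring
    rwa [h']
  set t : ZMod n → ℕ := fun a => Nat.find (hP a) with ht
  have ht_spec : ∀ a, a + ((t a : ℕ) : ZMod n) ∉ B := fun a => Nat.find_spec (hP a)
  have ht_min : ∀ a, ∀ s : ℕ, s < t a → a + ((s : ℕ) : ZMod n) ∈ B := by
    intro a s hs
    by_contra h
    exact Nat.find_min (hP a) hs h
  have ht_le : ∀ a, t a ≤ n - 1 := by
    intro a
    have h1 : a + (((m - a).val : ℕ) : ZMod n) ∉ B := by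
      rw [ZMod.natCast_rightInverse (m - a)]
      have h' : a + (m - a) = m := by ring
      rwa [h']
    have h2 := Nat.find_min' (hP a) h1
    have h3 := ZMod.val_lt (m - a)
    have h4 : t a = Nat.find (hP a) := rfl
    omega
  have runblack : ∀ a ∈ A, ∀ u : ℕ, 1 ≤ u → u ≤ t a → a + ((u : ℕ) : ZMod n) ∉ A := by
    intro a ha u h1 hu
    obtain ⟨u', rfl⟩ : ∃ u', u = u' + 1 := ⟨u - 1, by omega⟩
    intro hmemA
    refine hno a ha u' (by have := ht_le a; omega) (fun s hs => ht_min a s (by omega)) ?_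
    have hc : a + ((u' : ℕ) : ZMod n) + 1 = a + ((u' + 1 : ℕ) : ZMod n) := by push_cast; ring
    rw [hc]; exact hmemA
  have hinj : Set.InjOn (fun a => a + ((t a : ℕ) : ZMod n)) A := by
    have aux : ∀ x ∈ A, ∀ y ∈ A,
        x + ((t x : ℕ) : ZMod n) = y + ((t y : ℕ) : ZMod n) → t y < t x → False := by
      intro x hx y hy heq hlt
      refine runblack x hx (t x - t y) (by omega) (by omega) ?_
      have hc : ((t x - t y : ℕ) : ZMod n) = ((t x : ℕ) : ZMod n) - ((t y : ℕ) : ZMod n) :=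
        Nat.cast_sub hlt.le
      rw [hc]
      have h' : x + (((t x : ℕ) : ZMod n) - ((t y : ℕ) : ZMod n)) = y := by
        linear_combination heq
      rw [h']; exact hy
    intro x hx y hy heq
    rcases lt_trichotomy (t x) (t y) with h | h | h
    · exact (aux y hy x hx heq.symm h).elim
    · simp only at heq
      rw [h] at heq
      exact add_right_cancel heq
    · exact (aux x hx y hy heq h).elim
  have himg : (fun a => a + ((t a : ℕ) : ZMod n)) '' A ⊆ Bᶜ := by
    rintro _ ⟨a, ha, rfl⟩
    exact ht_spec a
  have hsurj : (fun a => a + ((t a : ℕ) : ZMod n)) '' A = Bᶜ :=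
    Set.eq_of_subset_of_ncard_le himg
      (by rw [Set.ncard_image_of_injOn hinj]; exact hcard) (Set.toFinite _)
  have hkey : ∀ k : ZMod n, k ∉ B → ∃ a ∈ A, a + ((t a : ℕ) : ZMod n) = k := by
    intro k hk
    have hmem : k ∈ Bᶜ := hk
    rw [← hsurj] at hmem
    obtain ⟨a, ha, heq⟩ := hmem
    exact ⟨a, ha, heq⟩
  have hright : ∀ k : ZMod n, k ∉ B → (k + 1 ∈ B ∨ k + 1 ∈ A) := by
    intro k hk
    by_cases hb : k + 1 ∈ B
    · exact Or.inl hb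
    · obtain ⟨a, ha, heq⟩ := hkey _ hb
      rcases Nat.eq_zero_or_pos (t a) with h0 | hpos
      · rw [h0] at heq
        push_cast at heq
        refine Or.inr ?_
        have h' : a = k + 1 := by linear_combination heq
        rwa [← h']
      · exfalso
        have hmem : a + ((t a - 1 : ℕ) : ZMod n) ∈ B := ht_min a _ (by omega)
        have hc : a + ((t a - 1 : ℕ) : ZMod n) = k := by
          rw [Nat.cast_sub hpos]
          push_cast
          linear_combination heq
        rw [hc] at hmem
        exact hk hmem
  rintro (k | k) hu v hv hadj
  · have hkA : k ∉ A := fun h => hu (Or.inl ⟨k, h, rfl⟩)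
    obtain ⟨a1, ha1, a2, ha2, hne⟩ := h2
    refine pair_trick (F := Sum.inl '' A ∪ Sum.inr '' B) (Or.inl ⟨a1, ha1, rfl⟩)
      (Or.inl ⟨a2, ha2, rfl⟩) (by simpa using hne)
      (lw_adj_ll.2 fun h => hkA (by rw [h]; exact ha1))
      (lw_adj_ll.2 fun h => hkA (by rw [h]; exact ha2)) v
  · have hkB : k ∉ B := fun h => hu (Or.inr ⟨k, h, rfl⟩)
    obtain ⟨a, ha, heq⟩ := hkey k hkB
    have hx : ∃ x, x ∈ (Sum.inl '' A ∪ Sum.inr '' B) ∧ (LW n).Adj (Sum.inr k) x ∧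
        (x = Sum.inl k ∨ x = Sum.inr (k - 1)) := by
      rcases Nat.eq_zero_or_pos (t a) with h0 | hpos
      · have hak : a = k := by
          rw [h0] at heq
          push_cast at heq
          linear_combination heq
        exact ⟨Sum.inl k, Or.inl ⟨k, hak ▸ ha, rfl⟩, lw_adj_rl.2 (Or.inl rfl), Or.inl rfl⟩
      · have hmem : k - 1 ∈ B := by
          have h1 : a + ((t a - 1 : ℕ) : ZMod n) ∈ B := ht_min a _ (by omega)
          have hc : a + ((t a - 1 : ℕ) : ZMod n) = k - 1 := by
            rw [Nat.cast_sub hpos]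
            push_cast
            linear_combination heq
          rwa [hc] at h1
        exact ⟨Sum.inr (k - 1), Or.inr ⟨k - 1, hmem, rfl⟩,
          lw_adj_rr.2 ⟨(sub_one_ne hn k).symm, Or.inr (sub_add_cancel k 1).symm⟩, Or.inr rfl⟩
    have hy : ∃ y, y ∈ (Sum.inl '' A ∪ Sum.inr '' B) ∧ (LW n).Adj (Sum.inr k) y ∧
        (y = Sum.inr (k + 1) ∨ y = Sum.inl (k + 1)) := by
      rcases hright k hkB with hb | ha'
      · exact ⟨Sum.inr (k + 1), Or.inr ⟨k + 1, hb, rfl⟩,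
          lw_adj_rr.2 ⟨(add_one_ne hn k).symm, Or.inl rfl⟩, Or.inl rfl⟩
      · exact ⟨Sum.inl (k + 1), Or.inl ⟨k + 1, ha', rfl⟩, lw_adj_rl.2 (Or.inr rfl), Or.inr rfl⟩
    obtain ⟨x, hxF, hxadj, hxid⟩ := hx
    obtain ⟨y, hyF, hyadj, hyid⟩ := hy
    have hxy : x ≠ y := by
      rcases hxid with rfl | rfl <;> rcases hyid with rfl | rfl
      · simp
      · intro h
        exact add_one_ne hn k (Sum.inl.inj h).symm
      · intro h
        exact sub_one_ne_add_one hn k (Sum.inr.inj h)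
      · simp
    exact pair_trick hxF hyF hxy hxadj hyadj v

lemma exists_fort (hn : 3 ≤ n) (T : Set (ZMod n ⊕ ZMod n)) (hT : T.ncard = n) :
    ∃ F : Set (ZMod n ⊕ ZMod n), F.Nonempty ∧ F ∩ T = ∅ ∧ IsFort (LW n) F := by
  haveI : NeZero n := ⟨by omega⟩
  classical
  set A : Set (ZMod n) := {a | Sum.inl a ∉ T} with hA
  set B : Set (ZMod n) := {b | Sum.inr b ∉ T} with hB
  have hcompl : Tᶜ = Sum.inl '' A ∪ Sum.inr '' B := by
    ext (x | x) <;> simp [hA, hB]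
  have h5 : B.ncard + Bᶜ.ncard = n := by
    have := Set.ncard_add_ncard_compl B (Set.toFinite _) (Set.toFinite _)
    rwa [Nat.card_zmod] at this
  have hcard : A.ncard + B.ncard = n := by
    have h3 := Set.ncard_add_ncard_compl T (Set.toFinite _) (Set.toFinite _)
    rw [hcompl, Set.ncard_union_eq (by
        rw [Set.disjoint_left]
        rintro _ ⟨a, -, rfl⟩ ⟨b, -, h⟩
        simp at h) (Set.toFinite _) (Set.toFinite _),
      Set.ncard_image_of_injective _ Sum.inl_injective,
      Set.ncard_image_of_injective _ Sum.inr_injective] at h3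
    have h4 : Nat.card (ZMod n ⊕ ZMod n) = n + n := by
      rw [Nat.card_sum, Nat.card_zmod]
    omega
  by_cases hBall : ∃ m0, m0 ∉ B
  · by_cases hA2 : ∃ a1 ∈ A, ∃ a2 ∈ A, a1 ≠ a2
    · by_cases hL3 : ∃ a ∈ A, ∃ d : ℕ, d + 2 ≤ n ∧
        (∀ s : ℕ, s ≤ d → a + ((s : ℕ) : ZMod n) ∈ B) ∧ a + ((d : ℕ) : ZMod n) + 1 ∈ A
      · obtain ⟨a, ha, d, hd, harc, ha'⟩ := hL3
        refine ⟨_, ⟨Sum.inl a, Or.inl (Or.inl rfl)⟩, ?_, fort_arc hn a d hd⟩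
        rw [Set.eq_empty_iff_forall_notMem]
        rintro x ⟨hxF, hxT⟩
        rcases hxF with (rfl | rfl) | ⟨_, ⟨s, hs, rfl⟩, rfl⟩
        · exact ha hxT
        · exact ha' hxT
        · exact harc s hs hxT
      · push_neg at hL3
        obtain ⟨a1, ha1, a2, ha2, hne⟩ := hA2
        refine ⟨Sum.inl '' A ∪ Sum.inr '' B, ⟨Sum.inl a1, Or.inl ⟨a1, ha1, rfl⟩⟩, ?_,
          fort_main hn A B ⟨a1, ha1, a2, ha2, hne⟩ hBall (by omega) hL3⟩
        rw [Set.eq_empty_iff_forall_notMem]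
        rintro x ⟨hxF, hxT⟩
        rcases hxF with ⟨a, ha, rfl⟩ | ⟨b, hb, rfl⟩
        · exact ha hxT
        · exact hb hxT
    · push_neg at hA2
      obtain ⟨m0, hm0⟩ := hBall
      have hBlt : B.ncard < n := by
        have := Set.ncard_lt_ncard
          (show B ⊂ Set.univ from Set.ssubset_univ_iff.2
            (fun h => hm0 (h ▸ Set.mem_univ m0))) (Set.toFinite _)
        rwa [Set.ncard_univ, Nat.card_zmod] at this
      obtain ⟨a, ha⟩ : ∃ a, a ∈ A := by
        rcases Set.eq_empty_or_nonempty A with h | ⟨a, ha⟩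
        · rw [h, Set.ncard_empty] at hcard
          omega
        · exact ⟨a, ha⟩
      have hA1 : A = {a} := by
        ext x
        constructor
        · intro hx
          exact hA2 x hx a ha
        · rintro rfl
          exact ha
      have hAcard : A.ncard = 1 := by rw [hA1]; exact Set.ncard_singleton a
      have hBc1 : Bᶜ.ncard = 1 := by omega
      obtain ⟨m', hm'⟩ := Set.ncard_eq_one.1 hBc1
      refine ⟨{Sum.inl a} ∪ Sum.inr '' {b | b ≠ m'}, ⟨Sum.inl a, Or.inl rfl⟩, ?_,
        fort_single hn a m'⟩
      rw [Set.eq_empty_iff_forall_notMem]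
      rintro x ⟨hxF, hxT⟩
      rcases hxF with rfl | ⟨b, hb, rfl⟩
      · exact ha hxT
      · have hbB : b ∈ B := by
          by_contra h
          have h2 : b ∈ Bᶜ := h
          rw [hm'] at h2
          exact hb h2
        exact hbB hxT
  · push_neg at hBall
    refine ⟨Set.range Sum.inr, ⟨Sum.inr 0, Set.mem_range_self 0⟩, ?_, fort_allrims hn⟩
    rw [Set.eq_empty_iff_forall_notMem]
    rintro x ⟨⟨b, rfl⟩, hxT⟩
    exact (hBall b) hxT

lemma lower_bound (hn : 3 ≤ n) {k : ℕ}
    (hk : ∃ S : Set (ZMod n ⊕ ZMod n), S.ncard = k ∧ IsZeroForcingSet (LW n) S) :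
    n + 1 ≤ k := by
  haveI : NeZero n := ⟨by omega⟩
  by_contra hcon
  push_neg at hcon
  obtain ⟨S, hSc, hSf⟩ := hk
  obtain ⟨T, hST, -, hTc⟩ := Set.exists_subsuperset_card_eq (Set.subset_univ S)
    (show S.ncard ≤ n by omega)
    (by rw [Set.ncard_univ, Nat.card_sum, Nat.card_zmod]; omega)
  obtain ⟨F, hFne, hFT, hFfort⟩ := exists_fort hn T hTc
  exact not_forcing_of_fort hFfort hFne (by rw [Set.inter_comm]; exact hFT)
    (isZeroForcingSet_mono hST hSf)

end ZF

/-- For every integer `n ≥ 3`, `Z(L(W_{1,n})) = n + 1`. -/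
theorem zeroForcingNum_lineGraph_wheelGraph (n : ℕ) (hn : 3 ≤ n) :
    zeroForcingNum (wheelGraph n).lineGraph = n + 1 := by
  haveI : NeZero n := ⟨by omega⟩
  rw [← ZF.zeroForcingNum_congr (ZF.lwIso hn)]
  unfold zeroForcingNum
  refine le_antisymm (Nat.sInf_le ⟨ZF.S0 n, ZF.S0_card, ZF.S0_forcing⟩)
    (le_csInf ⟨n + 1, ZF.S0 n, ZF.S0_card, ZF.S0_forcing⟩ ?_)
  rintro k ⟨S, hSc, hSf⟩
  exact ZF.lower_bound hn ⟨S, hSc, hSf⟩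
end

section
/- Let B_n = (k_1+1, k_2+1, …, k_n+1) be a bouquet of n ≥ 2 circles with a cut-vertex, where k_n ≥ k_{n−1} ≥ … ≥ k_1 ≥ 2. Then the zero forcing number of its line graph satisfies Z(L(B_n)) = 2n − 1. -/
open SimpleGraph

variable {V : Type*}

namespace ZFB
open SimpleGraph
section generic
variable {V : Type*} {G : SimpleGraph V}

lemma subset_zfStep (S : Set V) : S ⊆ zfStep G S := Set.subset_union_left

lemma iter_mono (S : Set V) {m m' : ℕ} (h : m ≤ m') :
    (zfStep G)^[m] S ⊆ (zfStep G)^[m'] S := by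
  induction m' with
  | zero => simpa [Nat.le_zero.mp h]
  | succ m' ih =>
    rcases Nat.le_succ_iff.mp h with h | rfl
    · refine (ih h).trans ?_
      rw [Function.iterate_succ_apply']
      exact subset_zfStep _
    · rfl

/-- A fort: every vertex outside `T` adjacent to `T` has at least two
neighbours in `T`.  If the initial black set misses a fort, the fort stays
white forever. -/
lemma fort_stays_white {T S : Set V}
    (hT : ∀ v ∈ T, ∀ u, G.Adj u v → u ∉ T → ∃ w ∈ T, w ≠ v ∧ G.Adj u w)
    (hS : S ∩ T = ∅) : ∀ m, (zfStep G)^[m] S ∩ T = ∅ := by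
  intro m
  induction m with
  | zero => exact hS
  | succ m ih =>
    rw [Function.iterate_succ_apply']
    ext v
    simp only [Set.mem_inter_iff, Set.mem_empty_iff_false, iff_false, not_and]
    intro hv hvT
    rcases hv with hv | ⟨u, hu, hadj, huniq⟩
    · exact (Set.eq_empty_iff_forall_notMem.mp ih v) ⟨hv, hvT⟩
    · have huT : u ∉ T := fun huT =>
        (Set.eq_empty_iff_forall_notMem.mp ih u) ⟨hu, huT⟩
      obtain ⟨w, hwT, hwv, hadjw⟩ := hT v hvT u hadj huT
      have hwS : w ∉ (zfStep G)^[m] S := fun hw =>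
        (Set.eq_empty_iff_forall_notMem.mp ih w) ⟨hw, hwT⟩
      exact hwv (huniq w hadjw hwS)

lemma fort_meets {T S : Set V} (hne : T.Nonempty)
    (hT : ∀ v ∈ T, ∀ u, G.Adj u v → u ∉ T → ∃ w ∈ T, w ≠ v ∧ G.Adj u w)
    (hS : IsZeroForcingSet G S) : (S ∩ T).Nonempty := by
  rw [Set.nonempty_iff_ne_empty]
  intro h
  obtain ⟨m, hm⟩ := hS
  have := fort_stays_white hT h m
  rw [hm, Set.univ_inter] at this
  exact hne.ne_empty this

lemma sum_ncard_le {ι : Type*} [Finite V] {S : Set V} (F : Finset ι) (A : ι → Set V)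
    (hsub : ∀ i ∈ F, A i ⊆ S)
    (hdisj : ∀ i ∈ F, ∀ j ∈ F, i ≠ j → Disjoint (A i) (A j)) :
    ∑ i ∈ F, (A i).ncard ≤ S.ncard := by
  classical
  induction F using Finset.induction generalizing S with
  | empty => simp
  | @insert a F ha ih =>
    rw [Finset.sum_insert ha]
    have h1 : ∀ i ∈ F, A i ⊆ S \ A a := by
      intro i hi
      refine Set.subset_diff.mpr ⟨hsub i (Finset.mem_insert_of_mem hi), ?_⟩
      exact (hdisj a (Finset.mem_insert_self a F) i (Finset.mem_insert_of_mem hi)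
        (fun hc => ha (hc ▸ hi))).symm
    have h2 := ih h1 (fun i hi j hj hij =>
      hdisj i (Finset.mem_insert_of_mem hi) j (Finset.mem_insert_of_mem hj) hij)
    have h3 : (S \ A a).ncard + (A a).ncard = S.ncard :=
      Set.ncard_diff_add_ncard_of_subset (hsub a (Finset.mem_insert_self a F))
    omega

end generic
variable {n : ℕ} {k : Fin n → ℕ}
abbrev V0 (n : ℕ) (k : Fin n → ℕ) := Option (Σ i : Fin n, Fin (k i))
lemma bouquet_adj (u v : V0 n k) :
    (bouquet n k).Adj u v ↔ u ≠ v ∧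
      ((match u, v with
        | none, some a => (a.2 : ℕ) = 0 ∨ (a.2 : ℕ) = k a.1 - 1
        | some a, some b => a.1 = b.1 ∧ ((b.2 : ℕ) = (a.2 : ℕ) + 1)
        | _, _ => False) ∨
       (match v, u with
        | none, some a => (a.2 : ℕ) = 0 ∨ (a.2 : ℕ) = k a.1 - 1
        | some a, some b => a.1 = b.1 ∧ ((b.2 : ℕ) = (a.2 : ℕ) + 1)
        | _, _ => False)) :=
  SimpleGraph.fromRel_adj _ u v
section
variable (hk : ∀ i, 2 ≤ k i)
def vtx (i : Fin n) (j : ℕ) (h : j < k i) : V0 n k := some ⟨i, ⟨j, h⟩⟩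
lemma vtx_inj {i i' : Fin n} {j j' : ℕ} {h h'} :
    vtx (k := k) i j h = vtx i' j' h' ↔ i = i' ∧ j = j' := by
  constructor
  · intro hh
    simp only [vtx, Option.some.injEq, Sigma.mk.inj_iff] at hh
    obtain ⟨rfl, hh⟩ := hh
    simpa using hh
  · rintro ⟨rfl, rfl⟩; rfl
lemma adj_hub (i : Fin n) (j : ℕ) (h : j < k i) (hj : j = 0 ∨ j = k i - 1) :
    (bouquet n k).Adj none (vtx i j h) := by
  rw [bouquet_adj]
  exact ⟨by simp [vtx], Or.inl (by simpa [vtx] using hj)⟩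
lemma adj_step (i : Fin n) (j : ℕ) (h : j < k i) (h' : j + 1 < k i) :
    (bouquet n k).Adj (vtx i j h) (vtx i (j+1) h') := by
  rw [bouquet_adj]
  refine ⟨by simp [vtx_inj], Or.inl ?_⟩
  simp [vtx]
def eA (i : Fin n) : (bouquet n k).edgeSet :=
  ⟨s(none, vtx i 0 (by have := hk i; omega)), adj_hub i 0 _ (Or.inl rfl)⟩
def eB (i : Fin n) : (bouquet n k).edgeSet :=
  ⟨s(none, vtx i (k i - 1) (by have := hk i; omega)), adj_hub i _ _ (Or.inr rfl)⟩
def eP (i : Fin n) (j : ℕ) (hj : j + 2 ≤ k i) : (bouquet n k).edgeSet :=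
  ⟨s(vtx i j (by omega), vtx i (j+1) (by omega)), adj_step i j _ _⟩

-- classification
lemma edge_cases (e : (bouquet n k).edgeSet) :
    (∃ i, e = eA hk i) ∨ (∃ i, e = eB hk i) ∨
      (∃ (i : Fin n) (j : ℕ) (hj : j + 2 ≤ k i), e = eP i j hj) := by
  obtain ⟨s, hs⟩ := e
  induction s using Sym2.ind with
  | _ u v =>
    rw [SimpleGraph.mem_edgeSet, bouquet_adj] at hs
    obtain ⟨hne, h⟩ := hs
    match u, v with
    | none, none => simp at hne
    | none, some ⟨i, ⟨jv, hlt⟩⟩ =>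
      have hj : jv = 0 ∨ jv = k i - 1 := by
        rcases h with h | h
        · exact h
        · exact absurd h (by simp)
      rcases hj with rfl | rfl
      · exact Or.inl ⟨i, rfl⟩
      · exact Or.inr (Or.inl ⟨i, rfl⟩)
    | some ⟨i, ⟨jv, hlt⟩⟩, none =>
      have hj : jv = 0 ∨ jv = k i - 1 := by
        rcases h with h | h
        · exact absurd h (by simp)
        · exact h
      rcases hj with rfl | rfl
      · exact Or.inl ⟨i, Subtype.ext Sym2.eq_swap⟩
      · exact Or.inr (Or.inl ⟨i, Subtype.ext Sym2.eq_swap⟩)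
    | some ⟨i, ⟨jv, hlt⟩⟩, some ⟨i', ⟨jv', hlt'⟩⟩ =>
      right; right
      rcases h with ⟨h1, h2⟩ | ⟨h1, h2⟩
      · dsimp at h1 h2
        subst h1; subst h2
        exact ⟨i, jv, by omega, rfl⟩
      · dsimp at h1 h2
        subst h1; subst h2
        exact ⟨i', jv', by omega, Subtype.ext Sym2.eq_swap⟩

-- membership lemmas
lemma mem_eA {u : V0 n k} {i : Fin n} :
    u ∈ ((eA hk i : (bouquet n k).edgeSet) : Sym2 (V0 n k)) ↔
      u = none ∨ u = vtx i 0 (by have := hk i; omega) := by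
  simp [eA, Sym2.mem_iff]

lemma mem_eB {u : V0 n k} {i : Fin n} :
    u ∈ ((eB hk i : (bouquet n k).edgeSet) : Sym2 (V0 n k)) ↔
      u = none ∨ u = vtx i (k i - 1) (by have := hk i; omega) := by
  simp [eB, Sym2.mem_iff]

lemma mem_eP {u : V0 n k} {i : Fin n} {j : ℕ} {hj : j + 2 ≤ k i} :
    u ∈ ((eP i j hj : (bouquet n k).edgeSet) : Sym2 (V0 n k)) ↔
      u = vtx i j (by omega) ∨ u = vtx i (j+1) (by omega) := by
  simp [eP, Sym2.mem_iff]

-- injectivity / distinctness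
lemma eA_inj {i i' : Fin n} : eA hk i = eA hk i' ↔ i = i' := by
  constructor
  · intro h
    have := Subtype.ext_iff.mp h
    simp only [eA, Sym2.eq_iff, vtx] at this
    rcases this with ⟨-, h2⟩ | ⟨h2, -⟩
    · exact (Sigma.mk.inj_iff.mp (Option.some_injective _ h2)).1
    · simp at h2
  · rintro rfl; rfl

lemma eB_inj {i i' : Fin n} : eB hk i = eB hk i' ↔ i = i' := by
  constructor
  · intro h
    have := Subtype.ext_iff.mp h
    simp only [eB, Sym2.eq_iff, vtx] at this
    rcases this with ⟨-, h2⟩ | ⟨h2, -⟩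
    · exact (Sigma.mk.inj_iff.mp (Option.some_injective _ h2)).1
    · simp at h2
  · rintro rfl; rfl

lemma eA_ne_eB {i i' : Fin n} : eA hk i ≠ eB hk i' := by
  intro h
  have := Subtype.ext_iff.mp h
  simp only [eA, eB, Sym2.eq_iff, vtx] at this
  rcases this with ⟨-, h2⟩ | ⟨h2, -⟩
  · rw [Option.some_injective _ h2 |> Sigma.mk.inj_iff.mp |>.1] at h2
    have h3 := Option.some_injective _ h2
    have := hk i'
    have h4 := congrArg (fun a => (a.2 : ℕ)) h3
    simp at h4
    omega
  · simp at h2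

lemma none_notMem_eP {i : Fin n} {j : ℕ} {hj : j + 2 ≤ k i} :
    (none : V0 n k) ∉ ((eP i j hj : (bouquet n k).edgeSet) : Sym2 (V0 n k)) := by
  rw [mem_eP]
  rintro (h | h) <;> simp [vtx] at h

lemma eA_ne_eP {i i' : Fin n} {j : ℕ} {hj : j + 2 ≤ k i'} :
    eA hk i ≠ eP i' j hj := by
  intro h
  apply none_notMem_eP (i := i') (j := j) (hj := hj)
  rw [← h, mem_eA hk]; exact Or.inl rfl

lemma eB_ne_eP {i i' : Fin n} {j : ℕ} {hj : j + 2 ≤ k i'} :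
    eB hk i ≠ eP i' j hj := by
  intro h
  apply none_notMem_eP (i := i') (j := j) (hj := hj)
  rw [← h, mem_eB hk]; exact Or.inl rfl

lemma eP_inj {i i' : Fin n} {j j' : ℕ} {hj : j + 2 ≤ k i} {hj' : j' + 2 ≤ k i'} :
    eP (k := k) i j hj = eP i' j' hj' ↔ i = i' ∧ j = j' := by
  constructor
  · intro h
    have := Subtype.ext_iff.mp h
    simp only [eP, Sym2.eq_iff, vtx_inj] at this
    rcases this with ⟨⟨h1, h2⟩, -⟩ | ⟨⟨h1, h2⟩, ⟨-, h4⟩⟩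
    · exact ⟨h1, h2⟩
    · omega
  · rintro ⟨rfl, rfl⟩; rfl

-- line graph adjacency, forward
lemma adj_AA {i i' : Fin n} (h : i ≠ i') :
    (bouquet n k).lineGraph.Adj (eA hk i) (eA hk i') := by
  rw [lineGraph_adj_iff_exists]
  exact ⟨fun hc => h ((eA_inj hk).mp hc), none, (mem_eA hk).mpr (Or.inl rfl),
    (mem_eA hk).mpr (Or.inl rfl)⟩

lemma adj_AB {i i' : Fin n} :
    (bouquet n k).lineGraph.Adj (eA hk i) (eB hk i') := by
  rw [lineGraph_adj_iff_exists]
  exact ⟨eA_ne_eB hk, none, (mem_eA hk).mpr (Or.inl rfl), (mem_eB hk).mpr (Or.inl rfl)⟩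

lemma adj_BB {i i' : Fin n} (h : i ≠ i') :
    (bouquet n k).lineGraph.Adj (eB hk i) (eB hk i') := by
  rw [lineGraph_adj_iff_exists]
  exact ⟨fun hc => h ((eB_inj hk).mp hc), none, (mem_eB hk).mpr (Or.inl rfl),
    (mem_eB hk).mpr (Or.inl rfl)⟩

lemma adj_AP {i : Fin n} {hj : 0 + 2 ≤ k i} :
    (bouquet n k).lineGraph.Adj (eA hk i) (eP i 0 hj) := by
  rw [lineGraph_adj_iff_exists]
  exact ⟨eA_ne_eP hk, vtx i 0 (by omega), (mem_eA hk).mpr (Or.inr rfl),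
    mem_eP.mpr (Or.inl rfl)⟩

lemma adj_BP {i : Fin n} {hj : (k i - 2) + 2 ≤ k i} :
    (bouquet n k).lineGraph.Adj (eB hk i) (eP i (k i - 2) hj) := by
  rw [lineGraph_adj_iff_exists]
  refine ⟨eB_ne_eP hk, vtx i (k i - 1) (by have := hk i; omega),
    (mem_eB hk).mpr (Or.inr rfl), mem_eP.mpr (Or.inr ?_)⟩
  rw [vtx_inj]
  have := hk i; omega

lemma adj_PP {i : Fin n} {j : ℕ} {hj : j + 2 ≤ k i} {hj' : (j+1) + 2 ≤ k i} :
    (bouquet n k).lineGraph.Adj (eP i j hj) (eP i (j+1) hj') := by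
  rw [lineGraph_adj_iff_exists]
  refine ⟨fun hc => by simpa using (eP_inj.mp hc).2, vtx i (j+1) (by omega),
    mem_eP.mpr (Or.inr rfl), mem_eP.mpr (Or.inl rfl)⟩

-- backward characterizations
lemma adj_PA' {i i' : Fin n} {j : ℕ} {hj : j + 2 ≤ k i}
    (h : (bouquet n k).lineGraph.Adj (eP i j hj) (eA hk i')) : i' = i ∧ j = 0 := by
  rw [lineGraph_adj_iff_exists] at h
  obtain ⟨-, v, h1, h2⟩ := h
  rw [mem_eP] at h1
  rw [mem_eA hk] at h2
  rcases h2 with rfl | rfl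
  · rcases h1 with h1 | h1 <;> simp [vtx] at h1
  · rcases h1 with h1 | h1 <;> rw [vtx_inj] at h1
    · exact ⟨h1.1, h1.2.symm⟩
    · omega

lemma adj_PB' {i i' : Fin n} {j : ℕ} {hj : j + 2 ≤ k i}
    (h : (bouquet n k).lineGraph.Adj (eP i j hj) (eB hk i')) :
    i' = i ∧ j = k i - 2 := by
  rw [lineGraph_adj_iff_exists] at h
  obtain ⟨-, v, h1, h2⟩ := h
  rw [mem_eP] at h1
  rw [mem_eB hk] at h2
  rcases h2 with rfl | rfl
  · rcases h1 with h1 | h1 <;> simp [vtx] at h1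
  · rcases h1 with h1 | h1 <;> rw [vtx_inj] at h1
    · obtain ⟨rfl, h1⟩ := h1; exact ⟨rfl, by omega⟩
    · obtain ⟨rfl, h1⟩ := h1; exact ⟨rfl, by omega⟩

lemma adj_PP' {i i' : Fin n} {j j' : ℕ} {hj : j + 2 ≤ k i} {hj' : j' + 2 ≤ k i'}
    (h : (bouquet n k).lineGraph.Adj (eP i j hj) (eP i' j' hj')) :
    i' = i ∧ (j' = j + 1 ∨ j = j' + 1) := by
  rw [lineGraph_adj_iff_exists] at h
  obtain ⟨hne, v, h1, h2⟩ := h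
  rw [mem_eP] at h1 h2
  have hne' : ¬ (i = i' ∧ j = j') := fun hc => hne (eP_inj.mpr hc)
  rcases h1 with rfl | rfl <;> rw [vtx_inj] at h2 <;>
    rcases h2 with ⟨rfl, h2⟩ | ⟨rfl, h2⟩ <;> simp at hne' <;> omega

lemma adj_AP' {i i' : Fin n} {j' : ℕ} {hj' : j' + 2 ≤ k i'}
    (h : (bouquet n k).lineGraph.Adj (eA hk i) (eP i' j' hj')) : i' = i ∧ j' = 0 := by
  have := adj_PA' hk (h.symm)
  exact ⟨this.1.symm, this.2⟩

lemma adj_BP' {i i' : Fin n} {j' : ℕ} {hj' : j' + 2 ≤ k i'}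
    (h : (bouquet n k).lineGraph.Adj (eB hk i) (eP i' j' hj')) :
    i' = i ∧ j' = k i' - 2 := by
  have := adj_PB' hk (h.symm)
  exact ⟨this.1.symm, this.2⟩


-- cycle sets
def ES (i : Fin n) : Set ((bouquet n k).edgeSet) :=
  {e | e = eA hk i ∨ e = eB hk i ∨ ∃ (j : ℕ) (hj : j + 2 ≤ k i), e = eP i j hj}

lemma eA_mem_ES (i : Fin n) : eA hk i ∈ ES hk i := Or.inl rfl
lemma eB_mem_ES (i : Fin n) : eB hk i ∈ ES hk i := Or.inr (Or.inl rfl)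
lemma eP_mem_ES (i : Fin n) (j : ℕ) (hj : j + 2 ≤ k i) : eP i j hj ∈ ES hk i :=
  Or.inr (Or.inr ⟨j, hj, rfl⟩)

lemma ES_elem_eq {i i' : Fin n} {e : (bouquet n k).edgeSet}
    (he : e ∈ ES hk i) (he' : e ∈ ES hk i') : i = i' := by
  rcases he with rfl | rfl | ⟨j, hj, rfl⟩ <;>
    rcases he' with h' | h' | ⟨j', hj', h'⟩
  · exact (eA_inj hk).mp h'
  · exact absurd h' (eA_ne_eB hk)
  · exact absurd h' (eA_ne_eP hk)
  · exact absurd h'.symm (eA_ne_eB hk)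
  · exact (eB_inj hk).mp h'
  · exact absurd h' (eB_ne_eP hk)
  · exact absurd h'.symm (eA_ne_eP hk)
  · exact absurd h'.symm (eB_ne_eP hk)
  · exact (eP_inj.mp h').1

lemma ES_cover (e : (bouquet n k).edgeSet) : ∃ i, e ∈ ES hk i := by
  rcases edge_cases hk e with ⟨i, rfl⟩ | ⟨i, rfl⟩ | ⟨i, j, hj, rfl⟩
  · exact ⟨i, eA_mem_ES hk i⟩
  · exact ⟨i, eB_mem_ES hk i⟩
  · exact ⟨i, eP_mem_ES hk i j hj⟩

lemma hub_adj {i i' : Fin n} (h : i ≠ i') {u w : (bouquet n k).edgeSet}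
    (hu : u = eA hk i ∨ u = eB hk i) (hw : w = eA hk i' ∨ w = eB hk i') :
    (bouquet n k).lineGraph.Adj u w := by
  rcases hu with rfl | rfl <;> rcases hw with rfl | rfl
  · exact adj_AA hk h
  · exact adj_AB hk
  · exact (adj_AB hk).symm
  · exact adj_BB hk h

lemma adj_eP_ES {i i' : Fin n} {j : ℕ} {hj : j + 2 ≤ k i'}
    {v : (bouquet n k).edgeSet} (h : (bouquet n k).lineGraph.Adj (eP i' j hj) v)
    (hv : v ∈ ES hk i) : i = i' := by
  rcases hv with rfl | rfl | ⟨j'', hj'', rfl⟩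
  · exact (adj_PA' hk h).1
  · exact (adj_PB' hk h).1
  · exact (adj_PP' h).1

lemma two_nbrs {i : Fin n} {x : (bouquet n k).edgeSet} (hx : x ∈ ES hk i) :
    ∃ c1 c2, c1 ∈ ES hk i ∧ c2 ∈ ES hk i ∧ c1 ≠ c2 ∧ c1 ≠ x ∧ c2 ≠ x ∧
      (bouquet n k).lineGraph.Adj x c1 ∧ (bouquet n k).lineGraph.Adj x c2 := by
  have hki := hk i
  rcases hx with rfl | rfl | ⟨j, hj, rfl⟩
  · exact ⟨eB hk i, eP i 0 (by omega), eB_mem_ES hk i, eP_mem_ES hk i 0 _,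
      eB_ne_eP hk, (eA_ne_eB hk ·.symm), (eA_ne_eP hk ·.symm), adj_AB hk, adj_AP hk⟩
  · exact ⟨eA hk i, eP i (k i - 2) (by omega), eA_mem_ES hk i, eP_mem_ES hk i _ _,
      eA_ne_eP hk, (eA_ne_eB hk · ), (eB_ne_eP hk ·.symm), (adj_AB hk).symm, adj_BP hk⟩
  · rcases Nat.eq_zero_or_eq_succ_pred j with rfl | hj0
    · by_cases hjt : 0 = k i - 2
      · refine ⟨eA hk i, eB hk i, eA_mem_ES hk i, eB_mem_ES hk i, eA_ne_eB hk,
          (eA_ne_eP hk ·), (eB_ne_eP hk ·), (adj_AP hk).symm, ?_⟩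
        have : eP (k := k) i 0 hj = eP i (k i - 2) (by omega) := eP_inj.mpr ⟨rfl, hjt⟩
        rw [this]
        exact (adj_BP hk).symm
      · refine ⟨eA hk i, eP i 1 (by omega), eA_mem_ES hk i, eP_mem_ES hk i 1 _,
          eA_ne_eP hk, (eA_ne_eP hk ·), (fun hc => by simpa using (eP_inj.mp hc).2), ?_, ?_⟩
        · exact (adj_AP hk).symm
        · exact adj_PP (j := 0)
    · obtain ⟨jp, rfl⟩ : ∃ jp, j = jp + 1 := ⟨j - 1, hj0⟩
      by_cases hjt : jp + 1 = k i - 2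
      · refine ⟨eP i jp (by omega), eB hk i, eP_mem_ES hk i jp _, eB_mem_ES hk i,
          (eB_ne_eP hk ·.symm), (fun hc => by simpa using (eP_inj.mp hc).2),
          (eB_ne_eP hk ·), (adj_PP).symm, ?_⟩
        have : eP (k := k) i (jp+1) hj = eP i (k i - 2) (by omega) := eP_inj.mpr ⟨rfl, hjt⟩
        rw [this]
        exact (adj_BP hk).symm
      · refine ⟨eP i jp (by omega), eP i (jp + 2) (by omega), eP_mem_ES hk i jp _,
          eP_mem_ES hk i (jp+2) _, (fun hc => by simpa using (eP_inj.mp hc).2),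
          (fun hc => by simpa using (eP_inj.mp hc).2),
          (fun hc => by simpa using (eP_inj.mp hc).2), (adj_PP).symm, ?_⟩
        exact adj_PP (j := jp + 1)

lemma fort_one (i : Fin n) :
    ∀ v ∈ ES hk i, ∀ u, (bouquet n k).lineGraph.Adj u v → u ∉ ES hk i →
      ∃ w ∈ ES hk i, w ≠ v ∧ (bouquet n k).lineGraph.Adj u w := by
  intro v hv u hadj hu
  rcases edge_cases hk u with ⟨i'', rfl⟩ | ⟨i'', rfl⟩ | ⟨i'', j'', hj'', rfl⟩
  · have hne : i'' ≠ i := fun hc => hu (hc ▸ eA_mem_ES hk i'')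
    by_cases hv1 : eA hk i = v
    · exact ⟨eB hk i, eB_mem_ES hk i, fun hc => (eA_ne_eB hk) (hv1.trans hc.symm),
        hub_adj hk hne (Or.inl rfl) (Or.inr rfl)⟩
    · exact ⟨eA hk i, eA_mem_ES hk i, hv1, hub_adj hk hne (Or.inl rfl) (Or.inl rfl)⟩
  · have hne : i'' ≠ i := fun hc => hu (hc ▸ eB_mem_ES hk i'')
    by_cases hv1 : eA hk i = v
    · exact ⟨eB hk i, eB_mem_ES hk i, fun hc => (eA_ne_eB hk) (hv1.trans hc.symm),
        hub_adj hk hne (Or.inr rfl) (Or.inr rfl)⟩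
    · exact ⟨eA hk i, eA_mem_ES hk i, hv1, hub_adj hk hne (Or.inr rfl) (Or.inl rfl)⟩
  · exact absurd ((adj_eP_ES hk hadj hv) ▸ eP_mem_ES hk i'' j'' hj'' :
      eP i'' j'' hj'' ∈ ES hk i) hu


lemma hub_pick (i : Fin n) (x : (bouquet n k).edgeSet) :
    ∃ c, c ∈ ES hk i ∧ c ≠ x ∧ (c = eA hk i ∨ c = eB hk i) := by
  by_cases h : x = eA hk i
  · exact ⟨eB hk i, eB_mem_ES hk i, fun hc => eA_ne_eB hk (hc.trans h).symm, Or.inr rfl⟩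
  · exact ⟨eA hk i, eA_mem_ES hk i, fun hc => h hc.symm, Or.inl rfl⟩

lemma fort_two_aux {i i' : Fin n} (hii : i ≠ i') {x y : (bouquet n k).edgeSet}
    (hx : x ∈ ES hk i) (hy : y ∈ ES hk i') (v : (bouquet n k).edgeSet) :
    ∃ w ∈ (ES hk i ∪ ES hk i') \ {x, y}, w ≠ v ∧ (bouquet n k).lineGraph.Adj x w := by
  obtain ⟨c1, c2, hc1, hc2, hcc, hc1x, hc2x, ha1, ha2⟩ := two_nbrs hk hx
  have hT : ∀ c, c ∈ ES hk i → c ≠ x → c ∈ (ES hk i ∪ ES hk i') \ {x, y} := by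
    intro c hc hcx
    refine ⟨Or.inl hc, ?_⟩
    rintro (rfl | rfl)
    · exact hcx rfl
    · exact hii (ES_elem_eq hk hc hy)
  by_cases h1 : c1 = v
  · exact ⟨c2, hT c2 hc2 hc2x, fun hc => hcc (h1.trans hc.symm), ha2⟩
  · exact ⟨c1, hT c1 hc1 hc1x, h1, ha1⟩

lemma fort_two_hub {i i' i'' : Fin n} (hii : i ≠ i') (hne1 : i'' ≠ i) (hne2 : i'' ≠ i')
    {u x y : (bouquet n k).edgeSet} (hu : u = eA hk i'' ∨ u = eB hk i'')
    (hx : x ∈ ES hk i) (hy : y ∈ ES hk i') (v : (bouquet n k).edgeSet) :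
    ∃ w ∈ (ES hk i ∪ ES hk i') \ {x, y}, w ≠ v ∧ (bouquet n k).lineGraph.Adj u w := by
  obtain ⟨c, hc, hcx, hchub⟩ := hub_pick hk i x
  obtain ⟨c', hc', hcy', hchub'⟩ := hub_pick hk i' y
  have hcT : c ∈ (ES hk i ∪ ES hk i') \ {x, y} := by
    refine ⟨Or.inl hc, ?_⟩
    rintro (rfl | rfl)
    · exact hcx rfl
    · exact hii (ES_elem_eq hk hc hy)
  have hcT' : c' ∈ (ES hk i ∪ ES hk i') \ {x, y} := by
    refine ⟨Or.inr hc', ?_⟩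
    rintro (rfl | rfl)
    · exact hii (ES_elem_eq hk hx hc')
    · exact hcy' rfl
  have hadjc := hub_adj hk hne1 hu hchub
  have hadjc' := hub_adj hk hne2 hu hchub'
  by_cases hcv : c = v
  · refine ⟨c', hcT', fun hcc => ?_, hadjc'⟩
    exact hii (ES_elem_eq hk hc ((hcc.trans hcv.symm).symm ▸ hc' : (c : (bouquet n k).edgeSet) ∈ ES hk i'))
  · exact ⟨c, hcT, hcv, hadjc⟩

lemma fort_two {i i' : Fin n} (hii : i ≠ i') {x y : (bouquet n k).edgeSet}
    (hx : x ∈ ES hk i) (hy : y ∈ ES hk i') :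
    ∀ v ∈ (ES hk i ∪ ES hk i') \ {x, y}, ∀ u, (bouquet n k).lineGraph.Adj u v →
      u ∉ (ES hk i ∪ ES hk i') \ {x, y} →
      ∃ w ∈ (ES hk i ∪ ES hk i') \ {x, y}, w ≠ v ∧ (bouquet n k).lineGraph.Adj u w := by
  intro v hv u hadj hu
  by_cases hux : u = x
  · subst hux
    exact fort_two_aux hk hii hx hy v
  by_cases huy : u = y
  · subst huy
    obtain ⟨w, ⟨hw1, hw2⟩, hwv, hwadj⟩ := fort_two_aux hk hii.symm hy hx v
    refine ⟨w, ⟨hw1.elim Or.inr Or.inl, ?_⟩, hwv, hwadj⟩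
    rintro (rfl | rfl)
    · exact hw2 (Or.inr rfl)
    · exact hw2 (Or.inl rfl)
  · have hu' : u ∉ ES hk i ∪ ES hk i' := by
      intro hmem
      refine hu ⟨hmem, ?_⟩
      rintro (rfl | rfl)
      · exact hux rfl
      · exact huy rfl
    have hvU : v ∈ ES hk i ∪ ES hk i' := hv.1
    rcases edge_cases hk u with ⟨i'', rfl⟩ | ⟨i'', rfl⟩ | ⟨i'', j'', hj'', rfl⟩
    · have hne1 : i'' ≠ i := fun hc => hu' (Or.inl (hc ▸ eA_mem_ES hk i''))
      have hne2 : i'' ≠ i' := fun hc => hu' (Or.inr (hc ▸ eA_mem_ES hk i''))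
      exact fort_two_hub hk hii hne1 hne2 (Or.inl rfl) hx hy v
    · have hne1 : i'' ≠ i := fun hc => hu' (Or.inl (hc ▸ eB_mem_ES hk i''))
      have hne2 : i'' ≠ i' := fun hc => hu' (Or.inr (hc ▸ eB_mem_ES hk i''))
      exact fort_two_hub hk hii hne1 hne2 (Or.inr rfl) hx hy v
    · rcases hvU with hvU | hvU
      · exact absurd (Or.inl ((adj_eP_ES hk hadj hvU) ▸ eP_mem_ES hk i'' j'' hj'' :
          eP i'' j'' hj'' ∈ ES hk i)) hu'
      · exact absurd (Or.inr ((adj_eP_ES hk hadj hvU) ▸ eP_mem_ES hk i'' j'' hj'' :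
          eP i'' j'' hj'' ∈ ES hk i')) hu'

include hk in
lemma lower_bound (hn : 2 ≤ n) {S : Set ↥(bouquet n k).edgeSet}
    (hS : IsZeroForcingSet (bouquet n k).lineGraph S) : 2 * n - 1 ≤ S.ncard := by
  classical
  set c : Fin n → ℕ := fun i => (S ∩ ES hk i).ncard with hc
  have hc1 : ∀ i, 1 ≤ c i := fun i => (Set.ncard_pos (Set.toFinite _)).mpr
    (fort_meets ⟨eA hk i, eA_mem_ES hk i⟩ (fort_one hk i) hS)
  have hsum : ∑ i, c i ≤ S.ncard :=
    sum_ncard_le Finset.univ (fun i => S ∩ ES hk i)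
      (fun i _ => Set.inter_subset_left)
      (fun i _ j _ hij => Set.disjoint_left.mpr
        (fun e he he' => hij (ES_elem_eq hk he.2 he'.2)))
  have hbad : ∀ i j, i ≠ j → c i ≤ 1 → c j ≤ 1 → False := by
    intro i j hij hci hcj
    obtain ⟨x, hx⟩ := Set.ncard_eq_one.mp (le_antisymm hci (hc1 i))
    obtain ⟨y, hy⟩ := Set.ncard_eq_one.mp (le_antisymm hcj (hc1 j))
    have hxE : x ∈ ES hk i := (hx ▸ (rfl : x ∈ ({x} : Set _)) : x ∈ S ∩ ES hk i).2
    have hyE : y ∈ ES hk j := (hy ▸ (rfl : y ∈ ({y} : Set _)) : y ∈ S ∩ ES hk j).2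
    obtain ⟨c0, hc0, hc0x, -⟩ := hub_pick hk i x
    have hTne : ((ES hk i ∪ ES hk j) \ {x, y}).Nonempty := by
      refine ⟨c0, Or.inl hc0, ?_⟩
      rintro (rfl | rfl)
      · exact hc0x rfl
      · exact hij (ES_elem_eq hk hc0 hyE)
    obtain ⟨e, heS, heU, heP⟩ := fort_meets hTne (fort_two hk hij hxE hyE) hS
    rcases heU with heU | heU
    · exact heP (Or.inl (by
        have : e ∈ S ∩ ES hk i := ⟨heS, heU⟩
        rw [hx] at this
        exact this))
    · exact heP (Or.inr (by
        have : e ∈ S ∩ ES hk j := ⟨heS, heU⟩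
        rw [hy] at this
        exact this))
  set bad := Finset.univ.filter (fun i => c i ≤ 1) with hbaddef
  have hbadcard : bad.card ≤ 1 := by
    rw [Finset.card_le_one]
    intro a ha b hb
    by_contra hab
    exact hbad a b hab (Finset.mem_filter.mp ha).2 (Finset.mem_filter.mp hb).2
  have h1 : bad.card * 1 ≤ ∑ i ∈ bad, c i :=
    Finset.card_nsmul_le_sum bad c 1 (fun i hi => hc1 i)
  have h2 : (Finset.univ.filter (fun i => ¬ c i ≤ 1)).card * 2 ≤
      ∑ i ∈ Finset.univ.filter (fun i => ¬ c i ≤ 1), c i :=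
    Finset.card_nsmul_le_sum _ c 2 (fun i hi => by
      have := (Finset.mem_filter.mp hi).2; omega)
  have hsplit : ∑ i ∈ bad, c i + ∑ i ∈ Finset.univ.filter (fun i => ¬ c i ≤ 1), c i
      = ∑ i : Fin n, c i := Finset.sum_filter_add_sum_filter_not _ _ _
  have hcards : bad.card + (Finset.univ.filter (fun i => ¬ c i ≤ 1)).card = n := by
    rw [hbaddef]
    rw [Finset.card_filter_add_card_filter_not]
    simp
  omega


end

-- the forcing set (outside the variable section: `hk` explicit everywhere)
section upper
variable {n : ℕ} {k : Fin n → ℕ}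

def S0 (hk : ∀ i, 2 ≤ k i) (hn : 2 ≤ n) : Set ↥(bouquet n k).edgeSet :=
  (eA hk '' Set.univ) ∪ ((fun i => eP i 0 (hk i)) '' {i : Fin n | i ≠ ⟨0, by omega⟩})

lemma eA_mem_S0 (hk : ∀ i, 2 ≤ k i) (hn : 2 ≤ n) (i : Fin n) : eA hk i ∈ S0 hk hn :=
  Or.inl ⟨i, trivial, rfl⟩

lemma eP0_mem_S0 (hk : ∀ i, 2 ≤ k i) (hn : 2 ≤ n) {i : Fin n}
    (hi : i ≠ ⟨0, by omega⟩) (hj : 0 + 2 ≤ k i) : eP i 0 hj ∈ S0 hk hn :=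
  Or.inr ⟨i, hi, rfl⟩

lemma S0_sub (hk : ∀ i, 2 ≤ k i) (hn : 2 ≤ n) (m : ℕ) :
    S0 hk hn ⊆ (zfStep (bouquet n k).lineGraph)^[m] (S0 hk hn) := by
  have := iter_mono (G := (bouquet n k).lineGraph) (S0 hk hn) (Nat.zero_le m)
  simpa using this

lemma force_step {V : Type*} {G : SimpleGraph V} {S : Set V} {u v : V} (hu : u ∈ S)
    (hadj : G.Adj u v) (huniq : ∀ w, G.Adj u w → w ∉ S → w = v) : v ∈ zfStep G S :=
  Or.inr ⟨u, hu, hadj, huniq⟩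

lemma chain (hk : ∀ i, 2 ≤ k i) (hn : 2 ≤ n) {i : Fin n} {t : ℕ} {h00 : 0 + 2 ≤ k i}
    (h0 : eP i 0 h00 ∈ (zfStep (bouquet n k).lineGraph)^[t] (S0 hk hn)) :
    ∀ j (hj : j + 2 ≤ k i),
      eP i j hj ∈ (zfStep (bouquet n k).lineGraph)^[t + j] (S0 hk hn) := by
  intro j
  induction j using Nat.strong_induction_on with
  | _ j ih =>
    intro hj
    match j with
    | 0 => exact h0
    | jp + 1 =>
      have ihp := ih jp (by omega) (by omega)
      rw [show t + (jp + 1) = (t + jp) + 1 from rfl, Function.iterate_succ_apply']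
      refine force_step ihp adj_PP ?_
      intro w hw hwn
      rcases edge_cases hk w with ⟨i'', rfl⟩ | ⟨i'', rfl⟩ | ⟨i'', j'', hj'', rfl⟩
      · obtain ⟨rfl, hjp0⟩ := adj_PA' hk hw
        exact absurd (S0_sub hk hn (t + jp) (eA_mem_S0 hk hn i'')) hwn
      · obtain ⟨rfl, hjp⟩ := adj_PB' hk hw
        omega
      · obtain ⟨rfl, hcase⟩ := adj_PP' hw
        rcases hcase with rfl | hcase
        · rfl
        · exact absurd (iter_mono _ (by omega) (ih j'' (by omega) (by omega))) hwn

lemma chainB (hk : ∀ i, 2 ≤ k i) (hn : 2 ≤ n) {i : Fin n} {t : ℕ} {h00 : 0 + 2 ≤ k i}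
    (h0 : eP i 0 h00 ∈ (zfStep (bouquet n k).lineGraph)^[t] (S0 hk hn)) :
    eB hk i ∈ (zfStep (bouquet n k).lineGraph)^[t + (k i - 1)] (S0 hk hn) := by
  have hki := hk i
  have hch := chain hk hn h0 (k i - 2) (by omega)
  rw [show t + (k i - 1) = (t + (k i - 2)) + 1 by omega, Function.iterate_succ_apply']
  refine force_step hch (adj_BP hk).symm ?_
  intro w hw hwn
  rcases edge_cases hk w with ⟨i'', rfl⟩ | ⟨i'', rfl⟩ | ⟨i'', j'', hj'', rfl⟩
  · obtain ⟨rfl, hjp0⟩ := adj_PA' hk hw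
    exact absurd (S0_sub hk hn _ (eA_mem_S0 hk hn i'')) hwn
  · obtain ⟨rfl, -⟩ := adj_PB' hk hw
    rfl
  · obtain ⟨rfl, hcase⟩ := adj_PP' hw
    have hj3 : j'' = k i'' - 3 := by omega
    subst hj3
    exact absurd (iter_mono _ (by omega)
      (chain hk hn h0 (k i'' - 3) (by omega))) hwn

lemma S0_forcing (hk : ∀ i, 2 ≤ k i) (hn : 2 ≤ n) :
    IsZeroForcingSet (bouquet n k).lineGraph (S0 hk hn) := by
  set i0 : Fin n := ⟨0, by omega⟩ with hi0
  set i1 : Fin n := ⟨1, by omega⟩ with hi1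
  have hne10 : i1 ≠ i0 := by simp [hi0, hi1, Fin.ext_iff]
  set M := Finset.univ.sup k with hM
  have hkM : ∀ i, k i ≤ M := fun i => Finset.le_sup (Finset.mem_univ i)
  set B := fun m => (zfStep (bouquet n k).lineGraph)^[m] (S0 hk hn) with hB
  have hstep : ∀ m, B (m + 1) = zfStep (bouquet n k).lineGraph (B m) := fun m =>
    Function.iterate_succ_apply' _ _ _
  have st1 : ∀ (i : Fin n), i ≠ i0 → ∀ (j : ℕ) (hj : j + 2 ≤ k i), eP i j hj ∈ B j := by
    intro i hi j hj
    have h0 : eP i 0 (hk i) ∈ (zfStep (bouquet n k).lineGraph)^[0] (S0 hk hn) :=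
      eP0_mem_S0 hk hn hi _
    have h1 := chain hk hn h0 j hj
    have e : 0 + j = j := by omega
    rw [e] at h1
    exact h1
  have st2 : ∀ (i : Fin n), i ≠ i0 → eB hk i ∈ B (k i - 1) := by
    intro i hi
    have h0 : eP i 0 (hk i) ∈ (zfStep (bouquet n k).lineGraph)^[0] (S0 hk hn) :=
      eP0_mem_S0 hk hn hi _
    have h1 := chainB hk hn h0
    have e : 0 + (k i - 1) = k i - 1 := by omega
    rw [e] at h1
    exact h1
  have st3 : eB hk i0 ∈ B (M + 1) := by
    rw [hstep]
    refine force_step (iter_mono _ (by have := hk i1; have := hkM i1; omega) (st2 i1 hne10))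
      (adj_BB hk hne10) ?_
    intro w hw hwn
    rcases edge_cases hk w with ⟨i'', rfl⟩ | ⟨i'', rfl⟩ | ⟨i'', j'', hj'', rfl⟩
    · exact absurd (S0_sub hk hn _ (eA_mem_S0 hk hn i'')) hwn
    · by_cases hii : i'' = i0
      · rw [hii]
      · exact absurd (iter_mono _ (by have := hkM i''; have := hk i''; omega)
          (st2 i'' hii)) hwn
    · obtain ⟨heq, -⟩ := adj_BP' hk hw
      exact absurd (iter_mono _ (by have := hkM i''; omega)
        (st1 i'' (fun hc => hne10 (heq.symm.trans hc)) j'' hj'')) hwn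
  have st4 : eP i0 0 (hk i0) ∈ B (M + 2) := by
    rw [hstep]
    refine force_step (S0_sub hk hn (M+1) (eA_mem_S0 hk hn i0)) (adj_AP hk) ?_
    intro w hw hwn
    rcases edge_cases hk w with ⟨i'', rfl⟩ | ⟨i'', rfl⟩ | ⟨i'', j'', hj'', rfl⟩
    · exact absurd (S0_sub hk hn _ (eA_mem_S0 hk hn i'')) hwn
    · by_cases hii : i'' = i0
      · subst hii; exact absurd st3 hwn
      · exact absurd (iter_mono _ (by have := hkM i''; have := hk i''; omega)
          (st2 i'' hii)) hwn
    · obtain ⟨rfl, rfl⟩ := adj_AP' hk hw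
      rfl
  have st5 : ∀ (j : ℕ) (hj : j + 2 ≤ k i0), eP i0 j hj ∈ B (M + 2 + j) :=
    fun j hj => chain hk hn st4 j hj
  refine ⟨M + 2 + M, Set.eq_univ_iff_forall.mpr ?_⟩
  intro e
  rcases edge_cases hk e with ⟨i, rfl⟩ | ⟨i, rfl⟩ | ⟨i, j, hj, rfl⟩
  · exact S0_sub hk hn _ (eA_mem_S0 hk hn i)
  · by_cases hii : i = i0
    · subst hii; exact iter_mono _ (by omega) st3
    · exact iter_mono _ (by have := hkM i; have := hk i; omega) (st2 i hii)
  · by_cases hii : i = i0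
    · subst hii
      exact iter_mono _ (by have := hkM i0; omega) (st5 j hj)
    · exact iter_mono _ (by have := hkM i; omega) (st1 i hii j hj)

lemma S0_ncard (hk : ∀ i, 2 ≤ k i) (hn : 2 ≤ n) : (S0 hk hn).ncard = 2 * n - 1 := by
  rw [S0]
  rw [Set.ncard_union_eq]
  · rw [Set.ncard_image_of_injective _ (fun a b hab => (eA_inj hk).mp hab),
      Set.ncard_image_of_injective _ (fun a b hab => (eP_inj.mp hab).1)]
    rw [Set.ncard_univ, Nat.card_eq_fintype_card, Fintype.card_fin]
    have hco : {i : Fin n | i ≠ ⟨0, by omega⟩} = Set.univ \ {(⟨0, by omega⟩ : Fin n)} := by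
      ext; simp
    rw [hco, Set.ncard_diff (by simp), Set.ncard_univ, Nat.card_eq_fintype_card,
      Fintype.card_fin, Set.ncard_singleton]
    omega
  · rw [Set.disjoint_left]
    rintro e ⟨i, -, rfl⟩ ⟨i', -, heq⟩
    exact eA_ne_eP hk heq.symm

end upper

end ZFB

/-- For a bouquet `B_n` of `n ≥ 2` circles of lengths `k i + 1` with
`k n ≥ … ≥ k 1 ≥ 2`, the zero forcing number of its line graph is `2n - 1`. -/
theorem zeroForcingNum_lineGraph_bouquet (n : ℕ) (hn : 2 ≤ n) (k : Fin n → ℕ)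
    (hk : ∀ i, 2 ≤ k i) (hmono : Monotone k) :
    zeroForcingNum (bouquet n k).lineGraph = 2 * n - 1 := by
  have hmem : ∃ S : Set ↥(bouquet n k).edgeSet,
      S.ncard = 2 * n - 1 ∧ IsZeroForcingSet (bouquet n k).lineGraph S :=
    ⟨_, ZFB.S0_ncard hk hn, ZFB.S0_forcing hk hn⟩
  apply le_antisymm
  · exact Nat.sInf_le hmem
  · refine le_csInf ⟨_, hmem⟩ ?_
    rintro z ⟨S, rfl, hS⟩
    exact ZFB.lower_bound hk hn hS
end

section
/- For any tree T of order at least 2, the metric dimension of the line graph of T is at most the zero forcing number of the line graph of T: dim(L(T)) ≤ Z(L(T)). -/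
open SimpleGraph

variable {V : Type*}

namespace ZFAux

variable {T : SimpleGraph V}

/-- min distance between endpoints of two `Sym2`s. -/
noncomputable def mdist (T : SimpleGraph V) (e f : Sym2 V) : ℕ :=
  sInf {k | ∃ a b, a ∈ e ∧ b ∈ f ∧ T.dist a b = k}

lemma mdistSet_nonempty (T : SimpleGraph V) (e f : Sym2 V) :
    {k | ∃ a b, a ∈ e ∧ b ∈ f ∧ T.dist a b = k}.Nonempty :=
  ⟨_, e.out.1, f.out.1, Sym2.out_fst_mem e, Sym2.out_fst_mem f, rfl⟩

lemma mdist_le (T : SimpleGraph V) {e f : Sym2 V} {a b : V} (ha : a ∈ e) (hb : b ∈ f) :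
    mdist T e f ≤ T.dist a b :=
  Nat.sInf_le ⟨a, b, ha, hb, rfl⟩

lemma exists_mdist (T : SimpleGraph V) (e f : Sym2 V) :
    ∃ a b, a ∈ e ∧ b ∈ f ∧ T.dist a b = mdist T e f :=
  Nat.sInf_mem (mdistSet_nonempty T e f)

lemma edge_adj (T : SimpleGraph V) (g : T.edgeSet) {a b : V}
    (ha : a ∈ g.1) (hb : b ∈ g.1) (hab : a ≠ b) : T.Adj a b := by
  have : g.1 = s(a, b) := (Sym2.mem_and_mem_iff hab).1 ⟨ha, hb⟩
  have h2 := g.2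
  rw [this, SimpleGraph.mem_edgeSet] at h2
  exact h2

lemma edge_dist_le_one (T : SimpleGraph V) (g : T.edgeSet) {a b : V}
    (ha : a ∈ g.1) (hb : b ∈ g.1) : T.dist a b ≤ 1 := by
  by_cases hab : a = b
  · simp [hab, SimpleGraph.dist_self]
  · exact le_of_eq ((SimpleGraph.dist_eq_one_iff_adj).2 (edge_adj T g ha hb hab))

lemma exists_lineWalk (T : SimpleGraph V) {a b : V} (P : T.Walk a b) :
    ∀ (g h : T.edgeSet), a ∈ g.1 → b ∈ h.1 →
    ∃ Q : (T.lineGraph).Walk g h, Q.length ≤ P.length + 1 := by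
  induction P with
  | nil =>
    intro g h ha hb
    by_cases hgh : g = h
    · subst hgh; exact ⟨Walk.nil, by simp⟩
    · exact ⟨Walk.cons (lineGraph_adj_iff_exists.2 ⟨hgh, _, ha, hb⟩) Walk.nil, by simp⟩
  | @cons a c b hac P' ih =>
    intro g h ha hb
    have hg' : s(a, c) ∈ T.edgeSet := hac
    set g' : T.edgeSet := ⟨s(a, c), hg'⟩ with hg'def
    have hc : c ∈ g'.1 := Sym2.mem_mk_right a c
    obtain ⟨Q', hQ'⟩ := ih g' h hc hb
    by_cases hgg : g = g'
    · subst hgg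
      exact ⟨Q', le_trans hQ' (by simp only [Walk.length_cons]; omega)⟩
    · refine ⟨Walk.cons (lineGraph_adj_iff_exists.2 ⟨hgg, a, ha, Sym2.mem_mk_left a c⟩) Q', ?_⟩
      simp only [Walk.length_cons]
      omega

lemma line_reachable (T : SimpleGraph V) (hc : T.Connected) (g h : T.edgeSet) :
    (T.lineGraph).Reachable g h := by
  obtain ⟨P, -⟩ := (hc.exists_walk_length_eq_dist g.1.out.1 h.1.out.1)
  obtain ⟨Q, -⟩ := exists_lineWalk T P g h (Sym2.out_fst_mem _) (Sym2.out_fst_mem _)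
  exact ⟨Q⟩

lemma line_walk_bound (T : SimpleGraph V) (hc : T.Connected) :
    ∀ (g h : T.edgeSet) (Q : (T.lineGraph).Walk g h), g ≠ h →
    ∃ a b, a ∈ g.1 ∧ b ∈ h.1 ∧ T.dist a b + 1 ≤ Q.length := by
  intro g h Q
  induction Q with
  | nil => intro hgh; exact absurd rfl hgh
  | @cons g g' h hadj Q' ih =>
    intro hgh
    obtain ⟨hne, s, hsg, hsg'⟩ := lineGraph_adj_iff_exists.1 hadj
    by_cases hg'h : g' = h
    · subst hg'h
      exact ⟨s, s, hsg, hsg', by simp [Walk.length_cons, SimpleGraph.dist_self]⟩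
    · obtain ⟨a', b, ha', hb, hab⟩ := ih hg'h
      refine ⟨s, b, hsg, hb, ?_⟩
      have h1 : T.dist s b ≤ T.dist s a' + T.dist a' b := hc.dist_triangle
      have h2 : T.dist s a' ≤ 1 := edge_dist_le_one T g' hsg' ha'
      simp only [Walk.length_cons]
      omega

lemma line_dist (T : SimpleGraph V) (hc : T.Connected) (g h : T.edgeSet) (hgh : g ≠ h) :
    (T.lineGraph).dist g h = mdist T g.1 h.1 + 1 := by
  have hr : (T.lineGraph).Reachable g h := line_reachable T hc g h
  apply le_antisymm
  · obtain ⟨a, b, ha, hb, hab⟩ := exists_mdist T g.1 h.1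
    obtain ⟨P, hP⟩ := (hc.exists_walk_length_eq_dist a b)
    obtain ⟨Q, hQ⟩ := exists_lineWalk T P g h ha hb
    calc (T.lineGraph).dist g h ≤ Q.length := SimpleGraph.dist_le Q
    _ ≤ P.length + 1 := hQ
    _ = mdist T g.1 h.1 + 1 := by rw [hP, hab]
  · obtain ⟨Q, hQ⟩ := hr.exists_walk_length_eq_dist
    obtain ⟨a, b, ha, hb, hab⟩ := line_walk_bound T hc g h Q hgh
    have : mdist T g.1 h.1 ≤ T.dist a b := mdist_le T ha hb
    omega


lemma mdist_comm (T : SimpleGraph V) (a b : Sym2 V) : mdist T a b = mdist T b a := by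
  unfold mdist
  apply congrArg sInf
  ext k
  simp only [Set.mem_setOf_eq]
  constructor
  · rintro ⟨x, y, hx, hy, rfl⟩
    exact ⟨y, x, hy, hx, SimpleGraph.dist_comm⟩
  · rintro ⟨x, y, hx, hy, rfl⟩
    exact ⟨y, x, hy, hx, SimpleGraph.dist_comm⟩




lemma path_unique (hT : T.IsTree) {u v : V} (P Q : T.Walk u v)
    (hP : P.IsPath) (hQ : Q.IsPath) : P = Q := by
  have := hT.IsAcyclic.path_unique (p := ⟨P, hP⟩) (q := ⟨Q, hQ⟩)
  exact congrArg Subtype.val this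

lemma isPath_concat {u v w : V} {P : T.Walk u v} (hP : P.IsPath) (h : T.Adj v w)
    (hw : w ∉ P.support) : (P.concat h).IsPath := by
  rw [← Walk.isPath_reverse_iff, Walk.reverse_concat]
  rw [Walk.cons_isPath_iff]
  exact ⟨hP.reverse, by rwa [Walk.support_reverse, List.mem_reverse]⟩

/-- L1: in a tree, a vertex has different distances to the endpoints of an edge. -/
lemma dist_ne_of_adj (hT : T.IsTree) {p q : V} (hpq : T.Adj p q) (w : V) :
    T.dist w p ≠ T.dist w q := by
  classical
  have hc := hT.isConnected
  intro heq
  set k := T.dist w p with hk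
  obtain ⟨P, hPlen⟩ := hc.exists_walk_length_eq_dist w p
  have hPpath : P.IsPath := P.isPath_of_length_eq_dist hPlen
  by_cases hqP : q ∈ P.support
  · -- then dist w q < k
    have h1 : T.dist w q ≤ (P.takeUntil q hqP).length := SimpleGraph.dist_le _
    have h2 : T.dist q p ≤ (P.dropUntil q hqP).length := SimpleGraph.dist_le _
    have h3 : (P.takeUntil q hqP).length + (P.dropUntil q hqP).length = P.length := by
      have := congrArg Walk.length (P.take_spec hqP)
      rwa [Walk.length_append] at this
    have h4 : T.dist q p = 1 := SimpleGraph.dist_eq_one_iff_adj.2 hpq.symm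
    omega
  · obtain ⟨Q, hQlen⟩ := hc.exists_walk_length_eq_dist w q
    have hQpath : Q.IsPath := Q.isPath_of_length_eq_dist hQlen
    have hconc : (P.concat hpq).IsPath := isPath_concat hPpath hpq hqP
    have := path_unique hT (P.concat hpq) Q hconc hQpath
    have hlen := congrArg Walk.length this
    rw [Walk.length_concat] at hlen
    omega

/-- L4: two distinct neighbors of `v` cannot both be strictly closer to `w` than `v`. -/
lemma eq_of_two_sides (hT : T.IsTree) {v p q w : V} (hvp : T.Adj v p) (hvq : T.Adj v q)
    (h1 : T.dist w p < T.dist w v) (h2 : T.dist w q < T.dist w v) : p = q := by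
  classical
  have hc := hT.isConnected
  set k := T.dist w v with hk
  have hp1 : T.dist w v ≤ T.dist w p + 1 := by
    have := hc.dist_triangle (u := w) (v := p) (w := v)
    have : T.dist p v = 1 := SimpleGraph.dist_eq_one_iff_adj.2 hvp.symm
    have := hc.dist_triangle (u := w) (v := p) (w := v)
    omega
  have hq1 : T.dist w v ≤ T.dist w q + 1 := by
    have : T.dist q v = 1 := SimpleGraph.dist_eq_one_iff_adj.2 hvq.symm
    have := hc.dist_triangle (u := w) (v := q) (w := v)
    omega
  have hp2 : T.dist w p = k - 1 := by omega
  have hq2 : T.dist w q = k - 1 := by omega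
  obtain ⟨P, hPlen⟩ := hc.exists_walk_length_eq_dist w p
  obtain ⟨Q, hQlen⟩ := hc.exists_walk_length_eq_dist w q
  have hPv : (P.concat hvp.symm).length = T.dist w v := by
    rw [Walk.length_concat]; omega
  have hQv : (Q.concat hvq.symm).length = T.dist w v := by
    rw [Walk.length_concat]; omega
  have hPpath := (P.concat hvp.symm).isPath_of_length_eq_dist hPv
  have hQpath := (Q.concat hvq.symm).isPath_of_length_eq_dist hQv
  have heq := path_unique hT _ _ hPpath hQpath
  -- p ∈ support of (Q.concat hvq.symm)
  have hpmem : p ∈ (P.concat hvp.symm).support := by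
    rw [Walk.support_concat]
    rw [List.mem_append]
    exact Or.inl (Walk.end_mem_support P)
  rw [heq, Walk.support_concat, List.mem_append] at hpmem
  rcases hpmem with hpQ | hpv
  swap
  · rw [List.mem_singleton] at hpv
    exact absurd hpv.symm hvp.ne
  · -- p on shortest walk Q from w to q : dist w p + dist p q ≤ Q.length
    have h1' : T.dist w p ≤ (Q.takeUntil p hpQ).length := SimpleGraph.dist_le _
    have h2' : T.dist p q ≤ (Q.dropUntil p hpQ).length := SimpleGraph.dist_le _
    have h3' : (Q.takeUntil p hpQ).length + (Q.dropUntil p hpQ).length = Q.length := by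
      have := congrArg Walk.length (Q.take_spec hpQ)
      rwa [Walk.length_append] at this
    have : T.dist p q = 0 := by omega
    rw [hc.dist_eq_zero_iff] at this
    exact this

/-- L3: the cut lemma. An edge crossing the cut of edge `pq` must be `pq` itself. -/
lemma cut_lemma (hT : T.IsTree) {p q a b : V} (hpq : T.Adj p q)
    (ha : T.dist a p < T.dist a q) (hb : T.dist b q < T.dist b p)
    (hab : T.Adj a b) : a = p ∧ b = q := by
  classical
  have hc := hT.isConnected
  have hpq1 : T.dist p q = 1 := SimpleGraph.dist_eq_one_iff_adj.2 hpq
  have hqp1 : T.dist q p = 1 := SimpleGraph.dist_eq_one_iff_adj.2 hpq.symm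
  have hab1 : T.dist a b = 1 := SimpleGraph.dist_eq_one_iff_adj.2 hab
  have hba1 : T.dist b a = 1 := SimpleGraph.dist_eq_one_iff_adj.2 hab.symm
  -- dist a q = dist a p + 1, dist b p = dist b q + 1
  have haq : T.dist a q = T.dist a p + 1 := by
    have := hc.dist_triangle (u := a) (v := p) (w := q)
    omega
  have hbp : T.dist b p = T.dist b q + 1 := by
    have := hc.dist_triangle (u := b) (v := q) (w := p)
    omega
  have htab : T.dist a q ≤ T.dist a b + T.dist b q := hc.dist_triangle
  have htba : T.dist b p ≤ T.dist b a + T.dist a p := hc.dist_triangle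
  have habq : T.dist a p = T.dist b q := by omega
  set n := T.dist a p with hn
  -- two walks a → q of length n+1
  obtain ⟨P, hP⟩ := hc.exists_walk_length_eq_dist a p
  obtain ⟨R, hR⟩ := hc.exists_walk_length_eq_dist b q
  have h1len : (P.concat hpq).length = T.dist a q := by rw [Walk.length_concat]; omega
  have h2len : (Walk.cons hab R).length = T.dist a q := by rw [Walk.length_cons]; omega
  have h1path := (P.concat hpq).isPath_of_length_eq_dist h1len
  have h2path := (Walk.cons hab R).isPath_of_length_eq_dist h2len
  have heq := path_unique hT _ _ h1path h2path
  -- b is in the support of the cons walk, hence of P.concat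
  have hbmem : b ∈ (P.concat hpq).support := by
    rw [heq, Walk.support_cons]
    exact List.mem_cons_of_mem a (Walk.start_mem_support R)
  rw [Walk.support_concat, List.mem_append] at hbmem
  rcases hbmem with hbP | hbq
  · -- b on shortest walk P : a → p, so dist a b + dist b p ≤ n
    have h1' : T.dist a b ≤ (P.takeUntil b hbP).length := SimpleGraph.dist_le _
    have h2' : T.dist b p ≤ (P.dropUntil b hbP).length := SimpleGraph.dist_le _
    have h3' : (P.takeUntil b hbP).length + (P.dropUntil b hbP).length = P.length := by
      have := congrArg Walk.length (P.take_spec hbP)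
      rwa [Walk.length_append] at this
    omega
  · rw [List.mem_singleton] at hbq
    have hbq0 : T.dist b q = 0 := by rw [hbq]; simp [SimpleGraph.dist_self]
    have hap0 : T.dist a p = 0 := by omega
    rw [hc.dist_eq_zero_iff] at hap0
    exact ⟨hap0, hbq⟩

/-- find a crossing edge on a walk from inside to outside a set -/
lemma exists_crossing {A : Set V} : ∀ {w z : V} (P : T.Walk w z), w ∈ A → z ∉ A →
    ∃ i, i < P.length ∧ P.getVert i ∈ A ∧ P.getVert (i + 1) ∉ A := by
  intro w z P
  induction P with
  | nil => intro hw hz; exact absurd hw hz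
  | @cons w c z hwc P' ih =>
    intro hw hz
    by_cases hcA : c ∈ A
    · obtain ⟨i, hi, h1, h2⟩ := ih hcA hz
      exact ⟨i + 1, by simpa [Walk.length_cons] using Nat.succ_lt_succ hi,
        by rwa [Walk.getVert_cons_succ], by rwa [Walk.getVert_cons_succ]⟩
    · refine ⟨0, by simp [Walk.length_cons], by simpa [Walk.getVert_zero] using hw, ?_⟩
      rw [Walk.getVert_cons_succ, Walk.getVert_zero]
      exact hcA

lemma dist_start_getVert (hc : T.Connected) :
    ∀ {w z : V} (P : T.Walk w z) (i : ℕ), T.dist w (P.getVert i) ≤ i := by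
  intro w z P
  induction P with
  | nil => intro i; simp [SimpleGraph.dist_self, Walk.getVert]
  | @cons w c z hwc P' ih =>
    intro i
    cases i with
    | zero => simp [Walk.getVert_zero, SimpleGraph.dist_self]
    | succ j =>
      rw [Walk.getVert_cons_succ]
      have h1 := hc.dist_triangle (u := w) (v := c) (w := P'.getVert j)
      have h2 : T.dist w c ≤ 1 := le_of_eq (SimpleGraph.dist_eq_one_iff_adj.2 hwc)
      have := ih j
      omega

lemma dist_getVert_end (hc : T.Connected) :
    ∀ {w z : V} (P : T.Walk w z) (i : ℕ), T.dist (P.getVert i) z ≤ P.length - i := by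
  intro w z P
  induction P with
  | nil => intro i; simp [SimpleGraph.dist_self, Walk.getVert]
  | @cons w c z hwc P' ih =>
    intro i
    cases i with
    | zero =>
      rw [Walk.getVert_zero]
      have : T.dist w z ≤ (Walk.cons hwc P').length := SimpleGraph.dist_le _
      omega
    | succ j =>
      rw [Walk.getVert_cons_succ, Walk.length_cons]
      have := ih j
      omega

/-- L5: distance across the cut of an edge decomposes through the edge. -/
lemma cut_dist (hT : T.IsTree) {p q w z : V} (hpq : T.Adj p q)
    (hw : T.dist w p < T.dist w q) (hz : T.dist z q < T.dist z p) :
    T.dist w z = T.dist w p + 1 + T.dist q z := by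
  have hc := hT.isConnected
  apply le_antisymm
  · have t1 := hc.dist_triangle (u := w) (v := p) (w := z)
    have t2 := hc.dist_triangle (u := p) (v := q) (w := z)
    have : T.dist p q = 1 := SimpleGraph.dist_eq_one_iff_adj.2 hpq
    omega
  · obtain ⟨P, hP⟩ := hc.exists_walk_length_eq_dist w z
    have hwA : w ∈ {x | T.dist x p < T.dist x q} := hw
    have hzA : z ∉ {x | T.dist x p < T.dist x q} := by
      simp only [Set.mem_setOf_eq, not_lt]
      omega
    obtain ⟨i, hi, h1, h2⟩ := exists_crossing P hwA hzA
    simp only [Set.mem_setOf_eq, not_lt] at h1 h2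
    have hne : T.dist (P.getVert (i+1)) p ≠ T.dist (P.getVert (i+1)) q := by
      intro hcon
      exact dist_ne_of_adj hT hpq.symm (P.getVert (i+1)) (by omega)
    have h2' : T.dist (P.getVert (i+1)) q < T.dist (P.getVert (i+1)) p := by omega
    have hadj : T.Adj (P.getVert i) (P.getVert (i + 1)) := P.adj_getVert_succ hi
    obtain ⟨hep, heq⟩ := cut_lemma hT hpq h1 h2' hadj
    have d1 : T.dist w (P.getVert i) ≤ i := dist_start_getVert hc P i
    have d2 : T.dist (P.getVert (i+1)) z ≤ P.length - (i+1) := dist_getVert_end hc P (i+1)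
    rw [hep] at d1
    rw [heq] at d2
    omega



/-- Deadlock lemma: two mutually guarding white regions block zero forcing. -/
lemma not_zf (G : SimpleGraph V) (S B₁ B₂ : Set V) (hne : B₁.Nonempty)
    (hdisj : ∀ x, x ∈ B₁ → x ∈ B₂ → False)
    (hS : ∀ x, x ∈ B₁ ∨ x ∈ B₂ → x ∉ S)
    (hdoor₁ : ∀ u, u ∉ B₁ → u ∉ B₂ → ∀ v ∈ B₁, G.Adj u v → ∃ v' ∈ B₂, G.Adj u v')
    (hdoor₂ : ∀ u, u ∉ B₁ → u ∉ B₂ → ∀ v ∈ B₂, G.Adj u v → ∃ v' ∈ B₁, G.Adj u v') :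
    ¬ IsZeroForcingSet G S := by
  rintro ⟨m, hm⟩
  have key : ∀ n x, x ∈ B₁ ∨ x ∈ B₂ → x ∉ (zfStep G)^[n] S := by
    intro n
    induction n with
    | zero => simpa using hS
    | succ k ih =>
      intro x hx hmem
      rw [Function.iterate_succ_apply'] at hmem
      simp only [zfStep, Set.mem_union, Set.mem_setOf_eq] at hmem
      rcases hmem with hmem | ⟨u, hu, hadj, huniq⟩
      · exact ih x hx hmem
      · have hu₁ : u ∉ B₁ := fun h => ih u (Or.inl h) hu
        have hu₂ : u ∉ B₂ := fun h => ih u (Or.inr h) hu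
        rcases hx with hx | hx
        · obtain ⟨v', hv', hadj'⟩ := hdoor₁ u hu₁ hu₂ x hx hadj
          have : v' = x := huniq v' hadj' (ih v' (Or.inr hv'))
          exact hdisj x hx (this ▸ hv')
        · obtain ⟨v', hv', hadj'⟩ := hdoor₂ u hu₁ hu₂ x hx hadj
          have : v' = x := huniq v' hadj' (ih v' (Or.inl hv'))
          exact hdisj x (this ▸ hv') hx
  obtain ⟨x, hx⟩ := hne
  exact key m x (Or.inl hx) (hm ▸ Set.mem_univ x)

/-- K1: the vertex-centred side comparison. -/
lemma K1 (hT : T.IsTree) {v p : V} (hvp : T.Adj v p) (e f : T.edgeSet) {xe : V}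
    (hxe : xe ∈ e.1) (hxside : T.dist xe p < T.dist xe v)
    (hfside : ∀ b ∈ f.1, T.dist b v < T.dist b p)
    (hD : ∀ b ∈ f.1, T.dist p xe < T.dist v b ∨ e.1 = s(p, v))
    (g : T.edgeSet) (hge : g ≠ e) (hgB : ∃ w ∈ g.1, T.dist w p < T.dist w v) :
    mdist T g.1 e.1 < mdist T g.1 f.1 := by
  have hc := hT.isConnected
  obtain ⟨w, hwg, hwside⟩ := hgB
  obtain ⟨w', b, hw'g, hbf, hw'b⟩ := exists_mdist T g.1 f.1
  rw [← hw'b]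
  have hbside := hfside b hbf
  by_cases hw' : T.dist w' p < T.dist w' v
  · -- w' on p-side
    have hcd : T.dist w' b = T.dist w' p + 1 + T.dist v b :=
      cut_dist hT hvp.symm hw' hbside
    have h1 : mdist T g.1 e.1 ≤ T.dist w' xe := mdist_le T hw'g hxe
    have h2 : T.dist w' xe ≤ T.dist w' p + T.dist p xe := hc.dist_triangle
    have h3 : T.dist p xe < 1 + T.dist v b := by
      rcases hD b hbf with h | h
      · omega
      · -- e = s(p, v), so xe = p (it cannot be v)
        have hxe' : xe = p ∨ xe = v := by
          rw [h] at hxe; exact Sym2.mem_iff.1 hxe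
        rcases hxe' with rfl | rfl
        · simp only [SimpleGraph.dist_self]; omega
        · exfalso; simp only [SimpleGraph.dist_self] at hxside; omega
    omega
  · -- w' on v-side, so the crossing edge g must be s(p, v)
    have hw'v : T.dist w' v < T.dist w' p := by
      have := dist_ne_of_adj hT hvp w'
      omega
    have hww' : w ≠ w' := by
      intro h; rw [h] at hwside; omega
    have hadj : T.Adj w w' := edge_adj T g hwg hw'g hww'
    obtain ⟨rfl, rfl⟩ := cut_lemma hT hvp.symm hwside hw'v hadj
    rcases hD b hbf with h | h
    · have h1 : mdist T g.1 e.1 ≤ T.dist w xe := mdist_le T hwg hxe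
      omega
    · exfalso
      apply hge
      apply Subtype.ext
      rw [h]
      exact ((Sym2.mem_and_mem_iff (by exact hvp.symm.ne)).1 ⟨hwg, hw'g⟩)

/-- K2: the edge-centred side comparison. -/
lemma K2 (hT : T.IsTree) {p q : V} (hpq : T.Adj p q) (e f : T.edgeSet) {xe : V}
    (hxe : xe ∈ e.1)
    (hfside : ∀ b ∈ f.1, T.dist b q < T.dist b p)
    (hD : ∀ b ∈ f.1, T.dist p xe ≤ T.dist q b)
    (g : T.edgeSet) (hgB : ∀ w ∈ g.1, T.dist w p < T.dist w q) :
    mdist T g.1 e.1 < mdist T g.1 f.1 := by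
  have hc := hT.isConnected
  obtain ⟨w', b, hw'g, hbf, hw'b⟩ := exists_mdist T g.1 f.1
  rw [← hw'b]
  have hcd : T.dist w' b = T.dist w' p + 1 + T.dist q b :=
    cut_dist hT hpq (hgB w' hw'g) (hfside b hbf)
  have h1 : mdist T g.1 e.1 ≤ T.dist w' xe := mdist_le T hw'g hxe
  have h2 : T.dist w' xe ≤ T.dist w' p + T.dist p xe := hc.dist_triangle
  have h3 := hD b hbf
  omega

lemma case_even (hT : T.IsTree) (S : Set T.edgeSet)
    (e f : T.edgeSet) (v p q : V) (hvp : T.Adj v p) (hvq : T.Adj v q) (hpqne : p ≠ q)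
    (heB : ∃ w ∈ e.1, T.dist w p < T.dist w v) (hfB : ∃ w ∈ f.1, T.dist w q < T.dist w v)
    (hK1 : ∀ g : T.edgeSet, g ≠ e → (∃ w ∈ g.1, T.dist w p < T.dist w v) →
      mdist T g.1 e.1 < mdist T g.1 f.1)
    (hK1' : ∀ g : T.edgeSet, g ≠ f → (∃ w ∈ g.1, T.dist w q < T.dist w v) →
      mdist T g.1 f.1 < mdist T g.1 e.1)
    (hmd : ∀ g ∈ S, g ≠ e → g ≠ f → mdist T g.1 e.1 = mdist T g.1 f.1)
    (heS : e ∉ S) (hfS : f ∉ S) :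
    ¬ IsZeroForcingSet (T.lineGraph) S := by
  set B₁ : Set T.edgeSet := {g | ∃ w ∈ g.1, T.dist w p < T.dist w v} with hB₁
  set B₂ : Set T.edgeSet := {g | ∃ w ∈ g.1, T.dist w q < T.dist w v} with hB₂
  have hdisj : ∀ x, x ∈ B₁ → x ∈ B₂ → False := by
    intro x ⟨w₁, h1m, h1⟩ ⟨w₂, h2m, h2⟩
    by_cases hw : w₁ = w₂
    · exact hpqne (eq_of_two_sides hT hvp hvq (hw ▸ h1) h2)
    · have hw₂v : T.dist w₂ v < T.dist w₂ p := by
        by_cases hcp : T.dist w₂ p < T.dist w₂ v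
        · exact absurd (eq_of_two_sides hT hvp hvq hcp h2) hpqne
        · have := dist_ne_of_adj hT hvp w₂
          omega
      obtain ⟨hw1p, hw2v⟩ := cut_lemma hT hvp.symm h1 hw₂v (edge_adj T x h1m h2m hw)
      rw [hw2v] at h2
      simp only [SimpleGraph.dist_self] at h2
      omega
  have hSdisj : ∀ x, x ∈ B₁ ∨ x ∈ B₂ → x ∉ S := by
    rintro x (hx | hx) hxS
    · by_cases hxe : x = e
      · exact heS (hxe ▸ hxS)
      by_cases hxf : x = f
      · exact hdisj x hx (hxf ▸ hfB)
      · have := hK1 x hxe hx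
        have := hmd x hxS hxe hxf
        omega
    · by_cases hxf : x = f
      · exact hfS (hxf ▸ hxS)
      by_cases hxe : x = e
      · exact hdisj x (hxe ▸ heB) hx
      · have := hK1' x hxf hx
        have := hmd x hxS hxe hxf
        omega
  apply not_zf _ S B₁ B₂ ⟨e, heB⟩ hdisj hSdisj
  · -- door 1
    intro u hu1 hu2 v₁ hv₁ hadj
    obtain ⟨hneuv, s, hsu, hsv₁⟩ := lineGraph_adj_iff_exists.1 hadj
    obtain ⟨w, hwv₁, hwside⟩ := hv₁
    have hs_not : ¬ T.dist s p < T.dist s v := fun h => hu1 ⟨s, hsu, h⟩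
    have hsv : T.dist s v < T.dist s p := by
      have := dist_ne_of_adj hT hvp s
      omega
    have hws : w ≠ s := by
      intro h; rw [h] at hwside; omega
    obtain ⟨hwp, hsveq⟩ := cut_lemma hT hvp.symm hwside hsv (edge_adj T v₁ hwv₁ hsv₁ hws)
    have hqmem : q ∈ (⟨s(v, q), hvq⟩ : T.edgeSet).1 := Sym2.mem_mk_right v q
    have hqB₂ : (⟨s(v, q), hvq⟩ : T.edgeSet) ∈ B₂ := by
      refine ⟨q, hqmem, ?_⟩
      have : T.dist q v = 1 := SimpleGraph.dist_eq_one_iff_adj.2 hvq.symm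
      simp only [SimpleGraph.dist_self]
      omega
    refine ⟨⟨s(v, q), hvq⟩, hqB₂, lineGraph_adj_iff_exists.2 ⟨?_, v, hsveq ▸ hsu, Sym2.mem_mk_left v q⟩⟩
    intro h
    exact hu2 (h ▸ hqB₂)
  · -- door 2 (symmetric)
    intro u hu1 hu2 v₂ hv₂ hadj
    obtain ⟨hneuv, s, hsu, hsv₂⟩ := lineGraph_adj_iff_exists.1 hadj
    obtain ⟨w, hwv₂, hwside⟩ := hv₂
    have hs_not : ¬ T.dist s q < T.dist s v := fun h => hu2 ⟨s, hsu, h⟩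
    have hsv : T.dist s v < T.dist s q := by
      have := dist_ne_of_adj hT hvq s
      omega
    have hws : w ≠ s := by
      intro h; rw [h] at hwside; omega
    obtain ⟨hwq, hsveq⟩ := cut_lemma hT hvq.symm hwside hsv (edge_adj T v₂ hwv₂ hsv₂ hws)
    have hpmem : p ∈ (⟨s(v, p), hvp⟩ : T.edgeSet).1 := Sym2.mem_mk_right v p
    have hpB₁ : (⟨s(v, p), hvp⟩ : T.edgeSet) ∈ B₁ := by
      refine ⟨p, hpmem, ?_⟩
      have : T.dist p v = 1 := SimpleGraph.dist_eq_one_iff_adj.2 hvp.symm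
      simp only [SimpleGraph.dist_self]
      omega
    refine ⟨⟨s(v, p), hvp⟩, hpB₁, lineGraph_adj_iff_exists.2 ⟨?_, v, hsveq ▸ hsu, Sym2.mem_mk_left v p⟩⟩
    intro h
    exact hu1 (h ▸ hpB₁)

lemma case_odd (hT : T.IsTree) (S : Set T.edgeSet)
    (e f : T.edgeSet) (p q : V) (hpq : T.Adj p q)
    (heB : ∀ w ∈ e.1, T.dist w p < T.dist w q) (hfB : ∀ w ∈ f.1, T.dist w q < T.dist w p)
    (hgp : ∃ gp : T.edgeSet, (∀ w ∈ gp.1, T.dist w p < T.dist w q) ∧ p ∈ gp.1)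
    (hgq : ∃ gq : T.edgeSet, (∀ w ∈ gq.1, T.dist w q < T.dist w p) ∧ q ∈ gq.1)
    (hK2 : ∀ g : T.edgeSet, (∀ w ∈ g.1, T.dist w p < T.dist w q) →
      mdist T g.1 e.1 < mdist T g.1 f.1)
    (hK2' : ∀ g : T.edgeSet, (∀ w ∈ g.1, T.dist w q < T.dist w p) →
      mdist T g.1 f.1 < mdist T g.1 e.1)
    (hmd : ∀ g ∈ S, g ≠ e → g ≠ f → mdist T g.1 e.1 = mdist T g.1 f.1)
    (heS : e ∉ S) (hfS : f ∉ S) :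
    ¬ IsZeroForcingSet (T.lineGraph) S := by
  set B₁ : Set T.edgeSet := {g | ∀ w ∈ g.1, T.dist w p < T.dist w q} with hB₁
  set B₂ : Set T.edgeSet := {g | ∀ w ∈ g.1, T.dist w q < T.dist w p} with hB₂
  have hdisj : ∀ x, x ∈ B₁ → x ∈ B₂ → False := by
    intro x h1 h2
    have hm := Sym2.out_fst_mem x.1
    have := h1 _ hm
    have := h2 _ hm
    omega
  have hSdisj : ∀ x, x ∈ B₁ ∨ x ∈ B₂ → x ∉ S := by
    rintro x (hx | hx) hxS
    · by_cases hxe : x = e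
      · exact heS (hxe ▸ hxS)
      by_cases hxf : x = f
      · exact hdisj x hx (hxf ▸ hfB)
      · have := hK2 x hx
        have := hmd x hxS hxe hxf
        omega
    · by_cases hxf : x = f
      · exact hfS (hxf ▸ hxS)
      by_cases hxe : x = e
      · exact hdisj x (hxe ▸ heB) hx
      · have := hK2' x hx
        have := hmd x hxS hxe hxf
        omega
  have crossing : ∀ u : T.edgeSet, u ∉ B₁ → u ∉ B₂ → p ∈ u.1 ∧ q ∈ u.1 := by
    intro u hu1 hu2
    rw [hB₁, Set.mem_setOf_eq] at hu1
    rw [hB₂, Set.mem_setOf_eq] at hu2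
    push_neg at hu1 hu2
    obtain ⟨w₀, hw₀u, hw₀⟩ := hu1
    obtain ⟨w₁, hw₁u, hw₁⟩ := hu2
    have hw₀' : T.dist w₀ q < T.dist w₀ p := by
      have := dist_ne_of_adj hT hpq w₀
      omega
    have hw₁' : T.dist w₁ p < T.dist w₁ q := by
      have := dist_ne_of_adj hT hpq w₁
      omega
    have hne : w₁ ≠ w₀ := by intro h; rw [h] at hw₁'; omega
    obtain ⟨h1, h2⟩ := cut_lemma hT hpq hw₁' hw₀' (edge_adj T u hw₁u hw₀u hne)
    exact ⟨h1 ▸ hw₁u, h2 ▸ hw₀u⟩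
  apply not_zf _ S B₁ B₂ ⟨e, heB⟩ hdisj hSdisj
  · intro u hu1 hu2 v₁ hv₁ hadj
    obtain ⟨gq, hgqB, hqgq⟩ := hgq
    refine ⟨gq, hgqB, lineGraph_adj_iff_exists.2 ⟨?_, q, (crossing u hu1 hu2).2, hqgq⟩⟩
    intro h
    exact hu2 (h ▸ hgqB)
  · intro u hu1 hu2 v₂ hv₂ hadj
    obtain ⟨gp, hgpB, hpgp⟩ := hgp
    refine ⟨gp, hgpB, lineGraph_adj_iff_exists.2 ⟨?_, p, (crossing u hu1 hu2).1, hpgp⟩⟩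
    intro h
    exact hu1 (h ▸ hgpB)


end ZFAux


open ZFAux in
lemma ZFAux.zf_resolving {V : Type*} (T : SimpleGraph V) (hT : T.IsTree)
    (S : Set T.edgeSet) (hzf : IsZeroForcingSet T.lineGraph S) :
    IsResolvingSet T.lineGraph S := by
  classical
  have hc := hT.isConnected
  intro e f hef
  by_contra hcon
  push_neg at hcon
  have heS : e ∉ S := by
    intro h
    have h0 := hcon e h
    rw [SimpleGraph.dist_self, line_dist T hc f e (Ne.symm hef)] at h0
    omega
  have hfS : f ∉ S := by
    intro h
    have h0 := hcon f h
    rw [SimpleGraph.dist_self, line_dist T hc e f hef] at h0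
    omega
  have hmd : ∀ g ∈ S, g ≠ e → g ≠ f → mdist T g.1 e.1 = mdist T g.1 f.1 := by
    intro g hg hge hgf
    have h1 := hcon g hg
    rw [line_dist T hc e g (Ne.symm hge), line_dist T hc f g (Ne.symm hgf)] at h1
    rw [mdist_comm T g.1 e.1, mdist_comm T g.1 f.1]
    omega
  obtain ⟨x, y, hxe, hyf, hxy⟩ := exists_mdist T e.1 f.1
  obtain ⟨m, hmdef⟩ : ∃ m, m = mdist T e.1 f.1 := ⟨_, rfl⟩
  rw [← hmdef] at hxy
  have hmin : ∀ a ∈ e.1, ∀ b ∈ f.1, m ≤ T.dist a b := by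
    intro a ha b hb
    rw [hmdef]
    exact mdist_le T ha hb
  obtain ⟨W, hWl⟩ := hc.exists_walk_length_eq_dist x y
  rw [hxy] at hWl
  have anchor : ∀ i, i ≤ m → T.dist x (W.getVert i) = i ∧ T.dist (W.getVert i) y = m - i := by
    intro i hi
    have a1 := dist_start_getVert hc W i
    have a2 := dist_getVert_end hc W i
    have a3 : T.dist x y ≤ T.dist x (W.getVert i) + T.dist (W.getVert i) y := hc.dist_triangle
    rw [hWl] at a2
    omega
  rcases Nat.even_or_odd m with ⟨t, ht⟩ | ⟨t, ht⟩
  · by_cases ht0 : t = 0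
    · -- m = 0 : e and f share the vertex x
      have hxy0 : x = y := by
        apply (hc.dist_eq_zero_iff).1
        omega
      have hyf' : x ∈ f.1 := by rw [hxy0]; exact hyf
      obtain ⟨p, hpe, hspec_e⟩ : ∃ p, p ∈ e.1 ∧ s(x, p) = e.1 :=
        ⟨Sym2.Mem.other hxe, Sym2.other_mem hxe, Sym2.other_spec hxe⟩
      obtain ⟨q, hqf, hspec_f⟩ : ∃ q, q ∈ f.1 ∧ s(x, q) = f.1 :=
        ⟨Sym2.Mem.other hyf', Sym2.other_mem hyf', Sym2.other_spec hyf'⟩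
      have hAvp : T.Adj x p := by
        have h2 := e.2
        rw [← hspec_e, SimpleGraph.mem_edgeSet] at h2
        exact h2
      have hAvq : T.Adj x q := by
        have h2 := f.2
        rw [← hspec_f, SimpleGraph.mem_edgeSet] at h2
        exact h2
      have hpqne : p ≠ q := by
        intro h
        apply hef
        apply Subtype.ext
        rw [← hspec_e, ← hspec_f, h]
      have dpx : T.dist p x = 1 := SimpleGraph.dist_eq_one_iff_adj.2 hAvp.symm
      have dqx : T.dist q x = 1 := SimpleGraph.dist_eq_one_iff_adj.2 hAvq.symm
      have dxp : T.dist x p = 1 := SimpleGraph.dist_eq_one_iff_adj.2 hAvp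
      have dxq : T.dist x q = 1 := SimpleGraph.dist_eq_one_iff_adj.2 hAvq
      have dpp : T.dist p p = 0 := SimpleGraph.dist_self (G := T) (v := p)
      have dqq : T.dist q q = 0 := SimpleGraph.dist_self (G := T) (v := q)
      have dxx : T.dist x x = 0 := SimpleGraph.dist_self (G := T) (v := x)
      have hfside : ∀ b ∈ f.1, T.dist b x < T.dist b p := by
        intro b hbf
        have hb : b = x ∨ b = q := by
          rw [← hspec_f] at hbf
          exact Sym2.mem_iff.1 hbf
        rcases hb with hb | hb
        · rw [hb]; omega
        · rw [hb]
          have hne := dist_ne_of_adj hT hAvp.symm q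
          by_contra hnot
          have h0 : T.dist q p = 0 := by omega
          rw [hc.dist_eq_zero_iff] at h0
          exact hpqne h0.symm
      have heside : ∀ a ∈ e.1, T.dist a x < T.dist a q := by
        intro a hae
        have hb : a = x ∨ a = p := by
          rw [← hspec_e] at hae
          exact Sym2.mem_iff.1 hae
        rcases hb with hb | hb
        · rw [hb]; omega
        · rw [hb]
          have hne := dist_ne_of_adj hT hAvq.symm p
          by_contra hnot
          have h0 : T.dist p q = 0 := by omega
          rw [hc.dist_eq_zero_iff] at h0
          exact hpqne h0
      have hK1 : ∀ g : T.edgeSet, g ≠ e → (∃ w ∈ g.1, T.dist w p < T.dist w x) →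
          mdist T g.1 e.1 < mdist T g.1 f.1 := by
        intro g hge hgB
        refine K1 hT hAvp e f hpe (by omega) hfside (fun b hb => Or.inr ?_) g hge hgB
        rw [← hspec_e]
        exact Sym2.eq_swap.symm
      have hK1' : ∀ g : T.edgeSet, g ≠ f → (∃ w ∈ g.1, T.dist w q < T.dist w x) →
          mdist T g.1 f.1 < mdist T g.1 e.1 := by
        intro g hgf hgB
        refine K1 hT hAvq f e hqf (by omega) heside (fun a ha => Or.inr ?_) g hgf hgB
        rw [← hspec_f]
        exact Sym2.eq_swap.symm
      exact absurd hzf (case_even hT S e f x p q hAvp hAvq hpqne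
        ⟨p, hpe, by omega⟩ ⟨q, hqf, by omega⟩ hK1 hK1' hmd heS hfS)
    · -- m = 2t, t ≥ 1
      obtain ⟨p, hpdef⟩ : ∃ a, a = W.getVert (t - 1) := ⟨_, rfl⟩
      obtain ⟨v, hvdef⟩ : ∃ a, a = W.getVert t := ⟨_, rfl⟩
      obtain ⟨q, hqdef⟩ : ∃ a, a = W.getVert (t + 1) := ⟨_, rfl⟩
      obtain ⟨axp, apy⟩ := anchor (t - 1) (by omega)
      obtain ⟨axv, avy⟩ := anchor t (by omega)
      obtain ⟨axq, aqy⟩ := anchor (t + 1) (by omega)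
      rw [← hpdef] at axp apy
      rw [← hvdef] at axv avy
      rw [← hqdef] at axq aqy
      have hm1 : m - (t - 1) = t + 1 := by omega
      have hm2 : m - t = t := by omega
      have hm3 : m - (t + 1) = t - 1 := by omega
      rw [hm1] at apy
      rw [hm2] at avy
      rw [hm3] at aqy
      have hpv : T.Adj p v := by
        have hlt : t - 1 < W.length := by omega
        have h2 := W.adj_getVert_succ hlt
        rw [show t - 1 + 1 = t by omega] at h2
        rw [hpdef, hvdef]
        exact h2
      have hvq : T.Adj v q := by
        have hlt : t < W.length := by omega
        rw [hvdef, hqdef]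
        exact W.adj_getVert_succ hlt
      have hvp : T.Adj v p := hpv.symm
      have hpqne : p ≠ q := by
        intro h
        rw [h, axq] at axp
        omega
      have hvb : ∀ b ∈ f.1, t ≤ T.dist v b := by
        intro b hb
        have h1 := hmin x hxe b hb
        have h2 : T.dist x b ≤ T.dist x v + T.dist v b := hc.dist_triangle
        omega
      have hpb : ∀ b ∈ f.1, t + 1 ≤ T.dist p b := by
        intro b hb
        have h1 := hmin x hxe b hb
        have h2 : T.dist x b ≤ T.dist x p + T.dist p b := hc.dist_triangle
        omega
      have hva : ∀ a ∈ e.1, t ≤ T.dist v a := by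
        intro a ha
        have h1 := hmin a ha y hyf
        have h2 : T.dist a y ≤ T.dist a v + T.dist v y := hc.dist_triangle
        have h3 : T.dist a v = T.dist v a := SimpleGraph.dist_comm
        omega
      have hfside : ∀ b ∈ f.1, T.dist b v < T.dist b p := by
        intro b hb
        have hyv : T.dist y v < T.dist y p := by
          have h1 : T.dist y v = T.dist v y := SimpleGraph.dist_comm
          have h2 : T.dist y p = T.dist p y := SimpleGraph.dist_comm
          omega
        by_cases hby : b = y
        · rw [hby]; exact hyv
        · by_contra hnot
          have hne := dist_ne_of_adj hT hvp b
          have hblt : T.dist b p < T.dist b v := by omega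
          obtain ⟨hb_p, hy_v⟩ := cut_lemma hT hvp.symm hblt hyv (edge_adj T f hb hyf hby)
          rw [hy_v, axv] at hxy
          omega
      have heside : ∀ a ∈ e.1, T.dist a v < T.dist a q := by
        intro a ha
        have hxv : T.dist x v < T.dist x q := by omega
        by_cases hax : a = x
        · rw [hax]; exact hxv
        · by_contra hnot
          have hne := dist_ne_of_adj hT hvq a
          have halt : T.dist a q < T.dist a v := by omega
          obtain ⟨ha_q, hx_v⟩ := cut_lemma hT hvq.symm halt hxv (edge_adj T e ha hxe hax)
          rw [hx_v] at axv
          have : T.dist v v = 0 := SimpleGraph.dist_self (G := T) (v := v)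
          omega
      have hK1 : ∀ g : T.edgeSet, g ≠ e → (∃ w ∈ g.1, T.dist w p < T.dist w v) →
          mdist T g.1 e.1 < mdist T g.1 f.1 := by
        intro g hge hgB
        refine K1 hT hvp e f hxe (by omega) hfside (fun b hb => Or.inl ?_) g hge hgB
        have h1 := hvb b hb
        have h2 : T.dist p x = T.dist x p := SimpleGraph.dist_comm
        omega
      have hK1' : ∀ g : T.edgeSet, g ≠ f → (∃ w ∈ g.1, T.dist w q < T.dist w v) →
          mdist T g.1 f.1 < mdist T g.1 e.1 := by
        intro g hgf hgB
        refine K1 hT hvq f e hyf ?_ heside (fun a ha => Or.inl ?_) g hgf hgB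
        · have h1 : T.dist y q = T.dist q y := SimpleGraph.dist_comm
          have h2 : T.dist y v = T.dist v y := SimpleGraph.dist_comm
          omega
        · have h1 := hva a ha
          have h2 : T.dist q y = T.dist y q := SimpleGraph.dist_comm
          omega
      refine absurd hzf (case_even hT S e f v p q hvp hvq hpqne ⟨x, hxe, by omega⟩
        ⟨y, hyf, ?_⟩ hK1 hK1' hmd heS hfS)
      have h1 : T.dist y q = T.dist q y := SimpleGraph.dist_comm
      have h2 : T.dist y v = T.dist v y := SimpleGraph.dist_comm
      omega
  · -- m = 2t + 1
    obtain ⟨p, hpdef⟩ : ∃ a, a = W.getVert t := ⟨_, rfl⟩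
    obtain ⟨q, hqdef⟩ : ∃ a, a = W.getVert (t + 1) := ⟨_, rfl⟩
    obtain ⟨axp, apy⟩ := anchor t (by omega)
    obtain ⟨axq, aqy⟩ := anchor (t + 1) (by omega)
    rw [← hpdef] at axp apy
    rw [← hqdef] at axq aqy
    have hm1 : m - t = t + 1 := by omega
    have hm2 : m - (t + 1) = t := by omega
    rw [hm1] at apy
    rw [hm2] at aqy
    have hpq : T.Adj p q := by
      rw [hpdef, hqdef]
      exact W.adj_getVert_succ (by omega)
    have heB : ∀ a ∈ e.1, T.dist a p < T.dist a q := by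
      intro a ha
      by_cases hax : a = x
      · rw [hax]; omega
      · by_contra hnot
        have hne := dist_ne_of_adj hT hpq a
        have halt : T.dist a q < T.dist a p := by omega
        have hxside : T.dist x p < T.dist x q := by omega
        obtain ⟨hx_p, ha_q⟩ := cut_lemma hT hpq hxside halt (edge_adj T e hxe ha (Ne.symm hax))
        have h1 := hmin a ha y hyf
        rw [ha_q] at h1
        omega
    have hfB : ∀ b ∈ f.1, T.dist b q < T.dist b p := by
      intro b hb
      have hyside : T.dist y q < T.dist y p := by
        have h1 : T.dist y q = T.dist q y := SimpleGraph.dist_comm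
        have h2 : T.dist y p = T.dist p y := SimpleGraph.dist_comm
        omega
      by_cases hby : b = y
      · rw [hby]; exact hyside
      · by_contra hnot
        have hne := dist_ne_of_adj hT hpq b
        have hblt : T.dist b p < T.dist b q := by omega
        obtain ⟨hb_p, hy_q⟩ := cut_lemma hT hpq hblt hyside (edge_adj T f hb hyf hby)
        have h1 := hmin x hxe b hb
        rw [hb_p] at h1
        omega
    have hK2 : ∀ g : T.edgeSet, (∀ w ∈ g.1, T.dist w p < T.dist w q) →
        mdist T g.1 e.1 < mdist T g.1 f.1 := by
      intro g hgB
      refine K2 hT hpq e f hxe hfB (fun b hb => ?_) g hgB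
      have h1 := hmin x hxe b hb
      have h2 : T.dist x b ≤ T.dist x q + T.dist q b := hc.dist_triangle
      have h3 : T.dist p x = T.dist x p := SimpleGraph.dist_comm
      omega
    have hK2' : ∀ g : T.edgeSet, (∀ w ∈ g.1, T.dist w q < T.dist w p) →
        mdist T g.1 f.1 < mdist T g.1 e.1 := by
      intro g hgB
      refine K2 hT hpq.symm f e hyf heB (fun a ha => ?_) g hgB
      have h1 := hmin a ha y hyf
      have h2 : T.dist a y ≤ T.dist a p + T.dist p y := hc.dist_triangle
      have h3 : T.dist q y = T.dist y q := SimpleGraph.dist_comm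
      have h4 : T.dist p a = T.dist a p := SimpleGraph.dist_comm
      omega
    have hgp : ∃ gp : T.edgeSet, (∀ w ∈ gp.1, T.dist w p < T.dist w q) ∧ p ∈ gp.1 := by
      by_cases ht0 : t = 0
      · refine ⟨e, heB, ?_⟩
        have hx : p = x := by rw [hpdef, ht0, Walk.getVert_zero]
        rw [hx]; exact hxe
      · obtain ⟨axz, azy⟩ := anchor (t - 1) (by omega)
        obtain ⟨z, hzdef⟩ : ∃ a, a = W.getVert (t - 1) := ⟨_, rfl⟩
        rw [← hzdef] at axz azy
        have hzp : T.Adj z p := by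
          have hlt : t - 1 < W.length := by omega
          have h2 := W.adj_getVert_succ hlt
          rw [show t - 1 + 1 = t by omega] at h2
          rw [hzdef, hpdef]
          exact h2
        refine ⟨⟨s(z, p), hzp⟩, ?_, Sym2.mem_mk_right z p⟩
        intro w hw
        rcases Sym2.mem_iff.1 hw with hw' | hw'
        · rw [hw']
          have h1 : T.dist z p = 1 := SimpleGraph.dist_eq_one_iff_adj.2 hzp
          have h2 : T.dist x q ≤ T.dist x z + T.dist z q := hc.dist_triangle
          omega
        · rw [hw']
          have h1 : T.dist p q = 1 := SimpleGraph.dist_eq_one_iff_adj.2 hpq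
          have h2 : T.dist p p = 0 := SimpleGraph.dist_self (G := T) (v := p)
          omega
    have hgq : ∃ gq : T.edgeSet, (∀ w ∈ gq.1, T.dist w q < T.dist w p) ∧ q ∈ gq.1 := by
      by_cases ht0 : t = 0
      · refine ⟨f, hfB, ?_⟩
        have hy : q = y := by
          rw [hqdef, show t + 1 = W.length by omega, Walk.getVert_length]
        rw [hy]; exact hyf
      · obtain ⟨axz, azy⟩ := anchor (t + 2) (by omega)
        obtain ⟨z, hzdef⟩ : ∃ a, a = W.getVert (t + 2) := ⟨_, rfl⟩
        rw [← hzdef] at axz azy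
        have hm4 : m - (t + 2) = t - 1 := by omega
        rw [hm4] at azy
        have hqz : T.Adj q z := by
          rw [hqdef, hzdef]
          exact W.adj_getVert_succ (by omega)
        refine ⟨⟨s(q, z), hqz⟩, ?_, Sym2.mem_mk_left q z⟩
        intro w hw
        rcases Sym2.mem_iff.1 hw with hw' | hw'
        · rw [hw']
          have h1 : T.dist q p = 1 := SimpleGraph.dist_eq_one_iff_adj.2 hpq.symm
          have h2 : T.dist q q = 0 := SimpleGraph.dist_self (G := T) (v := q)
          omega
        · rw [hw']
          have h1 : T.dist z q = T.dist q z := SimpleGraph.dist_comm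
          have h2 : T.dist q z = 1 := SimpleGraph.dist_eq_one_iff_adj.2 hqz
          have h3 : T.dist p y ≤ T.dist p z + T.dist z y := hc.dist_triangle
          have h4 : T.dist p z = T.dist z p := SimpleGraph.dist_comm
          omega
    exact absurd hzf (case_odd hT S e f p q hpq heB hfB hgp hgq hK2 hK2' hmd heS hfS)

/-- For any tree `T` of order at least 2, `dim(L(T)) ≤ Z(L(T))`. -/
theorem metricDim_lineGraph_le_zeroForcingNum_lineGraph_of_isTree {V : Type*}
    [Fintype V] (T : SimpleGraph V) (hT : T.IsTree) (hn : 2 ≤ Fintype.card V) :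
    metricDim T.lineGraph ≤ zeroForcingNum T.lineGraph := by
  classical
  have hzne : {k | ∃ S : Set T.edgeSet, S.ncard = k ∧ IsZeroForcingSet T.lineGraph S}.Nonempty :=
    ⟨(Set.univ : Set T.edgeSet).ncard, Set.univ, rfl, 0, by simp⟩
  obtain ⟨S, hScard, hSzf⟩ := Nat.sInf_mem hzne
  exact Nat.sInf_le ⟨S, hScard, ZFAux.zf_resolving T hT S hSzf⟩
end

section
/- Let G be a connected graph of order n ≥ 5 that contains a Hamiltonian path and satisfies |E(G)| ≥ 2(n − 2). Then the metric dimension of the line graph of G is at most the zero forcing number of the line graph of G: dim(L(G)) ≤ Z(L(G)). -/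
open SimpleGraph

variable {V : Type*}

set_option maxHeartbeats 4000000
set_option linter.unusedSectionVars false

lemma claim_nat' (n a b c d : ℕ) (hn : 5 ≤ n)
    (hb : b < n) (hd : d < n) (hab : a < b) (hcd : c < d)
    (hne : ¬(a = c ∧ b = d))
    (heW : ¬(b = a + 1 ∧ a + 3 ≤ n))
    (hfW : ¬(d = c + 1 ∧ c + 3 ≤ n))
    (hexc : 6 ≤ n ∨ (¬(a = 0 ∧ b = 2 ∧ c = 1 ∧ d = 3) ∧ ¬(c = 0 ∧ d = 2 ∧ a = 1 ∧ b = 3))) :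
    ∃ i, i + 3 ≤ n ∧
      (((i = a ∨ i = b ∨ i + 1 = a ∨ i + 1 = b) ∧ ¬(i = c ∨ i = d ∨ i + 1 = c ∨ i + 1 = d)) ∨
       ((i = c ∨ i = d ∨ i + 1 = c ∨ i + 1 = d) ∧ ¬(i = a ∨ i = b ∨ i + 1 = a ∨ i + 1 = b))) := by
  by_cases hXa : 1 ≤ a ∧ a ≠ c ∧ a ≠ d ∧ a - 1 ≠ c ∧ a - 1 ≠ d
  · exact ⟨a - 1, by omega⟩
  by_cases hXb : b + 2 ≤ n ∧ b ≠ c ∧ b ≠ d ∧ b - 1 ≠ c ∧ b - 1 ≠ d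
  · exact ⟨b - 1, by omega⟩
  by_cases hXc : 1 ≤ c ∧ c ≠ a ∧ c ≠ b ∧ c - 1 ≠ a ∧ c - 1 ≠ b
  · exact ⟨c - 1, by omega⟩
  by_cases hXd : d + 2 ≤ n ∧ d ≠ a ∧ d ≠ b ∧ d - 1 ≠ a ∧ d - 1 ≠ b
  · exact ⟨d - 1, by omega⟩
  have Pa : a = 0 ∨ a = c ∨ a = d ∨ (1 ≤ a ∧ a - 1 = c) ∨ (1 ≤ a ∧ a - 1 = d) := by omega
  have Pb : b + 2 > n ∨ b = c ∨ b = d ∨ b - 1 = c ∨ b - 1 = d := by omega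
  have Pc : c = 0 ∨ c = a ∨ c = b ∨ (1 ≤ c ∧ c - 1 = a) ∨ (1 ≤ c ∧ c - 1 = b) := by omega
  have Pd : d + 2 > n ∨ d = a ∨ d = b ∨ d - 1 = a ∨ d - 1 = b := by omega
  clear hXa hXb hXc hXd
  rcases Pa with h1 | h1 | h1 | h1 | h1 <;> rcases Pb with h2 | h2 | h2 | h2 | h2 <;>
    rcases Pc with h3 | h3 | h3 | h3 | h3 <;> rcases Pd with h4 | h4 | h4 | h4 | h4 <;>
    first
      | exact ⟨0, by omega⟩
      | exact ⟨1, by omega⟩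
      | exact ⟨2, by omega⟩
      | exact ⟨3, by omega⟩

lemma sym2_eq_of_two_mem {u w : V} {e f : Sym2 V} (hu : u ∈ e) (hu' : u ∈ f)
    (hw : w ∈ e) (hw' : w ∈ f) (hne : u ≠ w) : e = f := by
  rw [(Sym2.mem_and_mem_iff hne).mp ⟨hu, hw⟩, (Sym2.mem_and_mem_iff hne).mp ⟨hu', hw'⟩]

lemma zf_card_bound [Fintype V] [DecidableEq V] (G : SimpleGraph V)
    (S : Set ↥G.edgeSet) (hS : IsZeroForcingSet G.lineGraph S) :
    G.edgeSet.ncard ≤ S.ncard + (Fintype.card V - 2) := by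
  classical
  obtain ⟨N, hN⟩ := hS
  set H := G.lineGraph with hH
  set Seq : ℕ → Set ↥G.edgeSet := fun t => (zfStep H)^[t] S with hSeq
  have hstep : ∀ t, Seq (t + 1) = zfStep H (Seq t) := fun t =>
    Function.iterate_succ_apply' _ _ _
  have hmono : ∀ {t t'}, t ≤ t' → Seq t ⊆ Seq t' := by
    intro t t' h
    induction h with
    | refl => exact subset_rfl
    | step _ ih => exact ih.trans (by rw [hstep]; exact Set.subset_union_left)
  have hex : ∀ x : ↥G.edgeSet, ∃ t, x ∈ Seq t := fun x => ⟨N, by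
    show x ∈ (zfStep H)^[N] S
    rw [hN]; exact Set.mem_univ x⟩
  set T : ↥G.edgeSet → ℕ := fun x => Nat.find (hex x) with hT
  have hTmem : ∀ x, x ∈ Seq (T x) := fun x => Nat.find_spec (hex x)
  have hTmin : ∀ x t, t < T x → x ∉ Seq t := fun x t ht => Nat.find_min (hex x) ht
  have hSeq0 : Seq 0 = S := rfl
  have hTpos : ∀ x, x ∉ S → T x ≠ 0 := by
    intro x hx h
    exact hx (by rw [← hSeq0, ← h]; exact hTmem x)
  have hforce : ∀ x : ↥G.edgeSet, x ∉ S → ∃ u, u ∈ Seq (T x - 1) ∧ H.Adj u x ∧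
      (∀ w, H.Adj u w → w ∉ Seq (T x - 1) → w = x) := by
    intro x hx
    have h0 : T x ≠ 0 := hTpos x hx
    have hx2 : x ∉ Seq (T x - 1) := hTmin x (T x - 1) (by omega)
    have hx1 : x ∈ Seq (T x) := hTmem x
    have heq : Seq (T x) = zfStep H (Seq (T x - 1)) := by
      conv_lhs => rw [show T x = (T x - 1) + 1 by omega]
      exact hstep _
    rw [heq] at hx1
    rcases hx1 with h | ⟨u, hu, hadj, huniq⟩
    · exact absurd h hx2
    · exact ⟨u, hu, hadj, huniq⟩
  choose F hF1 hF2 hF3 using hforce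
  have hjunc : ∀ x (h : x ∉ S), ∃ z : V, z ∈ (↑(F x h) : Sym2 V) ∧ z ∈ (↑x : Sym2 V) :=
    fun x h => (lineGraph_adj_iff_exists.mp (hF2 x h)).2
  choose J hJ1 hJ2 using hjunc
  -- core injectivity
  have hnotmem : ∀ y, y ∉ S → ∀ x (hx : x ∉ S), T x ≤ T y → y ∉ Seq (T x - 1) := by
    intro y hy x hx hle
    have : T y ≠ 0 := hTpos y hy
    have h1 : y ∉ Seq (T y - 1) := hTmin y _ (by omega)
    exact fun h => h1 (hmono (by omega) h)
  have hinj_core : ∀ x y (hx : x ∉ S) (hy : y ∉ S), T x ≤ T y → J x hx = J y hy → x = y := by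
    intro x y hx hy hle hJeq
    by_contra hne
    have hyF : y ≠ F x hx := by
      intro h
      have h1 : y ∉ Seq (T y - 1) := hTmin y (T y - 1) (by have := hTpos y hy; omega)
      have h2 : (F x hx) ∈ Seq (T y - 1) := hmono (by omega) (hF1 x hx)
      rw [← h] at h2; exact h1 h2
    have hadj : H.Adj (F x hx) y := lineGraph_adj_iff_exists.mpr
      ⟨fun h => hyF h.symm, ⟨J x hx, hJ1 x hx, hJeq ▸ hJ2 y hy⟩⟩
    have := hF3 x hx y hadj (hnotmem y hy x hx hle)
    exact hne this.symm
  -- case on forced set empty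
  rcases Set.eq_empty_or_nonempty (Sᶜ : Set ↥G.edgeSet) with hemp | hne
  · have h1 : S.ncard + (Sᶜ : Set ↥G.edgeSet).ncard = Nat.card ↥G.edgeSet :=
      S.ncard_add_ncard_compl
    rw [hemp, Set.ncard_empty] at h1
    have h2 : Nat.card ↥G.edgeSet = G.edgeSet.ncard := Nat.card_coe_set_eq _
    omega
  · obtain ⟨x₀, hx₀S, hx₀min⟩ := Set.exists_min_image _ T (Set.toFinite _) hne
    obtain ⟨x₁, hx₁S, hx₁max⟩ := Set.exists_max_image _ T (Set.toFinite _) hne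
    rw [Set.mem_compl_iff] at hx₀S hx₁S
    -- Seq (T x₀ - 1) = S
    have hS0 : Seq (T x₀ - 1) ⊆ S := by
      intro w hw
      by_contra hwS
      have h1 : T w ≤ T x₀ - 1 := Nat.find_le hw
      have h2 : T x₀ ≤ T w := hx₀min w hwS
      have := hTpos x₀ hx₀S
      omega
    obtain ⟨a, ha⟩ := Sym2.mem_iff_exists.mp (hJ1 x₀ hx₀S)
    have haz : J x₀ hx₀S ≠ a := by
      intro h
      have hdiag : ¬(↑(F x₀ hx₀S) : Sym2 V).IsDiag :=
        G.not_isDiag_of_mem_edgeSet (F x₀ hx₀S).2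
      rw [ha, Sym2.mk_isDiag_iff] at hdiag
      exact hdiag h
    obtain ⟨d, hd⟩ := Sym2.mem_iff_exists.mp (hJ2 x₁ hx₁S)
    have hdz : J x₁ hx₁S ≠ d := by
      intro h
      have hdd : ¬(↑x₁ : Sym2 V).IsDiag := G.not_isDiag_of_mem_edgeSet x₁.2
      rw [hd, Sym2.mk_isDiag_iff] at hdd
      exact hdd h
    have hamem : a ∈ (↑(F x₀ hx₀S) : Sym2 V) := by rw [ha]; exact Sym2.mem_mk_right _ _
    have hdmem : d ∈ (↑x₁ : Sym2 V) := by rw [hd]; exact Sym2.mem_mk_right _ _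
    -- claim A : a not in J-range
    have hclaimA : ∀ y (hy : y ∉ S), J y hy ≠ a := by
      intro y hy h
      have hya : a ∈ (↑y : Sym2 V) := h ▸ hJ2 y hy
      rcases eq_or_ne y (F x₀ hx₀S) with heq | hne'
      · exact hy (heq ▸ hS0 (hF1 x₀ hx₀S))
      · have hadj : H.Adj (F x₀ hx₀S) y := lineGraph_adj_iff_exists.mpr
          ⟨fun hh => hne' hh.symm, ⟨a, hamem, hya⟩⟩
        have hynot : y ∉ Seq (T x₀ - 1) := fun hh => hy (hS0 hh)
        have heq2 : y = x₀ := hF3 x₀ hx₀S y hadj hynot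
        subst heq2
        exact haz (h ▸ rfl)
    -- claim D : d not in J-range
    have hclaimD : ∀ y (hy : y ∉ S), J y hy ≠ d := by
      intro y hy h
      have hyd : d ∈ (↑(F y hy) : Sym2 V) := h ▸ hJ1 y hy
      have hFne : F y hy ≠ x₁ := by
        intro hh
        have h1 : x₁ ∉ Seq (T x₁ - 1) := hTmin x₁ (T x₁ - 1) (by have := hTpos x₁ hx₁S; omega)
        have h2 : (F y hy) ∈ Seq (T x₁ - 1) := by
          refine hmono ?_ (hF1 y hy)
          have := hx₁max y (by exact hy)
          omega
        rw [hh] at h2; exact h1 h2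
      have hadj : H.Adj (F y hy) x₁ := lineGraph_adj_iff_exists.mpr
        ⟨hFne, ⟨d, hyd, hdmem⟩⟩
      have hx₁not : x₁ ∉ Seq (T y - 1) :=
        hnotmem x₁ hx₁S y hy (hx₁max y hy)
      have heq2 : x₁ = y := hF3 y hy x₁ hadj hx₁not
      subst heq2
      exact hdz (h ▸ rfl)
    -- a ≠ d
    have had : a ≠ d := by
      intro h
      subst h
      have hx₁ne : x₁ ≠ F x₀ hx₀S := by
        intro hh
        exact hx₁S (hh ▸ hS0 (hF1 x₀ hx₀S))
      have hadj : H.Adj (F x₀ hx₀S) x₁ := lineGraph_adj_iff_exists.mpr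
        ⟨fun hh => hx₁ne hh.symm, ⟨a, hamem, hdmem⟩⟩
      have hx₁not : x₁ ∉ Seq (T x₀ - 1) := fun hh => hx₁S (hS0 hh)
      have heq2 : x₁ = x₀ := hF3 x₀ hx₀S x₁ hadj hx₁not
      -- now a ∈ F x₀ and a ∈ x₁ = x₀, z₀ ∈ both, a ≠ z₀ ⇒ edges equal
      have hax₀ : a ∈ (↑x₀ : Sym2 V) := heq2 ▸ hdmem
      have : (↑(F x₀ hx₀S) : Sym2 V) = ↑x₀ :=
        sym2_eq_of_two_mem hamem hax₀ (hJ1 x₀ hx₀S) (hJ2 x₀ hx₀S) (Ne.symm haz)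
      have : F x₀ hx₀S = x₀ := Subtype.ext this
      exact (lineGraph_adj_iff_exists.mp (hF2 x₀ hx₀S)).1 this
    -- counting
    set Jt : ↥G.edgeSet → V := fun x => if h : x ∉ S then J x h else a with hJt
    have hmaps : ∀ x ∈ (Sᶜ : Set ↥G.edgeSet), Jt x ∈ ({a, d}ᶜ : Set V) := by
      intro x hx
      rw [Set.mem_compl_iff] at hx ⊢
      rw [hJt]
      simp only [hx, dif_pos]
      intro hmem
      rcases hmem with h | h
      · exact hclaimA x hx h
      · exact hclaimD x hx h
    have hinj : Set.InjOn Jt (Sᶜ : Set ↥G.edgeSet) := by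
      intro x hx y hy hJeq
      rw [Set.mem_compl_iff] at hx hy
      rw [hJt] at hJeq
      simp only [hx, hy, dif_pos] at hJeq
      rcases le_total (T x) (T y) with h | h
      · exact hinj_core x y hx hy h hJeq
      · exact (hinj_core y x hy hx h hJeq.symm).symm
    have hcard1 : (Sᶜ : Set ↥G.edgeSet).ncard ≤ ({a, d}ᶜ : Set V).ncard :=
      Set.ncard_le_ncard_of_injOn Jt hmaps hinj (Set.toFinite _)
    have hcard2 : ({a, d} : Set V).ncard + ({a, d}ᶜ : Set V).ncard = Nat.card V :=
      Set.ncard_add_ncard_compl _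
    have hcard3 : ({a, d} : Set V).ncard = 2 := Set.ncard_pair had
    have hcard4 : S.ncard + (Sᶜ : Set ↥G.edgeSet).ncard = Nat.card ↥G.edgeSet :=
      S.ncard_add_ncard_compl
    have hcard5 : Nat.card ↥G.edgeSet = G.edgeSet.ncard := Nat.card_coe_set_eq _
    have hcard6 : Nat.card V = Fintype.card V := Nat.card_eq_fintype_card
    omega

-- case n = 5, W = all path edges
lemma claim_nat2 (n a b c d : ℕ) (hn : n = 5)
    (hb : b < n) (hd : d < n) (hab : a < b) (hcd : c < d)
    (hne : ¬(a = c ∧ b = d))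
    (heW : ¬(b = a + 1)) (hfW : ¬(d = c + 1)) :
    ∃ i, i + 2 ≤ n ∧
      (((i = a ∨ i = b ∨ i + 1 = a ∨ i + 1 = b) ∧ ¬(i = c ∨ i = d ∨ i + 1 = c ∨ i + 1 = d)) ∨
       ((i = c ∨ i = d ∨ i + 1 = c ∨ i + 1 = d) ∧ ¬(i = a ∨ i = b ∨ i + 1 = a ∨ i + 1 = b))) := by
  subst hn
  by_contra h
  push_neg at h
  have h1 := h 0
  have h2 := h 1
  have h3 := h 2
  have h4 := h 3
  clear h
  omega

-- case n = 5, m = 6, W = {h0, h1, h3}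
lemma claim_nat3 (a b c d : ℕ)
    (he : (a = 2 ∧ b = 3) ∨ (a = 0 ∧ b = 2) ∨ (a = 1 ∧ b = 3))
    (hf : (c = 2 ∧ d = 3) ∨ (c = 0 ∧ d = 2) ∨ (c = 1 ∧ d = 3))
    (hne : ¬(a = c ∧ b = d)) :
    ∃ i, (i = 0 ∨ i = 1 ∨ i = 3) ∧
      (((i = a ∨ i = b ∨ i + 1 = a ∨ i + 1 = b) ∧ ¬(i = c ∨ i = d ∨ i + 1 = c ∨ i + 1 = d)) ∨
       ((i = c ∨ i = d ∨ i + 1 = c ∨ i + 1 = d) ∧ ¬(i = a ∨ i = b ∨ i + 1 = a ∨ i + 1 = b))) := by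
  by_contra h
  push_neg at h
  have h1 := h 0
  have h2 := h 1
  have h3 := h 3
  clear h
  omega

section Helpers

variable [Fintype V] [DecidableEq V] (G : SimpleGraph V)

lemma sym2_exists_rep (z : Sym2 V) : ∃ x y, z = s(x, y) :=
  Sym2.ind (fun x y => ⟨x, y, rfl⟩) z

lemma resolve_of_xor (e f w : ↥G.edgeSet) (hew : e ≠ w)
    (hmeet : ∃ z : V, z ∈ (↑e : Sym2 V) ∧ z ∈ (↑w : Sym2 V))
    (hnot : ¬ ∃ z : V, z ∈ (↑f : Sym2 V) ∧ z ∈ (↑w : Sym2 V)) :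
    G.lineGraph.dist e w ≠ G.lineGraph.dist f w := by
  have h1 : G.lineGraph.dist e w = 1 :=
    SimpleGraph.dist_eq_one_iff_adj.mpr (lineGraph_adj_iff_exists.mpr ⟨hew, hmeet⟩)
  intro h
  rw [h1] at h
  exact hnot (lineGraph_adj_iff_exists.mp (SimpleGraph.dist_eq_one_iff_adj.mp h.symm)).2

lemma meets_bridge (v : ℕ → V) (n : ℕ)
    (hinj : ∀ i j, i < n → j < n → v i = v j → i = j)
    (a b i : ℕ) (ha : a < n) (hb : b < n) (hi : i + 1 < n) :
    (∃ z : V, z ∈ (s(v a, v b) : Sym2 V) ∧ z ∈ (s(v i, v (i + 1)) : Sym2 V)) ↔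
      (i = a ∨ i = b ∨ i + 1 = a ∨ i + 1 = b) := by
  constructor
  · rintro ⟨z, hz1, hz2⟩
    rw [Sym2.mem_iff] at hz1 hz2
    rcases hz1 with rfl | rfl <;> rcases hz2 with h | h
    · exact Or.inl (hinj i a (by omega) ha h.symm)
    · exact Or.inr (Or.inr (Or.inl (hinj (i + 1) a hi ha h.symm)))
    · exact Or.inr (Or.inl (hinj i b (by omega) hb h.symm))
    · exact Or.inr (Or.inr (Or.inr (hinj (i + 1) b hi hb h.symm)))
  · intro h
    rcases h with h | h | h | h
    · exact ⟨v a, Sym2.mem_mk_left _ _, h ▸ Sym2.mem_mk_left _ _⟩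
    · exact ⟨v b, Sym2.mem_mk_right _ _, h ▸ Sym2.mem_mk_left _ _⟩
    · exact ⟨v a, Sym2.mem_mk_left _ _, h ▸ Sym2.mem_mk_right _ _⟩
    · exact ⟨v b, Sym2.mem_mk_right _ _, h ▸ Sym2.mem_mk_right _ _⟩

end Helpers

section Main

variable [Fintype V] [DecidableEq V] (G : SimpleGraph V)

lemma reach_all (v : ℕ → V) (n : ℕ) (hn : 2 ≤ n)
    (hinj : ∀ i j, i < n → j < n → v i = v j → i = j)
    (hsurj : ∀ x : V, ∃ i, i < n ∧ v i = x)
    (hadj : ∀ i, i + 1 < n → G.Adj (v i) (v (i + 1)))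
    (e f : ↥G.edgeSet) : G.lineGraph.Reachable e f := by
  have hmem : ∀ i, i + 1 < n → s(v i, v (i + 1)) ∈ G.edgeSet := fun i h =>
    G.mem_edgeSet.mpr (hadj i h)
  have hchain : ∀ j (h : j + 1 < n),
      G.lineGraph.Reachable ⟨s(v 0, v 1), hmem 0 hn⟩ ⟨s(v j, v (j + 1)), hmem j h⟩ := by
    intro j
    induction j with
    | zero => intro h; exact SimpleGraph.Reachable.refl _
    | succ j ih =>
      intro h
      have hj : j + 1 < n := by omega
      refine (ih hj).trans (SimpleGraph.Adj.reachable ?_)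
      refine lineGraph_adj_iff_exists.mpr ⟨?_, ⟨v (j + 1), Sym2.mem_mk_right _ _,
        Sym2.mem_mk_left _ _⟩⟩
      intro hEq
      have h2 : s(v j, v (j + 1)) = s(v (j + 1), v (j + 2)) := congrArg Subtype.val hEq
      have h3 : v j ∈ (s(v (j + 1), v (j + 2)) : Sym2 V) := h2 ▸ Sym2.mem_mk_left _ _
      rw [Sym2.mem_iff] at h3
      rcases h3 with h3 | h3
      · have := hinj j (j + 1) (by omega) (by omega) h3; omega
      · have := hinj j (j + 2) (by omega) (by omega) h3; omega
  have hanchor : ∀ e : ↥G.edgeSet, ∃ j, ∃ (h : j + 1 < n),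
      G.lineGraph.Reachable e ⟨s(v j, v (j + 1)), hmem j h⟩ := by
    intro e
    obtain ⟨x, y, hxy⟩ := sym2_exists_rep (↑e : Sym2 V)
    obtain ⟨a, ha, rfl⟩ := hsurj x
    obtain ⟨b, hb, rfl⟩ := hsurj y
    have hne : a ≠ b := by
      intro h
      exact (G.not_isDiag_of_mem_edgeSet e.2) (by rw [hxy, h]; exact Sym2.mk_isDiag_iff.mpr rfl)
    have hj : min a b + 1 < n := by omega
    refine ⟨min a b, hj, ?_⟩
    have hvmem : v (min a b) ∈ (↑e : Sym2 V) := by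
      rw [hxy]
      rcases Nat.le_total a b with h | h
      · rw [min_eq_left h]; exact Sym2.mem_mk_left _ _
      · rw [min_eq_right h]; exact Sym2.mem_mk_right _ _
    by_cases heq : e = (⟨s(v (min a b), v (min a b + 1)), hmem _ hj⟩ : ↥G.edgeSet)
    · rw [heq]
    · exact SimpleGraph.Adj.reachable
        (lineGraph_adj_iff_exists.mpr ⟨heq, ⟨v (min a b), hvmem, Sym2.mem_mk_left _ _⟩⟩)
  obtain ⟨j1, hj1, hr1⟩ := hanchor e
  obtain ⟨j2, hj2, hr2⟩ := hanchor f
  exact (hr1.trans (hchain j1 hj1).symm).trans ((hchain j2 hj2).trans hr2.symm)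

lemma resolving_of_claim (v : ℕ → V) (n : ℕ) (hn : 5 ≤ n)
    (hinj : ∀ i j, i < n → j < n → v i = v j → i = j)
    (hsurj : ∀ x : V, ∃ i, i < n ∧ v i = x)
    (hadj : ∀ i, i + 1 < n → G.Adj (v i) (v (i + 1)))
    (I : Finset ℕ) (hI : ∀ i ∈ I, i + 1 < n)
    (hclaim : ∀ a b c d : ℕ, a < b → b < n → c < d → d < n →
      G.Adj (v a) (v b) → G.Adj (v c) (v d) → ¬(a = c ∧ b = d) →
      (∀ i ∈ I, ¬(a = i ∧ b = i + 1)) → (∀ i ∈ I, ¬(c = i ∧ d = i + 1)) →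
      ∃ i ∈ I, (((i = a ∨ i = b ∨ i + 1 = a ∨ i + 1 = b) ∧
                  ¬(i = c ∨ i = d ∨ i + 1 = c ∨ i + 1 = d)) ∨
                ((i = c ∨ i = d ∨ i + 1 = c ∨ i + 1 = d) ∧
                  ¬(i = a ∨ i = b ∨ i + 1 = a ∨ i + 1 = b)))) :
    ∃ W : Set ↥G.edgeSet, IsResolvingSet G.lineGraph W ∧ W.ncard ≤ I.card := by
  classical
  have hmem : ∀ i, i + 1 < n → s(v i, v (i + 1)) ∈ G.edgeSet := fun i h =>
    G.mem_edgeSet.mpr (hadj i h)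
  set e₀ : ↥G.edgeSet := ⟨s(v 0, v 1), hmem 0 (by omega)⟩ with he₀
  set F : ℕ → ↥G.edgeSet := fun i =>
    if h : i + 1 < n then ⟨s(v i, v (i + 1)), hmem i h⟩ else e₀ with hF
  have hFval : ∀ i ∈ I, (↑(F i) : Sym2 V) = s(v i, v (i + 1)) := by
    intro i hi
    rw [hF]
    simp only [hI i hi, dif_pos]
  refine ⟨F '' ↑I, ?_, le_trans (Set.ncard_image_le (Set.toFinite _))
    (le_of_eq (Set.ncard_coe_finset I))⟩
  intro e f hef
  -- resolve by a member of W itself if e or f in W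
  by_cases heW : e ∈ F '' ↑I
  · refine ⟨e, heW, ?_⟩
    rw [SimpleGraph.dist_self]
    have := (reach_all G v n (by omega) hinj hsurj hadj f e).pos_dist_of_ne hef.symm
    omega
  by_cases hfW : f ∈ F '' ↑I
  · refine ⟨f, hfW, ?_⟩
    have h0 : G.lineGraph.dist f f = 0 := SimpleGraph.dist_self
    have := (reach_all G v n (by omega) hinj hsurj hadj e f).pos_dist_of_ne hef
    omega
  -- extract sorted indices
  have hidx : ∀ (g : ↥G.edgeSet), ∃ a b, a < b ∧ b < n ∧ (↑g : Sym2 V) = s(v a, v b) := by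
    intro g
    obtain ⟨x, y, hxy⟩ := sym2_exists_rep (↑g : Sym2 V)
    obtain ⟨a, ha, rfl⟩ := hsurj x
    obtain ⟨b, hb, rfl⟩ := hsurj y
    have hne : a ≠ b := by
      intro h
      exact (G.not_isDiag_of_mem_edgeSet g.2) (by rw [hxy, h]; exact Sym2.mk_isDiag_iff.mpr rfl)
    rcases Nat.lt_or_ge a b with h | h
    · exact ⟨a, b, h, hb, hxy⟩
    · exact ⟨b, a, by omega, ha, by rw [hxy, Sym2.eq_swap]⟩
  obtain ⟨a, b, hab, hb, heab⟩ := hidx e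
  obtain ⟨c, d, hcd, hd, hfcd⟩ := hidx f
  have headj : G.Adj (v a) (v b) := G.mem_edgeSet.mp (heab ▸ e.2)
  have hfadj : G.Adj (v c) (v d) := G.mem_edgeSet.mp (hfcd ▸ f.2)
  have hne2 : ¬(a = c ∧ b = d) := by
    rintro ⟨rfl, rfl⟩
    exact hef (Subtype.ext (heab.trans hfcd.symm))
  have heNW : ∀ i ∈ I, ¬(a = i ∧ b = i + 1) := by
    rintro i hi ⟨rfl, rfl⟩
    exact heW ⟨a, hi, Subtype.ext ((hFval a hi).trans heab.symm)⟩
  have hfNW : ∀ i ∈ I, ¬(c = i ∧ d = i + 1) := by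
    rintro i hi ⟨rfl, rfl⟩
    exact hfW ⟨c, hi, Subtype.ext ((hFval c hi).trans hfcd.symm)⟩
  obtain ⟨i, hiI, hxor⟩ := hclaim a b c d hab hb hcd hd headj hfadj hne2 heNW hfNW
  have hib := hI i hiI
  refine ⟨F i, ⟨i, hiI, rfl⟩, ?_⟩
  have hbrE := meets_bridge v n hinj a b i (by omega) hb hib
  have hbrF := meets_bridge v n hinj c d i (by omega) hd hib
  rcases hxor with ⟨hme, hnf⟩ | ⟨hmf, hne'⟩
  · refine resolve_of_xor G e f (F i) ?_ ?_ ?_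
    · intro h; exact heW (h ▸ ⟨i, hiI, rfl⟩)
    · rw [hFval i hiI, heab]
      exact hbrE.mpr hme
    · rw [hFval i hiI, hfcd]
      exact fun hc => hnf (hbrF.mp hc)
  · refine Ne.symm (resolve_of_xor G f e (F i) ?_ ?_ ?_)
    · intro h; exact hfW (h ▸ ⟨i, hiI, rfl⟩)
    · rw [hFval i hiI, hfcd]
      exact hbrF.mpr hmf
    · rw [hFval i hiI, heab]
      exact fun hc => hne' (hbrE.mp hc)

end Main

lemma exists_resolving [Fintype V] [DecidableEq V] (G : SimpleGraph V)
    (hn : 5 ≤ Fintype.card V) (hham : HasHamiltonianPath G)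
    (hE : 2 * (Fintype.card V - 2) ≤ G.edgeSet.ncard) :
    ∃ W : Set ↥G.edgeSet, IsResolvingSet G.lineGraph W ∧
      W.ncard + Fintype.card V ≤ G.edgeSet.ncard + 2 := by
  classical
  obtain ⟨u0, w0, p, hp⟩ := hham
  set n := Fintype.card V with hncard
  set L := p.support with hL
  have hlen : L.length = n := by
    rw [hL, SimpleGraph.Walk.length_support, hp.length_eq]
    omega
  have hnd : L.Nodup := hp.isPath.support_nodup
  have hmemL : ∀ x : V, x ∈ L := fun x => hp.mem_support x
  set v : ℕ → V := fun i => L.getD i u0 with hv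
  have hvget : ∀ i (h : i < n), v i = L[i]'(by omega) := by
    intro i h
    exact L.getD_eq_getElem u0 (by omega)
  have hinj : ∀ i j, i < n → j < n → v i = v j → i = j := by
    intro i j hi hj he
    rw [hvget i hi, hvget j hj] at he
    exact (List.Nodup.getElem_inj_iff hnd).mp he
  have hsurj : ∀ x : V, ∃ i, i < n ∧ v i = x := by
    intro x
    obtain ⟨i, hl, he⟩ := List.mem_iff_getElem.mp (hmemL x)
    exact ⟨i, by omega, by rw [hvget i (by omega)]; exact he⟩
  have hadj : ∀ i, i + 1 < n → G.Adj (v i) (v (i + 1)) := by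
    intro i h
    have hc := List.isChain_iff_getElem.mp p.isChain_adj_support i (by rw [← hL]; omega)
    rw [hvget i (by omega), hvget (i + 1) (by omega)]
    simpa using hc
  have hvne : ∀ i j k l, i < n → j < n → k < n → l < n → s(v i, v j) = s(v k, v l) →
      ((i = k ∧ j = l) ∨ (i = l ∧ j = k)) := by
    intro i j k l hi hj hk hl h
    rw [Sym2.eq_iff] at h
    rcases h with ⟨h1, h2⟩ | ⟨h1, h2⟩
    · exact Or.inl ⟨hinj i k hi hk h1, hinj j l hj hl h2⟩
    · exact Or.inr ⟨hinj i l hi hl h1, hinj j k hj hk h2⟩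
  by_cases hc1 : n = 5 ∧ G.Adj (v 0) (v 2) ∧ G.Adj (v 1) (v 3)
  · obtain ⟨hn5, hc02, hc13⟩ := hc1
    by_cases hm : 7 ≤ G.edgeSet.ncard
    · -- CASE 2 : W = all n-1 path edges
      have hclaim2 : ∀ a b c d : ℕ, a < b → b < n → c < d → d < n →
          G.Adj (v a) (v b) → G.Adj (v c) (v d) → ¬(a = c ∧ b = d) →
          (∀ i ∈ Finset.range (n - 1), ¬(a = i ∧ b = i + 1)) →
          (∀ i ∈ Finset.range (n - 1), ¬(c = i ∧ d = i + 1)) →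
          ∃ i ∈ Finset.range (n - 1), (((i = a ∨ i = b ∨ i + 1 = a ∨ i + 1 = b) ∧
              ¬(i = c ∨ i = d ∨ i + 1 = c ∨ i + 1 = d)) ∨
            ((i = c ∨ i = d ∨ i + 1 = c ∨ i + 1 = d) ∧
              ¬(i = a ∨ i = b ∨ i + 1 = a ∨ i + 1 = b))) := by
        intro a b c d hab hb hcd hd headj hfadj hne2 heNW hfNW
        have heW' : ¬(b = a + 1) := fun h1 =>
          heNW a (Finset.mem_range.mpr (by omega)) ⟨rfl, h1⟩
        have hfW' : ¬(d = c + 1) := fun h1 =>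
          hfNW c (Finset.mem_range.mpr (by omega)) ⟨rfl, h1⟩
        obtain ⟨i, hii, hxor⟩ := claim_nat2 n a b c d hn5 hb hd hab hcd hne2 heW' hfW'
        exact ⟨i, Finset.mem_range.mpr (by omega), hxor⟩
      obtain ⟨W, hres, hcard⟩ := resolving_of_claim G v n hn hinj hsurj hadj
        (Finset.range (n - 1)) (fun i hi => by rw [Finset.mem_range] at hi; omega) hclaim2
      refine ⟨W, hres, ?_⟩
      rw [Finset.card_range] at hcard
      omega
    · -- CASE 3 : edge set is exactly the 6 edges
      have hm6 : G.edgeSet.ncard = 6 := by omega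
      have hsub : ({s(v 0, v 1), s(v 1, v 2), s(v 2, v 3), s(v 3, v 4), s(v 0, v 2), s(v 1, v 3)}
          : Set (Sym2 V)) ⊆ G.edgeSet := by
        intro z hz
        simp only [Set.mem_insert_iff, Set.mem_singleton_iff] at hz
        rcases hz with rfl | rfl | rfl | rfl | rfl | rfl
        · exact G.mem_edgeSet.mpr (hadj 0 (by omega))
        · exact G.mem_edgeSet.mpr (hadj 1 (by omega))
        · exact G.mem_edgeSet.mpr (hadj 2 (by omega))
        · exact G.mem_edgeSet.mpr (hadj 3 (by omega))
        · exact G.mem_edgeSet.mpr hc02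
        · exact G.mem_edgeSet.mpr hc13
      have hEcard : ({s(v 0, v 1), s(v 1, v 2), s(v 2, v 3), s(v 3, v 4), s(v 0, v 2), s(v 1, v 3)}
          : Set (Sym2 V)).ncard = 6 := by
        have hne' : ∀ i j k l, i < n → j < n → k < n → l < n →
            ¬(i = k ∧ j = l) → ¬(i = l ∧ j = k) → s(v i, v j) ≠ s(v k, v l) := by
          intro i j k l hi hj hk hl h1 h2 h
          rcases hvne i j k l hi hj hk hl h with h3 | h3
          · exact h1 h3
          · exact h2 h3
        rw [Set.ncard_insert_of_notMem, Set.ncard_insert_of_notMem,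
            Set.ncard_insert_of_notMem, Set.ncard_insert_of_notMem,
            Set.ncard_insert_of_notMem, Set.ncard_singleton]
        · simp only [Set.mem_singleton_iff]
          exact hne' 0 2 1 3 (by omega) (by omega) (by omega) (by omega) (by omega) (by omega)
        · simp only [Set.mem_insert_iff, Set.mem_singleton_iff]
          push_neg
          exact ⟨hne' 3 4 0 2 (by omega) (by omega) (by omega) (by omega) (by omega) (by omega),
                 hne' 3 4 1 3 (by omega) (by omega) (by omega) (by omega) (by omega) (by omega)⟩
        · simp only [Set.mem_insert_iff, Set.mem_singleton_iff]
          push_neg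
          refine ⟨?_, ?_, ?_⟩ <;>
            apply hne' <;> omega
        · simp only [Set.mem_insert_iff, Set.mem_singleton_iff]
          push_neg
          refine ⟨?_, ?_, ?_, ?_⟩ <;>
            apply hne' <;> omega
        · simp only [Set.mem_insert_iff, Set.mem_singleton_iff]
          push_neg
          refine ⟨?_, ?_, ?_, ?_, ?_⟩ <;>
            apply hne' <;> omega
        all_goals exact Set.toFinite _
      have hEq : ({s(v 0, v 1), s(v 1, v 2), s(v 2, v 3), s(v 3, v 4), s(v 0, v 2), s(v 1, v 3)}
          : Set (Sym2 V)) = G.edgeSet :=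
        Set.eq_of_subset_of_ncard_le hsub (by omega) (Set.toFinite _)
      have hclaim3 : ∀ a b c d : ℕ, a < b → b < n → c < d → d < n →
          G.Adj (v a) (v b) → G.Adj (v c) (v d) → ¬(a = c ∧ b = d) →
          (∀ i ∈ ({0, 1, 3} : Finset ℕ), ¬(a = i ∧ b = i + 1)) →
          (∀ i ∈ ({0, 1, 3} : Finset ℕ), ¬(c = i ∧ d = i + 1)) →
          ∃ i ∈ ({0, 1, 3} : Finset ℕ), (((i = a ∨ i = b ∨ i + 1 = a ∨ i + 1 = b) ∧
              ¬(i = c ∨ i = d ∨ i + 1 = c ∨ i + 1 = d)) ∨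
            ((i = c ∨ i = d ∨ i + 1 = c ∨ i + 1 = d) ∧
              ¬(i = a ∨ i = b ∨ i + 1 = a ∨ i + 1 = b))) := by
        intro a b c d hab hb hcd hd headj hfadj hne2 heNW hfNW
        have hclassify : ∀ x y : ℕ, x < y → y < n → G.Adj (v x) (v y) →
            (∀ i ∈ ({0, 1, 3} : Finset ℕ), ¬(x = i ∧ y = i + 1)) →
            (x = 2 ∧ y = 3) ∨ (x = 0 ∧ y = 2) ∨ (x = 1 ∧ y = 3) := by
          intro x y hxy hy hxadj hNW
          have hmem2 : s(v x, v y) ∈ ({s(v 0, v 1), s(v 1, v 2), s(v 2, v 3), s(v 3, v 4),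
              s(v 0, v 2), s(v 1, v 3)} : Set (Sym2 V)) := hEq ▸ G.mem_edgeSet.mpr hxadj
          have h0 := hNW 0 (by decide)
          have h1 := hNW 1 (by decide)
          have h3 := hNW 3 (by decide)
          simp only [Set.mem_insert_iff, Set.mem_singleton_iff] at hmem2
          rcases hmem2 with h | h | h | h | h | h <;>
            rcases hvne x y _ _ (by omega) hy (by omega) (by omega) h with ⟨h4, h5⟩ | ⟨h4, h5⟩ <;>
            omega
        have hce := hclassify a b hab hb headj heNW
        have hcf := hclassify c d hcd hd hfadj hfNW
        obtain ⟨i, hii, hxor⟩ := claim_nat3 a b c d hce hcf hne2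
        refine ⟨i, ?_, hxor⟩
        simp only [Finset.mem_insert, Finset.mem_singleton]
        omega
      obtain ⟨W, hres, hcard⟩ := resolving_of_claim G v n hn hinj hsurj hadj
        ({0, 1, 3} : Finset ℕ) (by intro i hi; fin_cases hi <;> omega) hclaim3
      refine ⟨W, hres, ?_⟩
      have h313 : ({0, 1, 3} : Finset ℕ).card = 3 := rfl
      omega
  · -- CASE 1 : W = first n-2 path edges
    have hclaim1 : ∀ a b c d : ℕ, a < b → b < n → c < d → d < n →
        G.Adj (v a) (v b) → G.Adj (v c) (v d) → ¬(a = c ∧ b = d) →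
        (∀ i ∈ Finset.range (n - 2), ¬(a = i ∧ b = i + 1)) →
        (∀ i ∈ Finset.range (n - 2), ¬(c = i ∧ d = i + 1)) →
        ∃ i ∈ Finset.range (n - 2), (((i = a ∨ i = b ∨ i + 1 = a ∨ i + 1 = b) ∧
            ¬(i = c ∨ i = d ∨ i + 1 = c ∨ i + 1 = d)) ∨
          ((i = c ∨ i = d ∨ i + 1 = c ∨ i + 1 = d) ∧
            ¬(i = a ∨ i = b ∨ i + 1 = a ∨ i + 1 = b))) := by
      intro a b c d hab hb hcd hd headj hfadj hne2 heNW hfNW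
      have heW' : ¬(b = a + 1 ∧ a + 3 ≤ n) := by
        rintro ⟨h1, h2⟩
        exact heNW a (Finset.mem_range.mpr (by omega)) ⟨rfl, h1⟩
      have hfW' : ¬(d = c + 1 ∧ c + 3 ≤ n) := by
        rintro ⟨h1, h2⟩
        exact hfNW c (Finset.mem_range.mpr (by omega)) ⟨rfl, h1⟩
      have hexc : 6 ≤ n ∨ (¬(a = 0 ∧ b = 2 ∧ c = 1 ∧ d = 3) ∧
          ¬(c = 0 ∧ d = 2 ∧ a = 1 ∧ b = 3)) := by
        rcases Nat.lt_or_ge n 6 with h6 | h6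
        · right
          constructor
          · rintro ⟨rfl, rfl, rfl, rfl⟩
            exact hc1 ⟨by omega, headj, hfadj⟩
          · rintro ⟨rfl, rfl, rfl, rfl⟩
            exact hc1 ⟨by omega, hfadj, headj⟩
        · left; exact h6
      obtain ⟨i, hii, hxor⟩ := claim_nat' n a b c d hn hb hd hab hcd hne2 heW' hfW' hexc
      exact ⟨i, Finset.mem_range.mpr (by omega), hxor⟩
    obtain ⟨W, hres, hcard⟩ := resolving_of_claim G v n hn hinj hsurj hadj
      (Finset.range (n - 2)) (fun i hi => by rw [Finset.mem_range] at hi; omega) hclaim1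
    refine ⟨W, hres, ?_⟩
    rw [Finset.card_range] at hcard
    omega

/-- If `G` is connected of order `n ≥ 5`, contains a Hamiltonian path, and has
`|E(G)| ≥ 2(n-2)` edges, then `dim(L(G)) ≤ Z(L(G))`. -/
theorem metricDim_lineGraph_le_zeroForcingNum_lineGraph_of_hamiltonianPath {V : Type*}
    [Fintype V] [DecidableEq V] (G : SimpleGraph V)
    (hn : 5 ≤ Fintype.card V) (hconn : G.Connected) (hham : HasHamiltonianPath G)
    (hE : 2 * (Fintype.card V - 2) ≤ G.edgeSet.ncard) :
    metricDim G.lineGraph ≤ zeroForcingNum G.lineGraph := by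
  classical
  obtain ⟨W, hres, hWcard⟩ := exists_resolving G hn hham hE
  have hdim : metricDim G.lineGraph ≤ W.ncard := Nat.sInf_le ⟨W, rfl, hres⟩
  have hZmem : zeroForcingNum G.lineGraph ∈
      {k | ∃ S : Set ↥G.edgeSet, S.ncard = k ∧ IsZeroForcingSet G.lineGraph S} := by
    apply Nat.sInf_mem
    exact ⟨(Set.univ : Set ↥G.edgeSet).ncard, Set.univ, rfl, 0, rfl⟩
  obtain ⟨S, hScard, hSforce⟩ := hZmem
  have hzf := zf_card_bound G S hSforce
  omega
end

section
/- Let G be a connected graph of order n that contains a Hamiltonian path. If 5 ≤ n ≤ 8 and the average degree of G is at least 3, then dim(L(G)) ≤ Z(L(G)); if n ≥ 9 and the average degree of G is at least 4, then dim(L(G)) ≤ Z(L(G)). -/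
open SimpleGraph

variable {V : Type*}

set_option linter.unusedSectionVars false
set_option linter.unusedVariables false
set_option maxHeartbeats 1000000

section AuxProofs

lemma core (n i j i' j' : ℕ) (hn : 5 ≤ n) (hij : i < j) (hj : j < n) (hij' : i' < j') (hj' : j' < n)
    (hw : ¬(j = i+1 ∧ i < n-2)) (hw' : ¬(j' = i'+1 ∧ i' < n-2))
    (h5 : n = 5 → ¬(i = 0 ∧ j = 2) ∧ ¬(i' = 0 ∧ j' = 2))
    (hne : ¬(i = i' ∧ j = j'))
    (H : ∀ k, k < n - 2 → ((i = k ∨ i = k+1 ∨ j = k ∨ j = k+1) ↔ (i' = k ∨ i' = k+1 ∨ j' = k ∨ j' = k+1))) : False := by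
  have K : ∀ k, k < n-2 → (i = k ∨ i = k+1 ∨ j = k ∨ j = k+1) →
      ((k ≤ i' ∧ i' ≤ k+1) ∨ (k ≤ j' ∧ j' ≤ k+1)) := fun k hk h => by
    rcases (H k hk).mp h with h'|h'|h'|h' <;> omega
  have K' : ∀ k, k < n-2 → (i' = k ∨ i' = k+1 ∨ j' = k ∨ j' = k+1) →
      ((k ≤ i ∧ i ≤ k+1) ∨ (k ≤ j ∧ j ≤ k+1)) := fun k hk h => by
    rcases (H k hk).mpr h with h'|h'|h'|h' <;> omega
  clear H
  have A1 : i < n-2 → ((i ≤ i' ∧ i' ≤ i+1) ∨ (i ≤ j' ∧ j' ≤ i+1)) := fun h => K i h (by omega)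
  have A2 : i-1 < n-2 → ((i-1 ≤ i' ∧ i' ≤ i-1+1) ∨ (i-1 ≤ j' ∧ j' ≤ i-1+1)) := fun h => K (i-1) h (by omega)
  have A3 : j < n-2 → ((j ≤ i' ∧ i' ≤ j+1) ∨ (j ≤ j' ∧ j' ≤ j+1)) := fun h => K j h (by omega)
  have A4 : j-1 < n-2 → ((j-1 ≤ i' ∧ i' ≤ j-1+1) ∨ (j-1 ≤ j' ∧ j' ≤ j-1+1)) := fun h => K (j-1) h (by omega)
  have B1 : i' < n-2 → ((i' ≤ i ∧ i ≤ i'+1) ∨ (i' ≤ j ∧ j ≤ i'+1)) := fun h => K' i' h (by omega)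
  have B2 : i'-1 < n-2 → ((i'-1 ≤ i ∧ i ≤ i'-1+1) ∨ (i'-1 ≤ j ∧ j ≤ i'-1+1)) := fun h => K' (i'-1) h (by omega)
  have B3 : j' < n-2 → ((j' ≤ i ∧ i ≤ j'+1) ∨ (j' ≤ j ∧ j ≤ j'+1)) := fun h => K' j' h (by omega)
  have B4 : j'-1 < n-2 → ((j'-1 ≤ i ∧ i ≤ j'-1+1) ∨ (j'-1 ≤ j ∧ j ≤ j'-1+1)) := fun h => K' (j'-1) h (by omega)
  clear K K'
  rcases (by omega : j < n-2 ∨ j = n-2 ∨ j = n-1) with hc|hc|hc <;>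
    rcases (by omega : j' < n-2 ∨ j' = n-2 ∨ j' = n-1) with hc'|hc'|hc'
  · clear A2 A4 B2 B4; omega
  · clear B2 B3; omega
  · clear A2 A4 B1 B2 B3 B4; omega
  · clear A2 A3; omega
  · clear A2 A3 A4 B2 B3 B4; omega
  · clear A3 B1 B3 B4; omega
  · clear B2 B4 A1 A2 A3 A4; omega
  · clear B3 A1 A3 A4; omega
  · clear A3 A4 B3 B4; omega

variable {V : Type*} [Fintype V] [DecidableEq V] {G : SimpleGraph V}

lemma aux_line_adj_of_mem {e f : G.edgeSet} (hne : e ≠ f) {z : V}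
    (hz1 : z ∈ (e : Sym2 V)) (hz2 : z ∈ (f : Sym2 V)) : G.lineGraph.Adj e f :=
  ⟨hne, ⟨z, Set.mem_inter hz1 hz2⟩⟩

lemma aux_line_reach_aux : ∀ {x y : V} (w : G.Walk x y) (e f : G.edgeSet),
    x ∈ (e : Sym2 V) → y ∈ (f : Sym2 V) → (G.lineGraph).Reachable e f := by
  intro x y w
  induction w with
  | nil =>
    intro e f hx hy
    by_cases hef : e = f
    · exact hef ▸ Reachable.refl e
    · exact (aux_line_adj_of_mem hef hx hy).reachable
  | @cons a b c hab w ih =>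
    intro e f hx hy
    have hg : s(a, b) ∈ G.edgeSet := hab
    have h1 : (G.lineGraph).Reachable e ⟨s(a,b), hg⟩ := by
      by_cases hef : e = ⟨s(a,b), hg⟩
      · exact hef ▸ Reachable.refl _
      · exact (aux_line_adj_of_mem hef hx (by simp [Sym2.mem_iff])).reachable
    exact h1.trans (ih ⟨s(a,b), hg⟩ f (by simp [Sym2.mem_iff]) hy)

lemma aux_line_reach (hconn : G.Connected) (e f : G.edgeSet) :
    (G.lineGraph).Reachable e f := by
  obtain ⟨x, hx⟩ : ∃ x, x ∈ (e : Sym2 V) := ⟨_, Sym2.out_fst_mem _⟩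
  obtain ⟨y, hy⟩ : ∃ y, y ∈ (f : Sym2 V) := ⟨(f : Sym2 V).out.1, Sym2.out_fst_mem _⟩
  exact (hconn x y).elim fun w => aux_line_reach_aux w e f hx hy

lemma aux_zf_lower (hn : 5 ≤ Fintype.card V)
    (S : Set G.edgeSet) (hS : IsZeroForcingSet G.lineGraph S) :
    G.edgeSet.ncard ≤ (Fintype.card V - 2) + S.ncard := by
  classical
  set L := G.lineGraph with hL
  set B : ℕ → Set G.edgeSet := fun k => (zfStep L)^[k] S with hB
  have hBsucc : ∀ k, B (k+1) = zfStep L (B k) := fun k => Function.iterate_succ_apply' _ _ _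
  have hmono : ∀ k, B k ⊆ B (k+1) := fun k => by
    rw [hBsucc]; exact Set.subset_union_left
  obtain ⟨M, hM⟩ := hS
  have hMuniv : B M = Set.univ := hM
  -- time function
  have hex : ∀ e : G.edgeSet, ∃ k, e ∈ B k := fun e => ⟨M, hMuniv ▸ Set.mem_univ e⟩
  set t : G.edgeSet → ℕ := fun e => Nat.find (hex e) with ht
  have htmem : ∀ e, e ∈ B (t e) := fun e => Nat.find_spec (hex e)
  have htmin : ∀ e k, e ∈ B k → t e ≤ k := fun e k hk => Nat.find_le hk
  have htlt : ∀ e k, k < t e → e ∉ B k := fun e k hk => Nat.find_min (hex e) hk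
  -- forced edges
  set F : Set G.edgeSet := Sᶜ with hF
  -- main structure lemma for forced edges
  have main : ∀ e : G.edgeSet, ∃ b a : V, e ∈ F → (b ∈ (e : Sym2 V) ∧
      (∀ g : G.edgeSet, b ∈ (g : Sym2 V) → g ≠ e → t g < t e) ∧
      (∀ g : G.edgeSet, a ∈ (g : Sym2 V) → t g < t e)) := by
    intro e
    by_cases he : e ∈ F
    swap
    · exact ⟨(e : Sym2 V).out.1, (e : Sym2 V).out.1, fun h => absurd h he⟩
    refine ?_
    have ht0 : t e ≠ 0 := by
      intro h0
      have : e ∈ B 0 := h0 ▸ htmem e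
      exact he this
    obtain ⟨k, hk⟩ : ∃ k, t e = k + 1 := ⟨t e - 1, by omega⟩
    have henotk : e ∉ B k := htlt e k (by omega)
    have hemem : e ∈ B (k+1) := hk ▸ htmem e
    rw [hBsucc] at hemem
    rcases hemem with h | h
    · exact absurd h henotk
    obtain ⟨u, huB, huadj, hforce⟩ := h
    obtain ⟨hune, ⟨b, hb⟩⟩ := huadj
    have hbu : b ∈ (u : Sym2 V) := hb.1
    have hbe : b ∈ (e : Sym2 V) := hb.2
    set a : V := Sym2.Mem.other hbu with ha
    have hau : a ∈ (u : Sym2 V) := Sym2.other_mem hbu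
    have hane : a ≠ b := Sym2.other_ne (G.not_isDiag_of_mem_edgeSet u.2) hbu
    have huab : (u : Sym2 V) = s(b, a) := (Sym2.other_spec hbu).symm
    refine ⟨b, a, fun _ => ⟨hbe, ?_, ?_⟩⟩
    · intro g hbg hge
      by_cases hgu : g = u
      · subst hgu
        exact lt_of_le_of_lt (htmin g k huB) (by omega)
      · have : L.Adj u g := aux_line_adj_of_mem (Ne.symm hgu) hbu hbg
        rcases (em (g ∈ B k)) with h' | h'
        · exact lt_of_le_of_lt (htmin g k h') (by omega)
        · exact absurd (hforce g this h') hge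
    · intro g hag
      by_cases hgu : g = u
      · subst hgu
        exact lt_of_le_of_lt (htmin g k huB) (by omega)
      · have hadj : L.Adj u g := aux_line_adj_of_mem (Ne.symm hgu) hau hag
        rcases (em (g ∈ B k)) with h' | h'
        · exact lt_of_le_of_lt (htmin g k h') (by omega)
        · exfalso
          have hge : g = e := hforce g hadj h'
          subst hge
          -- then a ∈ e and b ∈ e, so e = s(b,a) = u, contradiction
          have : (g : Sym2 V) = s(a, b) := (Sym2.mem_and_mem_iff hane).mp ⟨hag, hbe⟩
          apply hune
          apply Subtype.ext
          rw [huab, this, Sym2.eq_swap]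
  choose bf af hmain using main
  have hbf : ∀ e ∈ F, bf e ∈ (e : Sym2 V) := fun e he => (hmain e he).1
  have hP1 : ∀ e ∈ F, ∀ g : G.edgeSet, bf e ∈ (g : Sym2 V) → g ≠ e → t g < t e :=
    fun e he => (hmain e he).2.1
  have hP2 : ∀ e ∈ F, ∀ g : G.edgeSet, af e ∈ (g : Sym2 V) → t g < t e :=
    fun e he => (hmain e he).2.2
  have hinj : ∀ e₁ ∈ F, ∀ e₂ ∈ F, bf e₁ = bf e₂ → e₁ = e₂ := by
    intro e₁ h₁ e₂ h₂ heq
    by_contra hne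
    have l1 : t e₂ < t e₁ := hP1 e₁ h₁ e₂ (heq ▸ hbf e₂ h₂) (Ne.symm hne)
    have l2 : t e₁ < t e₂ := hP1 e₂ h₂ e₁ (heq ▸ hbf e₁ h₁) hne
    omega
  -- counting
  have hFle : F.ncard ≤ Fintype.card V - 2 := by
    by_contra hcon
    push_neg at hcon
    have hFfin : F.Finite := Set.toFinite F
    have hFne : F.Nonempty := by
      rcases Set.eq_empty_or_nonempty F with h | h
      · rw [h, Set.ncard_empty] at hcon; omega
      · exact h
    obtain ⟨estar, hestar, hmax⟩ := Set.exists_max_image F t hFfin hFne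
    set cstar : V := Sym2.Mem.other (hbf estar hestar) with hcstar
    have hcmem : cstar ∈ (estar : Sym2 V) := Sym2.other_mem _
    have hcne : cstar ≠ bf estar := Sym2.other_ne (G.not_isDiag_of_mem_edgeSet estar.2) _
    have himsub : bf '' F ⊆ {cstar}ᶜ := by
      rintro _ ⟨e, he, rfl⟩ hmem
      have heq : bf e = cstar := Set.mem_singleton_iff.mp hmem
      by_cases h : e = estar
      · exact hcne (h ▸ heq).symm
      · have l1 : t estar < t e := hP1 e he estar (heq ▸ hcmem) (fun hh => h hh.symm)
        have l2 : t e ≤ t estar := hmax e he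
        omega
    have hncim : (bf '' F).ncard = F.ncard := Set.ncard_image_of_injOn hinj
    have hcompl_card : ({cstar}ᶜ : Set V).ncard = Fintype.card V - 1 := by
      have h1 := Set.ncard_add_ncard_compl ({cstar} : Set V)
      rw [Nat.card_eq_fintype_card, Set.ncard_singleton] at h1
      omega
    have hle : ({cstar}ᶜ : Set V).ncard ≤ (bf '' F).ncard := by
      rw [hcompl_card, hncim]
      omega
    have himeq : bf '' F = {cstar}ᶜ :=
      Set.eq_of_subset_of_ncard_le himsub hle (Set.toFinite _)
    obtain ⟨emin, hemin, hminp⟩ := Set.exists_min_image F t hFfin hFne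
    by_cases hac : af emin = cstar
    · have l1 : t estar < t emin := hP2 emin hemin estar (hac ▸ hcmem)
      have l2 : t emin ≤ t estar := hminp estar hestar
      omega
    · have hmem : af emin ∈ ({cstar}ᶜ : Set V) := hac
      rw [← himeq] at hmem
      obtain ⟨w, hw, hweq⟩ := hmem
      have l1 : t w < t emin := hP2 emin hemin w (hweq ▸ hbf w hw)
      have l2 : t emin ≤ t w := hminp w hw
      omega
  have hsum : S.ncard + F.ncard = G.edgeSet.ncard := by
    have h1 := Set.ncard_add_ncard_compl S
    rw [Nat.card_coe_set_eq, ← hF] at h1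
    exact h1
  omega

lemma aux_resolving (hconn : G.Connected) (hn : 5 ≤ Fintype.card V)
    (u0 v0 : V) (p : G.Walk u0 v0) (hp : p.IsHamiltonian) :
    ∃ W : Set G.edgeSet, IsResolvingSet G.lineGraph W ∧
      W.ncard ≤ (Fintype.card V - 2) + (if Fintype.card V = 5 then 1 else 0) := by
  classical
  set n := Fintype.card V with hncard
  set vs : List V := p.support with hvs
  have hlen : vs.length = n := by
    rw [hvs, Walk.length_support, hp.length_eq]
    omega
  have hnodup : vs.Nodup := hp.isPath.support_nodup
  have hmemvs : ∀ x : V, x ∈ vs := fun x => hp.mem_support x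
  set vx : ℕ → V := fun k => vs.getD k u0 with hvx
  have hvxk : ∀ k (h : k < n), vx k = vs[k]'(by omega) := by
    intro k h
    exact List.getD_eq_getElem vs u0 (by omega)
  have hvx_inj : ∀ a b, a < n → b < n → vx a = vx b → a = b := by
    intro a b ha hb hab
    rw [hvxk a ha, hvxk b hb] at hab
    exact (hnodup.getElem_inj_iff).mp hab
  have hadj : ∀ k, k + 1 < n → G.Adj (vx k) (vx (k+1)) := by
    intro k hk
    rw [hvxk k (by omega), hvxk (k+1) hk]
    have := List.isChain_iff_getElem.mp (p.isChain_adj_support)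
    have h2 := this k (by rw [← hvs] at *; omega)
    simpa [List.get_eq_getElem] using h2
  set ix : V → ℕ := fun x => vs.idxOf x with hix
  have hixlt : ∀ x, ix x < n := fun x => by
    rw [hix]; simp only []
    rw [← hlen]
    exact List.idxOf_lt_length_iff.mpr (hmemvs x)
  have hvix : ∀ x, vx (ix x) = x := by
    intro x
    rw [hvxk (ix x) (hixlt x)]
    exact List.getElem_idxOf (by rw [hlen]; exact hixlt x)
  -- edges
  have hpe_mem : ∀ k, k + 1 < n → s(vx k, vx (k+1)) ∈ G.edgeSet := fun k hk => hadj k hk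
  have hn2 : (1 : ℕ) < n := by omega
  set e₀ : G.edgeSet := ⟨s(vx 0, vx 1), hpe_mem 0 hn2⟩ with he₀
  set pe : ℕ → G.edgeSet := fun k => if h : k + 1 < n then ⟨s(vx k, vx (k+1)), hpe_mem k h⟩ else e₀ with hpe
  have hpeval : ∀ k, k < n - 2 → (pe k : Sym2 V) = s(vx k, vx (k+1)) := by
    intro k hk
    rw [hpe]
    simp only [dif_pos (show k + 1 < n by omega)]
  set Wfin : Finset G.edgeSet := (Finset.range (n-2)).image pe with hWfin
  set chordSet : Set G.edgeSet := {e | n = 5 ∧ (e : Sym2 V) = s(vx 0, vx 2)} with hchord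
  set W : Set G.edgeSet := ↑Wfin ∪ chordSet with hW
  have hpeW : ∀ k, k < n - 2 → pe k ∈ W := by
    intro k hk
    exact Set.mem_union_left _ (Finset.mem_coe.mpr (Finset.mem_image_of_mem pe (Finset.mem_range.mpr hk)))
  refine ⟨W, ?_, ?_⟩
  · -- resolving
    intro e e' hnee
    by_cases he : e ∈ W
    · refine ⟨e, he, ?_⟩
      rw [SimpleGraph.dist_self]
      intro hc
      exact hnee ((Reachable.dist_eq_zero_iff (aux_line_reach hconn e' e)).mp hc.symm).symm
    by_cases he' : e' ∈ W
    · refine ⟨e', he', ?_⟩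
      rw [SimpleGraph.dist_self]
      intro hc
      exact hnee ((Reachable.dist_eq_zero_iff (aux_line_reach hconn e e')).mp hc)
    -- both not in W
    by_contra hcon
    push_neg at hcon
    -- representation of edges by sorted index pairs
    have rep : ∀ f : G.edgeSet, ∃ i j, i < j ∧ j < n ∧ (f : Sym2 V) = s(vx i, vx j) := by
      intro f
      obtain ⟨x, y, hxy⟩ : ∃ x y, (f : Sym2 V) = s(x, y) := by
        refine ⟨(f : Sym2 V).out.1, (f : Sym2 V).out.2, ?_⟩
        exact (Quot.out_eq (f : Sym2 V)).symm
      have hadjxy : G.Adj x y := G.mem_edgeSet.mp (hxy ▸ f.2)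
      have hxyne : ix x ≠ ix y := fun h => hadjxy.ne (by rw [← hvix x, ← hvix y, h])
      rcases lt_or_gt_of_ne hxyne with h | h
      · exact ⟨ix x, ix y, h, hixlt y, by rw [hvix x, hvix y]; exact hxy⟩
      · exact ⟨ix y, ix x, h, hixlt x, by rw [hvix x, hvix y]; exact hxy.trans (Sym2.eq_swap)⟩
    obtain ⟨i, j, hij, hjn, hejj⟩ := rep e
    obtain ⟨i', j', hij', hjn', hejj'⟩ := rep e'
    -- membership characterizations
    have hsym2mem : ∀ (a b z : V), z ∈ s(a, b) ↔ z = a ∨ z = b := fun a b z => Sym2.mem_iff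
    have hadjchar : ∀ (ii jj : ℕ) (f : G.edgeSet), ii < jj → jj < n → (f : Sym2 V) = s(vx ii, vx jj) →
        f ∉ W → ∀ k, k < n - 2 →
        (G.lineGraph.Adj f (pe k) ↔ (ii = k ∨ ii = k + 1 ∨ jj = k ∨ jj = k + 1)) := by
      intro ii jj f hiijj hjjn hf hfW k hk
      constructor
      · rintro ⟨hne', ⟨z, hz1, hz2⟩⟩
        have hz1' : z ∈ (f : Sym2 V) := hz1
        have hz2' : z ∈ ((pe k : G.edgeSet) : Sym2 V) := hz2
        rw [hf, hsym2mem] at hz1'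
        rw [hpeval k hk, hsym2mem] at hz2'
        rcases hz1' with rfl | rfl <;> rcases hz2' with h2 | h2
        · exact Or.inl (hvx_inj ii k (by omega) (by omega) h2)
        · exact Or.inr (Or.inl (hvx_inj ii (k+1) (by omega) (by omega) h2))
        · exact Or.inr (Or.inr (Or.inl (hvx_inj jj k (by omega) (by omega) h2)))
        · exact Or.inr (Or.inr (Or.inr (hvx_inj jj (k+1) (by omega) (by omega) h2)))
      · intro hcase
        have hnef : f ≠ pe k := fun h => hfW (h ▸ hpeW k hk)
        rcases hcase with h2 | h2 | h2 | h2
        · exact aux_line_adj_of_mem hnef (by rw [hf, hsym2mem]; left; exact congrArg vx h2.symm)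
            (by rw [hpeval k hk, hsym2mem]; left; rfl)
        · exact aux_line_adj_of_mem hnef (by rw [hf, hsym2mem]; left; exact congrArg vx h2.symm)
            (by rw [hpeval k hk, hsym2mem]; right; rfl)
        · exact aux_line_adj_of_mem hnef (by rw [hf, hsym2mem]; right; exact congrArg vx h2.symm)
            (by rw [hpeval k hk, hsym2mem]; left; rfl)
        · exact aux_line_adj_of_mem hnef (by rw [hf, hsym2mem]; right; exact congrArg vx h2.symm)
            (by rw [hpeval k hk, hsym2mem]; right; rfl)
    -- the iff hypothesis
    have H : ∀ k, k < n - 2 → ((i = k ∨ i = k+1 ∨ j = k ∨ j = k+1) ↔ (i' = k ∨ i' = k+1 ∨ j' = k ∨ j' = k+1)) := by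
      intro k hk
      rw [← hadjchar i j e hij hjn hejj he k hk, ← hadjchar i' j' e' hij' hjn' hejj' he' k hk]
      have hdist := hcon (pe k) (hpeW k hk)
      rw [← SimpleGraph.dist_eq_one_iff_adj, ← SimpleGraph.dist_eq_one_iff_adj, hdist]
    -- side conditions
    have hw : ¬(j = i+1 ∧ i < n-2) := by
      rintro ⟨rfl, h2⟩
      apply he
      have : e = pe i := Subtype.ext (by rw [hpeval i h2, hejj])
      exact this ▸ hpeW i h2
    have hw' : ¬(j' = i'+1 ∧ i' < n-2) := by
      rintro ⟨rfl, h2⟩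
      apply he'
      have : e' = pe i' := Subtype.ext (by rw [hpeval i' h2, hejj'])
      exact this ▸ hpeW i' h2
    have h5 : n = 5 → ¬(i = 0 ∧ j = 2) ∧ ¬(i' = 0 ∧ j' = 2) := by
      intro hn5
      constructor
      · rintro ⟨rfl, rfl⟩
        exact he (Set.mem_union_right _ ⟨hn5, hejj⟩)
      · rintro ⟨rfl, rfl⟩
        exact he' (Set.mem_union_right _ ⟨hn5, hejj'⟩)
    have hneidx : ¬(i = i' ∧ j = j') := by
      rintro ⟨rfl, rfl⟩
      exact hnee (Subtype.ext (by rw [hejj, hejj']))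
    exact core n i j i' j' hn hij hjn hij' hjn' hw hw' h5 hneidx H
  · -- cardinality
    have h1 : (↑Wfin : Set G.edgeSet).ncard ≤ n - 2 := by
      rw [Set.ncard_coe_finset]
      calc Wfin.card ≤ (Finset.range (n-2)).card := Finset.card_image_le
        _ = n - 2 := Finset.card_range _
    have h2 : chordSet.ncard ≤ (if n = 5 then 1 else 0) := by
      by_cases hn5 : n = 5
      · rw [if_pos hn5]
        refine (Set.ncard_le_one_iff (Set.toFinite _)).mpr ?_
        intro a b ha hb
        exact Subtype.ext (ha.2.trans hb.2.symm)
      · rw [if_neg hn5]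
        have : chordSet = ∅ := by
          ext f
          simp only [hchord, Set.mem_setOf_eq, Set.mem_empty_iff_false, iff_false]
          rintro ⟨h, _⟩
          exact hn5 h
        rw [this, Set.ncard_empty]
    calc W.ncard ≤ (↑Wfin : Set G.edgeSet).ncard + chordSet.ncard := Set.ncard_union_le _ _
      _ ≤ (n - 2) + (if n = 5 then 1 else 0) := by omega

end AuxProofs

/-- Let `G` be a connected graph of order `n` containing a Hamiltonian path.
If `5 ≤ n ≤ 8` and the average degree of `G` is at least 3 (i.e. `2|E(G)| ≥ 3n`),
then `dim(L(G)) ≤ Z(L(G))`; if `n ≥ 9` and the average degree of `G` is at least 4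
(i.e. `2|E(G)| ≥ 4n`), then `dim(L(G)) ≤ Z(L(G))`. -/


theorem metricDim_lineGraph_le_zeroForcingNum_lineGraph_of_avg_degree {V : Type*}
    [Fintype V] [DecidableEq V] (G : SimpleGraph V)
    (hconn : G.Connected) (hham : HasHamiltonianPath G) :
    (5 ≤ Fintype.card V → Fintype.card V ≤ 8 →
      3 * Fintype.card V ≤ 2 * G.edgeSet.ncard →
      metricDim G.lineGraph ≤ zeroForcingNum G.lineGraph) ∧
    (9 ≤ Fintype.card V →
      4 * Fintype.card V ≤ 2 * G.edgeSet.ncard →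
      metricDim G.lineGraph ≤ zeroForcingNum G.lineGraph) := by
  classical
  obtain ⟨u0, v0, p, hp⟩ := hham
  have hZmem : zeroForcingNum G.lineGraph ∈
      {k | ∃ S : Set G.edgeSet, S.ncard = k ∧ IsZeroForcingSet G.lineGraph S} :=
    Nat.sInf_mem ⟨(Set.univ : Set G.edgeSet).ncard, Set.univ, rfl, ⟨0, rfl⟩⟩
  obtain ⟨S, hScard, hSzf⟩ := hZmem
  constructor
  · intro h5 h8 hdeg
    obtain ⟨W, hres, hcard⟩ := aux_resolving hconn h5 u0 v0 p hp
    have hdim : metricDim G.lineGraph ≤ W.ncard := Nat.sInf_le ⟨W, rfl, hres⟩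
    have hzf := aux_zf_lower h5 S hSzf
    by_cases h5' : Fintype.card V = 5
    · rw [if_pos h5'] at hcard
      omega
    · rw [if_neg h5'] at hcard
      omega
  · intro h9 hdeg
    have h5 : 5 ≤ Fintype.card V := by omega
    obtain ⟨W, hres, hcard⟩ := aux_resolving hconn h5 u0 v0 p hp
    have hdim : metricDim G.lineGraph ≤ W.ncard := Nat.sInf_le ⟨W, rfl, hres⟩
    have hzf := aux_zf_lower h5 S hSzf
    rw [if_neg (by omega : ¬ Fintype.card V = 5)] at hcard
    omega
end
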